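/- arXiv:2310.05732 — 7 statements merged into one kernel-verified Lean document; each statement's English description precedes it below -/
import Mathlib

section
/- Let V > 0 and let U_V : ℝ_{≥0} → [0,1] be the universal schedule for volume V. Then for every y ∈ [0,1], ∫_0^∞ max(U_V(t) − y, 0) dt = ((e^{1−y} − 1)/(e − 1))·V, and for every y ∈ (0,1] this quantity is at most (1/(e−1))·((1−y)/y)·V. In particular, with c = e/(e−1), U_V satisfies the c-extendability condition A^∞_{U_V}(y) ≤ (c−1)·((1−y)/y)·V for all y ∈ ((c−1)/c, 1]. -/
open MeasureTheory Set Real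

noncomputable section

/-- The universal schedule for volume `V`: total resource usage `1` up to time
`V/(e-1)`, then `1 - ln((e-1)·t/V)` up to time `e·V/(e-1)`, then `0`. -/
def univSched (V : ℝ) (t : ℝ) : ℝ :=
  if t < V / (Real.exp 1 - 1) then 1
  else if t < Real.exp 1 * V / (Real.exp 1 - 1) then 1 - Real.log ((Real.exp 1 - 1) * t / V)
  else 0

/-- The upper resource distribution of the universal schedule:
`A^∞_{U_V}(y) = ((e^{1-y} - 1)/(e-1))·V` for `y ∈ [0,1]`, which for `y ∈ (0,1]` is at most
`(1/(e-1))·((1-y)/y)·V`; in particular, with `c = e/(e-1)`, `U_V` satisfies the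
`c`-extendability condition `A^∞_{U_V}(y) ≤ (c-1)·((1-y)/y)·V` for all `y ∈ ((c-1)/c, 1]`. -/
theorem stmt5 (V : ℝ) (hV : 0 < V) :
    (∀ y ∈ Icc (0:ℝ) 1,
      (∫ t in Ioi (0:ℝ), max (univSched V t - y) 0) =
        (Real.exp (1 - y) - 1) / (Real.exp 1 - 1) * V) ∧
    (∀ y ∈ Ioc (0:ℝ) 1,
      (∫ t in Ioi (0:ℝ), max (univSched V t - y) 0) ≤
        1 / (Real.exp 1 - 1) * ((1 - y) / y) * V) ∧
    (∀ y : ℝ,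
      (Real.exp 1 / (Real.exp 1 - 1) - 1) / (Real.exp 1 / (Real.exp 1 - 1)) < y → y ≤ 1 →
      (∫ t in Ioi (0:ℝ), max (univSched V t - y) 0) ≤
        (Real.exp 1 / (Real.exp 1 - 1) - 1) * ((1 - y) / y) * V) := by
  have hE : (1:ℝ) < Real.exp 1 := by
    have := Real.exp_one_gt_d9; linarith
  have hk : (0:ℝ) < Real.exp 1 - 1 := by linarith
  have hk' : Real.exp 1 - 1 ≠ 0 := ne_of_gt hk
  have hV' : V ≠ 0 := ne_of_gt hV
  have key : ∀ y ∈ Icc (0:ℝ) 1,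
      (∫ t in Ioi (0:ℝ), max (univSched V t - y) 0) =
        (Real.exp (1 - y) - 1) / (Real.exp 1 - 1) * V := by
    intro y hy
    obtain ⟨hy0, hy1⟩ := hy
    set f : ℝ → ℝ := fun t => max (univSched V t - y) 0 with hf
    set a : ℝ := V / (Real.exp 1 - 1) with ha
    set b : ℝ := Real.exp (1 - y) * V / (Real.exp 1 - 1) with hb
    have ha0 : 0 < a := div_pos hV hk
    have hexp1 : (1:ℝ) ≤ Real.exp (1 - y) := by
      have h0 : (0:ℝ) ≤ 1 - y := by linarith
      calc (1:ℝ) = Real.exp 0 := (Real.exp_zero).symm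
        _ ≤ Real.exp (1 - y) := Real.exp_le_exp.mpr h0
    have hexpE : Real.exp (1 - y) ≤ Real.exp 1 := Real.exp_le_exp.mpr (by linarith)
    have hVb : V ≤ Real.exp (1 - y) * V := le_mul_of_one_le_left (le_of_lt hV) hexp1
    have hVE : Real.exp (1 - y) * V ≤ Real.exp 1 * V :=
      mul_le_mul_of_nonneg_right hexpE (le_of_lt hV)
    have hab : a ≤ b := by
      rw [ha, hb, div_le_div_iff₀ hk hk]
      nlinarith [mul_le_mul_of_nonneg_right hVb (le_of_lt hk)]
    have hbE : b ≤ Real.exp 1 * V / (Real.exp 1 - 1) := by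
      rw [hb, div_le_div_iff₀ hk hk]
      nlinarith [mul_le_mul_of_nonneg_right hVE (le_of_lt hk)]
    have hb0 : 0 < b := lt_of_lt_of_le ha0 hab
    have haE : a < Real.exp 1 * V / (Real.exp 1 - 1) := by
      rw [ha, div_lt_div_iff₀ hk hk]
      nlinarith [mul_pos (mul_pos hV hk) hk]
    have hlogb : Real.log ((Real.exp 1 - 1) * b / V) = 1 - y := by
      have h : (Real.exp 1 - 1) * b / V = Real.exp (1 - y) := by
        rw [hb]; field_simp
      rw [h, Real.log_exp]
    have hloga : (Real.exp 1 - 1) * a / V = 1 := by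
      rw [ha]; field_simp
    -- Fact A
    have factA : ∀ t ∈ Icc (0:ℝ) a, f t = 1 - y := by
      intro t ht
      obtain ⟨ht0, hta⟩ := ht
      simp only [hf, univSched]
      rw [← ha]
      by_cases h1 : t < a
      · rw [if_pos h1]; exact max_eq_left (by linarith)
      · have hta' : t = a := le_antisymm hta (not_lt.mp h1)
        rw [if_neg h1, if_pos (hta' ▸ haE), hta', hloga, Real.log_one,
          max_eq_left (by linarith)]
        ring
    -- Fact B
    have factB : ∀ t ∈ Icc a b, f t = 1 - y - Real.log ((Real.exp 1 - 1) * t / V) := by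
      intro t ht
      obtain ⟨hta, htb⟩ := ht
      have ht0 : 0 < t := lt_of_lt_of_le ha0 hta
      simp only [hf, univSched]
      rw [← ha, if_neg (not_lt.mpr hta)]
      have hLle : Real.log ((Real.exp 1 - 1) * t / V) ≤ 1 - y := by
        rw [← hlogb]
        have hdiv : (Real.exp 1 - 1) * t / V ≤ (Real.exp 1 - 1) * b / V := by gcongr
        exact Real.log_le_log (div_pos (mul_pos hk ht0) hV) hdiv
      by_cases h2 : t < Real.exp 1 * V / (Real.exp 1 - 1)
      · rw [if_pos h2, max_eq_left (by linarith)]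
        ring
      · rw [if_neg h2]
        have htE : Real.exp 1 * V / (Real.exp 1 - 1) ≤ t := not_lt.mp h2
        have htb' : t = Real.exp 1 * V / (Real.exp 1 - 1) := le_antisymm (le_trans htb hbE) htE
        have hbeq : b = Real.exp 1 * V / (Real.exp 1 - 1) := le_antisymm hbE (htb' ▸ htb)
        have hy0' : y = 0 := by
          rw [hb, div_eq_div_iff hk' hk', mul_assoc, mul_assoc] at hbeq
          have hexp : Real.exp (1 - y) = Real.exp 1 :=
            mul_right_cancel₀ (mul_ne_zero hV' hk') hbeq
          have := Real.exp_eq_exp.mp hexp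
          linarith
        have hlogt : Real.log ((Real.exp 1 - 1) * t / V) = 1 := by
          have h : (Real.exp 1 - 1) * t / V = Real.exp 1 := by
            rw [htb']; field_simp
          rw [h, Real.log_exp]
        rw [hlogt, hy0']
        norm_num
    -- Fact C
    have factC : ∀ t, b < t → f t = 0 := by
      intro t htb
      have ht0 : 0 < t := lt_trans hb0 htb
      simp only [hf, univSched]
      rw [← ha, if_neg (not_lt.mpr (le_of_lt (lt_of_le_of_lt hab htb)))]
      by_cases h2 : t < Real.exp 1 * V / (Real.exp 1 - 1)
      · rw [if_pos h2]
        have hlt : 1 - y < Real.log ((Real.exp 1 - 1) * t / V) := by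
          rw [← hlogb]
          have hdiv : (Real.exp 1 - 1) * b / V < (Real.exp 1 - 1) * t / V := by gcongr
          exact Real.log_lt_log (div_pos (mul_pos hk hb0) hV) hdiv
        exact max_eq_right (by linarith)
      · rw [if_neg h2]
        exact max_eq_right (by linarith)
    -- Step 1: restrict to Ioc 0 b
    have step1 : (∫ t in Ioi (0:ℝ), f t) = ∫ t in Ioc (0:ℝ) b, f t := by
      have h1 : EqOn f ((Ioc (0:ℝ) b).indicator f) (Ioi (0:ℝ)) := by
        intro t ht
        by_cases h : t ∈ Ioc (0:ℝ) b
        · rw [indicator_of_mem h]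
        · rw [indicator_of_notMem h]
          have hbt : b < t := by
            rcases lt_or_ge b t with h' | h'
            · exact h'
            · exact absurd ⟨ht, h'⟩ h
          exact factC t hbt
      rw [setIntegral_congr_fun measurableSet_Ioi h1,
        setIntegral_indicator measurableSet_Ioc,
        Set.inter_eq_right.mpr Ioc_subset_Ioi_self]
    -- interval integrability
    have hint1 : IntervalIntegrable f volume 0 a := by
      apply (intervalIntegrable_const (c := 1 - y)).congr
      intro t ht
      rw [uIoc_of_le (le_of_lt ha0)] at ht
      exact (factA t ⟨le_of_lt ht.1, ht.2⟩).symm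
    have hcont : ContinuousOn (fun t => 1 - y - Real.log ((Real.exp 1 - 1) * t / V)) (Icc a b) := by
      apply ContinuousOn.sub continuousOn_const
      apply ContinuousOn.log
      · fun_prop
      · intro t ht
        have ht0 : 0 < t := lt_of_lt_of_le ha0 ht.1
        exact ne_of_gt (div_pos (mul_pos hk ht0) hV)
    have hint2 : IntervalIntegrable f volume a b := by
      apply (hcont.intervalIntegrable_of_Icc hab).congr
      intro t ht
      rw [uIoc_of_le hab] at ht
      exact (factB t ⟨le_of_lt ht.1, ht.2⟩).symm
    -- Step 2: split
    have step2 : (∫ t in Ioc (0:ℝ) b, f t) = (∫ t in (0:ℝ)..a, f t) + ∫ t in a..b, f t := by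
      rw [← intervalIntegral.integral_of_le (le_of_lt hb0),
        ← intervalIntegral.integral_add_adjacent_intervals hint1 hint2]
    -- Step 3: first piece
    have step3 : (∫ t in (0:ℝ)..a, f t) = (1 - y) * a := by
      rw [intervalIntegral.integral_congr (g := fun _ => 1 - y)
        (by rw [uIcc_of_le (le_of_lt ha0)]; exact fun t ht => factA t ht),
        intervalIntegral.integral_const, smul_eq_mul]
      ring
    -- Step 4: second piece
    have hlogt : ∀ t ∈ Icc a b, Real.log ((Real.exp 1 - 1) * t / V)
        = Real.log t + (Real.log (Real.exp 1 - 1) - Real.log V) := by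
      intro t ht
      have ht0 : 0 < t := lt_of_lt_of_le ha0 ht.1
      rw [Real.log_div (ne_of_gt (mul_pos hk ht0)) hV', Real.log_mul hk' (ne_of_gt ht0)]
      ring
    have h0uIcc : (0:ℝ) ∉ uIcc a b := by
      rw [uIcc_of_le hab]; intro h; exact absurd h.1 (not_le.mpr ha0)
    have step4 : (∫ t in a..b, f t)
        = (1 - y) * (b - a)
          - ((b * Real.log b - a * Real.log a - b + a)
            + (Real.log (Real.exp 1 - 1) - Real.log V) * (b - a)) := by
      rw [intervalIntegral.integral_congr
        (g := fun t => (1 - y) - (Real.log t + (Real.log (Real.exp 1 - 1) - Real.log V)))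
        (by
          rw [uIcc_of_le hab]
          intro t ht
          rw [factB t ht, hlogt t ht])]
      have hi1 : IntervalIntegrable Real.log volume a b :=
        intervalIntegral.intervalIntegrable_log h0uIcc
      rw [intervalIntegral.integral_sub intervalIntegrable_const
          (hi1.add intervalIntegrable_const),
        intervalIntegral.integral_add hi1 intervalIntegrable_const,
        integral_log]
      simp only [intervalIntegral.integral_const, smul_eq_mul]
      ring
    -- combine
    have hlogav : Real.log a = Real.log V - Real.log (Real.exp 1 - 1) := by
      rw [ha, Real.log_div hV' hk']
    have hlogbv : Real.log b = (1 - y) + Real.log V - Real.log (Real.exp 1 - 1) := by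
      rw [hb, Real.log_div (ne_of_gt (mul_pos (Real.exp_pos _) hV)) hk',
        Real.log_mul (ne_of_gt (Real.exp_pos _)) hV', Real.log_exp]
    rw [step1, step2, step3, step4, hlogav, hlogbv, ha, hb]
    field_simp
    ring
  have bound : ∀ y : ℝ, 0 < y → y ≤ 1 →
      (∫ t in Ioi (0:ℝ), max (univSched V t - y) 0) ≤
        1 / (Real.exp 1 - 1) * ((1 - y) / y) * V := by
    intro y hy0 hy1
    rw [key y ⟨le_of_lt hy0, hy1⟩]
    have hexp : Real.exp (1 - y) ≤ 1 / y := by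
      have h1 : 1 - y ≤ - Real.log y := by
        linarith [Real.log_le_sub_one_of_pos hy0]
      calc Real.exp (1 - y) ≤ Real.exp (- Real.log y) := Real.exp_le_exp.mpr h1
        _ = 1 / y := by rw [Real.exp_neg, Real.exp_log hy0, one_div]
    have hb4 : (1 - y) / y = 1 / y - 1 := by
      rw [sub_div, div_self (ne_of_gt hy0)]
    have hb : Real.exp (1 - y) - 1 ≤ (1 - y) / y := by linarith
    have hmul : (Real.exp (1 - y) - 1) * V ≤ (1 - y) / y * V :=
      mul_le_mul_of_nonneg_right hb (le_of_lt hV)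
    calc (Real.exp (1 - y) - 1) / (Real.exp 1 - 1) * V
        = ((Real.exp (1 - y) - 1) * V) * (1 / (Real.exp 1 - 1)) := by ring
      _ ≤ ((1 - y) / y * V) * (1 / (Real.exp 1 - 1)) :=
          mul_le_mul_of_nonneg_right hmul (le_of_lt (one_div_pos.mpr hk))
      _ = 1 / (Real.exp 1 - 1) * ((1 - y) / y) * V := by ring
  refine ⟨key, fun y hy => bound y hy.1 hy.2, ?_⟩
  intro y hylt hyle
  have hc : Real.exp 1 / (Real.exp 1 - 1) - 1 = 1 / (Real.exp 1 - 1) := by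
    field_simp
    ring
  have hy0 : 0 < y := by
    have h1 : 0 < (Real.exp 1 / (Real.exp 1 - 1) - 1) / (Real.exp 1 / (Real.exp 1 - 1)) := by
      rw [hc]
      have hE0 : 0 < Real.exp 1 / (Real.exp 1 - 1) := div_pos (Real.exp_pos 1) hk
      exact div_pos (one_div_pos.mpr hk) hE0
    linarith
  rw [hc]
  exact bound y hy0 hyle
end
end

section
/- Let V ≥ 0, let v > 0, r ∈ (0,1], p = v/r, and let H ≥ (e/(e−1))·max(V + v, p). Then: (a) ∫_0^H min(r, 1 − U_V(t)) dt ≥ v, so the water-filling step augmenting U_V by a job of volume v and requirement r with target completion time H succeeds; and (b) with h* = inf{h ∈ [0,1] : ∫_0^H min(r, max(h − U_V(t), 0)) dt ≥ v} and W(t) = U_V(t) + 1_{t<H}·min(r, max(h* − U_V(t), 0)), the augmented schedule is flatter than the universal schedule for volume V + v: ∫_0^C max(W(t) − y, 0) dt ≤ ∫_0^C max(U_{V+v}(t) − y, 0) dt for all C ≥ 0 and y ∈ [0,1]. -/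
open MeasureTheory Set Real

noncomputable section

/-- `f` is flatter than `g`. -/
def Flatter (f g : ℝ → ℝ) : Prop :=
  ∀ C : ℝ, 0 ≤ C → ∀ y ∈ Icc (0:ℝ) 1,
    (∫ t in (0:ℝ)..C, max (f t - y) 0) ≤ ∫ t in (0:ℝ)..C, max (g t - y) 0

/-- The smallest water level `h ∈ [0,1]` at which a job of volume `v` and
resource requirement `r` fits before time `C` on top of total usage `Rbar`. -/
def waterLevel (Rbar : ℝ → ℝ) (v r C : ℝ) : ℝ :=
  sInf {h : ℝ | h ∈ Icc (0:ℝ) 1 ∧ v ≤ ∫ t in (0:ℝ)..C, min r (max (h - Rbar t) 0)}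

lemma one_lt_e : (1:ℝ) < Real.exp 1 := by linarith [Real.add_one_le_exp 1]

lemma em1_pos : (0:ℝ) < Real.exp 1 - 1 := by linarith [one_lt_e]

lemma measurable_univSched (V : ℝ) : Measurable (univSched V) := by
  unfold univSched
  apply Measurable.ite (measurableSet_lt measurable_id measurable_const) measurable_const
  apply Measurable.ite (measurableSet_lt measurable_id measurable_const) _ measurable_const
  exact (Real.measurable_log.comp ((measurable_id.const_mul _).div_const _)).const_sub _

lemma univSched_of_lt {V t : ℝ} (h : t < V / (Real.exp 1 - 1)) : univSched V t = 1 := by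
  simp [univSched, h]

lemma univSched_mid {V t : ℝ} (hV : 0 < V) (h1 : V / (Real.exp 1 - 1) ≤ t)
    (h2 : t ≤ Real.exp 1 * V / (Real.exp 1 - 1)) :
    univSched V t = 1 - Real.log (t / (V / (Real.exp 1 - 1))) := by
  have hE := em1_pos
  have hlog : (Real.exp 1 - 1) * t / V = t / (V / (Real.exp 1 - 1)) := by
    field_simp
  rcases lt_or_eq_of_le h2 with h2' | h2'
  · rw [univSched, if_neg (not_lt.2 h1), if_pos h2', hlog]
  · rw [univSched, if_neg (not_lt.2 h1), if_neg (by rw [h2']; exact lt_irrefl _)]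
    rw [h2']
    have hne : V ≠ 0 := ne_of_gt hV
    have hne2 : Real.exp 1 - 1 ≠ 0 := ne_of_gt hE
    have : Real.exp 1 * V / (Real.exp 1 - 1) / (V / (Real.exp 1 - 1)) = Real.exp 1 := by
      field_simp
    rw [this, Real.log_exp]
    ring

lemma a_le_ea {V : ℝ} (hV : 0 ≤ V) : V / (Real.exp 1 - 1) ≤ Real.exp 1 * V / (Real.exp 1 - 1) := by
  have h := em1_pos
  rw [div_le_div_iff₀ h h]
  nlinarith [one_lt_e, mul_nonneg hV h.le]

lemma univSched_of_ge {V t : ℝ} (h : Real.exp 1 * V / (Real.exp 1 - 1) ≤ t) (hV : 0 ≤ V) :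
    univSched V t = 0 := by
  have h1 : ¬ t < V / (Real.exp 1 - 1) := by
    push_neg
    exact le_trans (a_le_ea hV) h
  rw [univSched, if_neg h1, if_neg (not_lt.2 h)]

lemma univSched_one {V t : ℝ} (hV : 0 < V) (h : t ≤ V / (Real.exp 1 - 1)) :
    univSched V t = 1 := by
  rcases lt_or_eq_of_le h with h' | h'
  · exact univSched_of_lt h'
  · rw [univSched_mid hV h'.ge (h'.le.trans (a_le_ea hV.le)), h']
    have ha : V / (Real.exp 1 - 1) ≠ 0 := ne_of_gt (div_pos hV em1_pos)
    rw [div_self ha, Real.log_one]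
    ring

lemma univSched_nonneg {V : ℝ} (hV : 0 ≤ V) (t : ℝ) : 0 ≤ univSched V t := by
  unfold univSched
  split_ifs with h1 h2
  · norm_num
  · push_neg at h1
    have hV0 : 0 < V := by
      rcases hV.lt_or_eq with h | h
      · exact h
      · exfalso; rw [← h] at h1 h2; simp at h1 h2; linarith
    have ht : 0 < t := lt_of_lt_of_le (div_pos hV0 em1_pos) h1
    have hle : (Real.exp 1 - 1) * t / V ≤ Real.exp 1 := by
      rw [div_le_iff₀ hV0]
      rw [lt_div_iff₀ em1_pos] at h2
      linarith
    have hpos : 0 < (Real.exp 1 - 1) * t / V := div_pos (mul_pos em1_pos ht) hV0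
    have := Real.log_le_log hpos hle
    rw [Real.log_exp] at this
    linarith
  · norm_num

lemma univSched_le_one {V : ℝ} (hV : 0 ≤ V) (t : ℝ) : univSched V t ≤ 1 := by
  unfold univSched
  split_ifs with h1 h2
  · norm_num
  · push_neg at h1
    have hV0 : 0 < V := by
      rcases hV.lt_or_eq with h | h
      · exact h
      · exfalso; rw [← h] at h1 h2; simp at h1 h2; linarith
    have ht : 0 < t := lt_of_lt_of_le (div_pos hV0 em1_pos) h1
    have h3 : 1 ≤ (Real.exp 1 - 1) * t / V := by
      rw [le_div_iff₀ hV0]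
      rw [div_le_iff₀ em1_pos] at h1
      linarith
    have := Real.log_nonneg h3
    linarith
  · norm_num

lemma univSched_anti {V : ℝ} (hV : 0 ≤ V) : Antitone (univSched V) := by
  intro s t hst
  rcases lt_or_ge s (V / (Real.exp 1 - 1)) with h1 | h1
  · rw [univSched_of_lt h1]; exact univSched_le_one hV t
  rcases le_or_gt (Real.exp 1 * V / (Real.exp 1 - 1)) t with h2 | h2
  · rw [univSched_of_ge h2 hV]; exact univSched_nonneg hV s
  · have hV0 : 0 < V := by
      rcases hV.lt_or_eq with h | h
      · exact h
      · exfalso; rw [← h] at h1 h2; simp at h1 h2; linarith [h1.trans_lt (hst.trans_lt h2)]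
    have ha : 0 < V / (Real.exp 1 - 1) := div_pos hV0 em1_pos
    have hs0 : 0 < s := lt_of_lt_of_le ha h1
    rw [univSched_mid hV0 h1 (le_of_lt (lt_of_le_of_lt hst h2)),
        univSched_mid hV0 (h1.trans hst) h2.le]
    have : Real.log (s / (V / (Real.exp 1 - 1))) ≤ Real.log (t / (V / (Real.exp 1 - 1))) := by
      apply Real.log_le_log (by positivity)
      gcongr
    linarith

lemma univSched_mono_V {V V' : ℝ} (hV : 0 ≤ V) (hVV : V ≤ V') (t : ℝ) :
    univSched V t ≤ univSched V' t := by
  have hV' : 0 ≤ V' := hV.trans hVV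
  rcases lt_or_ge t (V' / (Real.exp 1 - 1)) with h1 | h1
  · rw [univSched_of_lt h1]; exact univSched_le_one hV t
  rcases le_or_gt (Real.exp 1 * V / (Real.exp 1 - 1)) t with h2 | h2
  · rw [univSched_of_ge h2 hV]; exact univSched_nonneg hV' t
  · have hV0 : 0 < V := by
      rcases hV.lt_or_eq with h | h
      · exact h
      · exfalso; rw [← h] at h2; simp at h2
        have : (0:ℝ) ≤ V' / (Real.exp 1 - 1) := div_nonneg hV' em1_pos.le
        linarith [this.trans h1]
    have hV0' : 0 < V' := lt_of_lt_of_le hV0 hVV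
    have haa : V / (Real.exp 1 - 1) ≤ V' / (Real.exp 1 - 1) := by gcongr; exact em1_pos.le
    have h2' : t < Real.exp 1 * V' / (Real.exp 1 - 1) := by
      apply lt_of_lt_of_le h2
      rw [div_le_div_iff₀ em1_pos em1_pos]
      nlinarith [Real.exp_pos 1, mul_le_mul_of_nonneg_right (mul_le_mul_of_nonneg_left hVV (Real.exp_pos 1).le) em1_pos.le]
    rw [univSched_mid hV0 (haa.trans h1) h2.le, univSched_mid hV0' h1 h2'.le]
    have ha : 0 < V / (Real.exp 1 - 1) := div_pos hV0 em1_pos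
    have ha' : 0 < V' / (Real.exp 1 - 1) := div_pos hV0' em1_pos
    have ht : 0 < t := lt_of_lt_of_le ha' h1
    have : Real.log (t / (V' / (Real.exp 1 - 1))) ≤ Real.log (t / (V / (Real.exp 1 - 1))) := by
      apply Real.log_le_log (by positivity)
      gcongr
    linarith

lemma integral_congr_Ioo {f g : ℝ → ℝ} {lo hi : ℝ} (hle : lo ≤ hi)
    (h : ∀ t ∈ Set.Ioo lo hi, f t = g t) :
    ∫ t in lo..hi, f t = ∫ t in lo..hi, g t := by
  apply intervalIntegral.integral_congr_ae
  have h0 : (volume : Measure ℝ) {hi} = 0 := measure_singleton hi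
  filter_upwards [MeasureTheory.measure_eq_zero_iff_ae_notMem.mp h0] with t ht hmem
  rw [Set.uIoc_of_le hle] at hmem
  exact h t ⟨hmem.1, lt_of_le_of_ne hmem.2 (by simpa using ht)⟩

lemma intervalIntegrable_of_bdd {f : ℝ → ℝ} {B lo hi : ℝ} (hm : Measurable f)
    (hB : ∀ t, |f t| ≤ B) : IntervalIntegrable f volume lo hi := by
  rw [intervalIntegrable_iff]
  apply MeasureTheory.Integrable.mono' (g := fun _ => B)
    (MeasureTheory.integrableOn_const measure_Ioc_lt_top.ne)
    hm.aestronglyMeasurable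
  exact Filter.Eventually.of_forall fun t => hB t

-- key log integral: ∫_{b e^p}^{b e^q} (c - log(t/b)) dt = b((c+1)(e^q - e^p) - q e^q + p e^p)
open intervalIntegral in
lemma integral_LL {b c p q : ℝ} (hb : 0 ≤ b) (hpq : p ≤ q) :
    ∫ t in (b * Real.exp p)..(b * Real.exp q), (c - Real.log (t / b)) =
      b * ((c+1) * (Real.exp q - Real.exp p) - q * Real.exp q + p * Real.exp p) := by
  rcases hb.lt_or_eq with hb0 | hb0
  swap
  · rw [← hb0]; simp
  have hep : 0 < b * Real.exp p := by positivity
  have heq : 0 < b * Real.exp q := by positivity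
  have hle : b * Real.exp p ≤ b * Real.exp q := by
    have := Real.exp_le_exp.2 hpq; nlinarith
  have hcongr : ∫ t in (b * Real.exp p)..(b * Real.exp q), (c - Real.log (t / b)) =
      ∫ t in (b * Real.exp p)..(b * Real.exp q), ((c + Real.log b) - Real.log t) := by
    apply integral_congr_Ioo hle
    intro t ht
    have ht0 : 0 < t := lt_trans hep ht.1
    rw [Real.log_div (ne_of_gt ht0) (ne_of_gt hb0)]
    ring
  have hnot : (0:ℝ) ∉ Set.uIcc (b * Real.exp p) (b * Real.exp q) := by
    rw [Set.uIcc_of_le hle]; intro h; exact absurd h.1 (not_le.2 hep)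
  have hInt : IntervalIntegrable Real.log volume (b * Real.exp p) (b * Real.exp q) :=
    (by exact intervalIntegrable_log hnot)
  rw [hcongr, intervalIntegral.integral_sub intervalIntegrable_const hInt,
      intervalIntegral.integral_const]
  rw [show (∫ x in (b * Real.exp p)..(b * Real.exp q), Real.log x) =
      (b * Real.exp q) * Real.log (b * Real.exp q) - (b * Real.exp p) * Real.log (b * Real.exp p)
        - (b * Real.exp q) + (b * Real.exp p) from integral_log]
  have lbp : Real.log (b * Real.exp p) = Real.log b + p := by
    rw [Real.log_mul (ne_of_gt hb0) (ne_of_gt (Real.exp_pos p)), Real.log_exp]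
  have lbq : Real.log (b * Real.exp q) = Real.log b + q := by
    rw [Real.log_mul (ne_of_gt hb0) (ne_of_gt (Real.exp_pos q)), Real.log_exp]
  rw [lbp, lbq]
  simp only [smul_eq_mul]
  ring

lemma U_val {V : ℝ} (hV : 0 < V) {s : ℝ} (h0 : 0 ≤ s) (h1 : s ≤ 1) :
    univSched V (V / (Real.exp 1 - 1) * Real.exp (1 - s)) = s := by
  have hA : 0 < V / (Real.exp 1 - 1) := div_pos hV em1_pos
  have hge : V / (Real.exp 1 - 1) ≤ V / (Real.exp 1 - 1) * Real.exp (1 - s) := by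
    nlinarith [Real.add_one_le_exp (1 - s), hA]
  have hle : V / (Real.exp 1 - 1) * Real.exp (1 - s) ≤ Real.exp 1 * V / (Real.exp 1 - 1) := by
    rw [show Real.exp 1 * V / (Real.exp 1 - 1) = V / (Real.exp 1 - 1) * Real.exp 1 by ring]
    have := Real.exp_le_exp.2 (show 1 - s ≤ 1 by linarith)
    nlinarith [hA]
  rw [univSched_mid hV hge hle]
  rw [mul_comm, mul_div_assoc, div_self (ne_of_gt hA), mul_one, Real.log_exp]
  ring

lemma U_le_of_ge {V : ℝ} (hV : 0 ≤ V) {s t : ℝ} (h0 : 0 ≤ s) (h1 : s ≤ 1)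
    (ht : V / (Real.exp 1 - 1) * Real.exp (1 - s) ≤ t) : univSched V t ≤ s := by
  rcases hV.lt_or_eq with hV0 | hV0
  · calc univSched V t ≤ univSched V (V / (Real.exp 1 - 1) * Real.exp (1 - s)) :=
          univSched_anti hV ht
      _ = s := U_val hV0 h0 h1
  · rw [← hV0] at ht ⊢
    have ht' : (0:ℝ) ≤ t := by
      have : (0:ℝ) / (Real.exp 1 - 1) * Real.exp (1 - s) = 0 := by simp
      linarith [this ▸ ht]
    rw [univSched_of_ge (by simpa using ht') le_rfl]
    exact h0

lemma U_ge_of_le {V : ℝ} (hV : 0 < V) {s t : ℝ} (h0 : 0 ≤ s) (h1 : s ≤ 1)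
    (ht : t ≤ V / (Real.exp 1 - 1) * Real.exp (1 - s)) : s ≤ univSched V t := by
  calc s = univSched V (V / (Real.exp 1 - 1) * Real.exp (1 - s)) := (U_val hV h0 h1).symm
    _ ≤ univSched V t := univSched_anti hV.le ht

lemma U_bdd {V : ℝ} (hV : 0 ≤ V) (t : ℝ) : |univSched V t| ≤ 1 := by
  rw [abs_le]; exact ⟨by linarith [univSched_nonneg hV t], univSched_le_one hV t⟩

lemma U_intble {V : ℝ} (hV : 0 ≤ V) (lo hi : ℝ) :
    IntervalIntegrable (univSched V) volume lo hi :=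
  intervalIntegrable_of_bdd (measurable_univSched V) (U_bdd hV)

-- M1 : ∫_0^{A e^{1-s}} U = A e^{1-s} (1+s) - A
lemma int_U {V : ℝ} (hV : 0 ≤ V) {s : ℝ} (h0 : 0 ≤ s) (h1 : s ≤ 1) :
    ∫ t in (0:ℝ)..(V / (Real.exp 1 - 1) * Real.exp (1 - s)), univSched V t
      = V / (Real.exp 1 - 1) * Real.exp (1 - s) * (1 + s) - V / (Real.exp 1 - 1) := by
  set A := V / (Real.exp 1 - 1) with hAdef
  have hA : 0 ≤ A := div_nonneg hV em1_pos.le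
  have hsplit : ∫ t in (0:ℝ)..(A * Real.exp (1 - s)), univSched V t
      = (∫ t in (0:ℝ)..A, univSched V t)
        + ∫ t in A..(A * Real.exp (1 - s)), univSched V t :=
    (intervalIntegral.integral_add_adjacent_intervals (U_intble hV _ _) (U_intble hV _ _)).symm
  have hp1 : ∫ t in (0:ℝ)..A, univSched V t = A := by
    rw [integral_congr_Ioo hA (g := fun _ => (1:ℝ)) (fun t ht => univSched_of_lt ht.2)]
    simp
  have hp2 : ∫ t in A..(A * Real.exp (1 - s)), univSched V t
      = A * ((1+1) * (Real.exp (1-s) - Real.exp 0) - (1-s) * Real.exp (1-s) + 0 * Real.exp 0) := by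
    rcases hA.lt_or_eq with hA0 | hA0
    swap
    · rw [← hA0]; simp
    have hVpos : 0 < V := by
      rcases hV.lt_or_eq with h | h
      · exact h
      · exfalso
        have h2 : (0:ℝ) < V / (Real.exp 1 - 1) := hA0
        rw [← h] at h2; simp at h2
    have h1e : (1:ℝ) ≤ Real.exp (1 - s) := by
      nlinarith [Real.add_one_le_exp (1 - s)]
    have hle : A ≤ A * Real.exp (1-s) := by nlinarith
    have hcongr : ∫ t in A..(A * Real.exp (1 - s)), univSched V t
        = ∫ t in A..(A * Real.exp (1 - s)), ((1:ℝ) - Real.log (t / A)) := by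
      apply integral_congr_Ioo hle
      intro t ht
      refine univSched_mid hVpos ht.1.le (le_trans ht.2.le ?_)
      rw [show Real.exp 1 * V / (Real.exp 1 - 1) = V / (Real.exp 1 - 1) * Real.exp 1 by ring]
      have := Real.exp_le_exp.2 (show 1 - s ≤ 1 by linarith)
      nlinarith
    rw [hcongr]
    have := integral_LL (b := A) (c := 1) (p := 0) (q := 1 - s) hA (by linarith)
    rw [Real.exp_zero, mul_one] at this
    rw [this, Real.exp_zero]
  rw [hsplit, hp1, hp2, Real.exp_zero]
  ring

-- ∫_0^H U = V  when H ≥ eV/(e-1)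
lemma int_U_full {V H : ℝ} (hV : 0 ≤ V) (hH : Real.exp 1 * V / (Real.exp 1 - 1) ≤ H) :
    ∫ t in (0:ℝ)..H, univSched V t = V := by
  have key : Real.exp 1 * V / (Real.exp 1 - 1) = V / (Real.exp 1 - 1) * Real.exp (1 - 0) := by
    rw [sub_zero]; ring
  have hsplit : ∫ t in (0:ℝ)..H, univSched V t
      = (∫ t in (0:ℝ)..(V / (Real.exp 1 - 1) * Real.exp (1 - 0)), univSched V t)
        + ∫ t in (V / (Real.exp 1 - 1) * Real.exp (1 - 0))..H, univSched V t :=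
    (intervalIntegral.integral_add_adjacent_intervals (U_intble hV _ _) (U_intble hV _ _)).symm
  have hp2 : ∫ t in (V / (Real.exp 1 - 1) * Real.exp (1 - 0))..H, univSched V t = 0 := by
    rw [integral_congr_Ioo (key ▸ hH) (g := fun _ => (0:ℝ))
      (fun t ht => univSched_of_ge (key ▸ ht.1.le) hV)]
    simp
  rw [hsplit, hp2, int_U hV le_rfl zero_le_one]
  have h := em1_pos
  field_simp
  ring

lemma g_meas (V r h : ℝ) : Measurable (fun t => min r (max (h - univSched V t) 0)) :=
  (measurable_const.min (((measurable_univSched V).const_sub h).max measurable_const))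

lemma g_intble {V r h : ℝ} (hr : 0 ≤ r) (lo hi : ℝ) :
    IntervalIntegrable (fun t => min r (max (h - univSched V t) 0)) volume lo hi := by
  apply intervalIntegrable_of_bdd (g_meas V r h) (B := r)
  intro t
  rw [abs_le]
  constructor
  · calc -r ≤ 0 := by linarith
      _ ≤ min r (max (h - univSched V t) 0) := le_min hr (le_max_right _ _)
  · exact min_le_left _ _

lemma int_g_r_le {V r h H : ℝ} (hV : 0 ≤ V) (hr0 : 0 < r) (h1 : h ≤ 1) (hrh : r ≤ h)
    (hH : Real.exp 1 * V / (Real.exp 1 - 1) ≤ H) (hH0 : 0 ≤ H) :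
    ∫ t in (0:ℝ)..H, min r (max (h - univSched V t) 0)
      = r * H - V / (Real.exp 1 - 1) * Real.exp (1 - h) * (Real.exp r - 1) := by
  have h0 : 0 < h := lt_of_lt_of_le hr0 hrh
  rcases hV.lt_or_eq with hV0 | hV0
  swap
  · rw [← hV0]
    have hU : ∀ t ∈ Set.Ioo (0:ℝ) H, min r (max (h - univSched 0 t) 0) = r := by
      intro t ht
      rw [univSched_of_ge (by simpa using ht.1.le) le_rfl, sub_zero,
        max_eq_left h0.le, min_eq_left hrh]
    rw [integral_congr_Ioo hH0 hU]
    simp [mul_comm]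
  · set A := V / (Real.exp 1 - 1) with hAdef
    have hA : 0 < A := div_pos hV0 em1_pos
    have heA : Real.exp 1 * V / (Real.exp 1 - 1) = A * Real.exp 1 := by rw [hAdef]; ring
    have e1 : Real.exp (1-h) ≤ Real.exp (1-h+r) := Real.exp_le_exp.2 (by linarith)
    have e2 : Real.exp (1-h+r) ≤ Real.exp 1 := Real.exp_le_exp.2 (by linarith)
    have o1 : A * Real.exp (1-h) ≤ A * Real.exp (1-h+r) := by nlinarith
    have o2 : A * Real.exp (1-h+r) ≤ H := by rw [heA] at hH; nlinarith
    have o0 : 0 < A * Real.exp (1-h) := by positivity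
    have hsplit : ∫ t in (0:ℝ)..H, min r (max (h - univSched V t) 0)
        = (∫ t in (0:ℝ)..(A * Real.exp (1-h)), min r (max (h - univSched V t) 0))
          + ((∫ t in (A * Real.exp (1-h))..(A * Real.exp (1-h+r)),
              min r (max (h - univSched V t) 0))
          + ∫ t in (A * Real.exp (1-h+r))..H, min r (max (h - univSched V t) 0)) := by
      rw [intervalIntegral.integral_add_adjacent_intervals (g_intble hr0.le _ _) (g_intble hr0.le _ _),
        intervalIntegral.integral_add_adjacent_intervals (g_intble hr0.le _ _) (g_intble hr0.le _ _)]
    have hp1 : ∫ t in (0:ℝ)..(A * Real.exp (1-h)), min r (max (h - univSched V t) 0) = 0 := by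
      rw [integral_congr_Ioo o0.le (g := fun _ => (0:ℝ)) ?_]
      · simp
      · intro t ht
        have hU : h ≤ univSched V t := U_ge_of_le hV0 h0.le h1 ht.2.le
        rw [max_eq_right (by linarith), min_eq_right hr0.le]
    have hp2 : ∫ t in (A * Real.exp (1-h))..(A * Real.exp (1-h+r)),
        min r (max (h - univSched V t) 0)
        = -(A * (((1-h)+1) * (Real.exp (1-h+r) - Real.exp (1-h))
            - (1-h+r) * Real.exp (1-h+r) + (1-h) * Real.exp (1-h))) := by
      rw [integral_congr_Ioo o1 (g := fun t => -((1-h) - Real.log (t / A))) ?_]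
      · rw [intervalIntegral.integral_neg, integral_LL hA.le (by linarith)]
      · intro t ht
        have hU1 : univSched V t ≤ h := U_le_of_ge hV ‹0 < h›.le h1 ht.1.le
        have hU2 : h - r ≤ univSched V t := by
          have := U_ge_of_le hV0 (show (0:ℝ) ≤ h - r by linarith)
            (show h - r ≤ 1 by linarith) (t := t) (by
              rw [show (1 - (h-r)) = 1-h+r by ring]; exact ht.2.le)
          linarith
        have hmid : univSched V t = 1 - Real.log (t / A) := by
          apply univSched_mid hV0
          · calc V / (Real.exp 1 - 1) = A := rfl
              _ ≤ A * Real.exp (1-h) := by nlinarith [Real.add_one_le_exp (1-h)]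
              _ ≤ t := ht.1.le
          · rw [heA]; exact ht.2.le.trans (by nlinarith)
        rw [hmid, max_eq_left (by linarith), min_eq_right (by linarith)]
        ring
    have hp3 : ∫ t in (A * Real.exp (1-h+r))..H, min r (max (h - univSched V t) 0)
        = (H - A * Real.exp (1-h+r)) * r := by
      rw [integral_congr_Ioo o2 (g := fun _ => r) ?_]
      · simp [smul_eq_mul]
      · intro t ht
        have hU : univSched V t ≤ h - r := by
          apply U_le_of_ge hV (by linarith) (by linarith)
          rw [show (1 - (h-r)) = 1-h+r by ring]; exact ht.1.le
        rw [max_eq_left (by linarith), min_eq_left (by linarith)]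
    rw [hsplit, hp1, hp2, hp3, show (1-h+r) = (1-h)+r by ring, Real.exp_add]
    ring

lemma int_g_h_le {V r h H : ℝ} (hV : 0 ≤ V) (hr0 : 0 < r) (h0 : 0 < h) (h1 : h ≤ 1)
    (hrh : h ≤ r)
    (hH : Real.exp 1 * V / (Real.exp 1 - 1) ≤ H) (hH0 : 0 ≤ H) :
    ∫ t in (0:ℝ)..H, min r (max (h - univSched V t) 0)
      = h * H - V / (Real.exp 1 - 1) * (Real.exp 1 - Real.exp (1 - h)) := by
  rcases hV.lt_or_eq with hV0 | hV0
  swap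
  · rw [← hV0]
    have hU : ∀ t ∈ Set.Ioo (0:ℝ) H, min r (max (h - univSched 0 t) 0) = h := by
      intro t ht
      rw [univSched_of_ge (by simpa using ht.1.le) le_rfl, sub_zero,
        max_eq_left h0.le, min_eq_right hrh]
    rw [integral_congr_Ioo hH0 hU]
    simp [mul_comm]
  · set A := V / (Real.exp 1 - 1) with hAdef
    have hA : 0 < A := div_pos hV0 em1_pos
    have heA : Real.exp 1 * V / (Real.exp 1 - 1) = A * Real.exp 1 := by rw [hAdef]; ring
    have e1 : Real.exp (1-h) ≤ Real.exp 1 := Real.exp_le_exp.2 (by linarith)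
    have o1 : A * Real.exp (1-h) ≤ A * Real.exp 1 := by nlinarith
    have o2 : A * Real.exp 1 ≤ H := by rw [heA] at hH; linarith
    have o0 : 0 < A * Real.exp (1-h) := by positivity
    have hsplit : ∫ t in (0:ℝ)..H, min r (max (h - univSched V t) 0)
        = (∫ t in (0:ℝ)..(A * Real.exp (1-h)), min r (max (h - univSched V t) 0))
          + ((∫ t in (A * Real.exp (1-h))..(A * Real.exp 1),
              min r (max (h - univSched V t) 0))
          + ∫ t in (A * Real.exp 1)..H, min r (max (h - univSched V t) 0)) := by
      rw [intervalIntegral.integral_add_adjacent_intervals (g_intble hr0.le _ _) (g_intble hr0.le _ _),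
        intervalIntegral.integral_add_adjacent_intervals (g_intble hr0.le _ _) (g_intble hr0.le _ _)]
    have hp1 : ∫ t in (0:ℝ)..(A * Real.exp (1-h)), min r (max (h - univSched V t) 0) = 0 := by
      rw [integral_congr_Ioo o0.le (g := fun _ => (0:ℝ)) ?_]
      · simp
      · intro t ht
        have hU : h ≤ univSched V t := U_ge_of_le hV0 h0.le h1 ht.2.le
        rw [max_eq_right (by linarith), min_eq_right hr0.le]
    have hp2 : ∫ t in (A * Real.exp (1-h))..(A * Real.exp 1),
        min r (max (h - univSched V t) 0)
        = -(A * (((1-h)+1) * (Real.exp 1 - Real.exp (1-h))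
            - 1 * Real.exp 1 + (1-h) * Real.exp (1-h))) := by
      rw [integral_congr_Ioo o1 (g := fun t => -((1-h) - Real.log (t / A))) ?_]
      · rw [intervalIntegral.integral_neg, integral_LL hA.le (by linarith)]
      · intro t ht
        have hU1 : univSched V t ≤ h := U_le_of_ge hV h0.le h1 ht.1.le
        have hU0 : 0 ≤ univSched V t := univSched_nonneg hV t
        have hmid : univSched V t = 1 - Real.log (t / A) := by
          apply univSched_mid hV0
          · calc V / (Real.exp 1 - 1) = A := rfl
              _ ≤ A * Real.exp (1-h) := by nlinarith [Real.add_one_le_exp (1-h)]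
              _ ≤ t := ht.1.le
          · rw [heA]; exact ht.2.le
        rw [hmid, max_eq_left (by linarith), min_eq_right (by linarith)]
        ring
    have hp3 : ∫ t in (A * Real.exp 1)..H, min r (max (h - univSched V t) 0)
        = (H - A * Real.exp 1) * h := by
      rw [integral_congr_Ioo o2 (g := fun _ => h) ?_]
      · simp [smul_eq_mul]
      · intro t ht
        have hU : univSched V t = 0 := univSched_of_ge (by rw [heA]; exact ht.1.le) hV
        rw [hU, sub_zero, max_eq_left h0.le, min_eq_right hrh]
    rw [hsplit, hp1, hp2, hp3]
    ring

lemma int_psi_full {W y H : ℝ} (hW : 0 < W) (hy0 : 0 ≤ y) (hy1 : y ≤ 1)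
    (hH : Real.exp 1 * W / (Real.exp 1 - 1) ≤ H) :
    ∫ t in (0:ℝ)..H, max (univSched W t - y) 0
      = W / (Real.exp 1 - 1) * (Real.exp (1 - y) - 1) := by
  set A := W / (Real.exp 1 - 1) with hAdef
  have hA : 0 < A := div_pos hW em1_pos
  have heA : Real.exp 1 * W / (Real.exp 1 - 1) = A * Real.exp 1 := by rw [hAdef]; ring
  have e0 : (1:ℝ) ≤ Real.exp (1-y) := by nlinarith [Real.add_one_le_exp (1-y)]
  have e1 : Real.exp (1-y) ≤ Real.exp 1 := Real.exp_le_exp.2 (by linarith)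
  have o1 : A ≤ A * Real.exp (1-y) := by nlinarith
  have o2 : A * Real.exp (1-y) ≤ H := by rw [heA] at hH; nlinarith
  have hintble : ∀ lo hi : ℝ, IntervalIntegrable (fun t => max (univSched W t - y) 0) volume lo hi := by
    intro lo hi
    apply intervalIntegrable_of_bdd
      ((((measurable_univSched W).sub measurable_const).max measurable_const)) (B := 1)
    intro t
    show |max (univSched W t - y) 0| ≤ 1
    rw [abs_le]
    refine ⟨by linarith [le_max_right (univSched W t - y) (0:ℝ)], ?_⟩
    apply max_le ?_ zero_le_one
    linarith [univSched_le_one hW.le t]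
  have hsplit : ∫ t in (0:ℝ)..H, max (univSched W t - y) 0
      = (∫ t in (0:ℝ)..A, max (univSched W t - y) 0)
        + ((∫ t in A..(A * Real.exp (1-y)), max (univSched W t - y) 0)
        + ∫ t in (A * Real.exp (1-y))..H, max (univSched W t - y) 0) := by
    rw [intervalIntegral.integral_add_adjacent_intervals (hintble _ _) (hintble _ _),
      intervalIntegral.integral_add_adjacent_intervals (hintble _ _) (hintble _ _)]
  have hp1 : ∫ t in (0:ℝ)..A, max (univSched W t - y) 0 = A * (1 - y) := by
    rw [integral_congr_Ioo hA.le (g := fun _ => 1 - y) ?_]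
    · simp [smul_eq_mul]; ring
    · intro t ht
      rw [univSched_of_lt ht.2, max_eq_left (by linarith)]
  have hp2 : ∫ t in A..(A * Real.exp (1-y)), max (univSched W t - y) 0
      = A * (((1-y)+1) * (Real.exp (1-y) - Real.exp 0) - (1-y) * Real.exp (1-y) + 0 * Real.exp 0) := by
    rw [integral_congr_Ioo o1 (g := fun t => (1-y) - Real.log (t / A)) ?_]
    · have := integral_LL (b := A) (c := 1-y) (p := 0) (q := 1-y) hA.le (by linarith)
      rw [Real.exp_zero, mul_one] at this
      rw [this, Real.exp_zero]
    · intro t ht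
      have hU : y ≤ univSched W t := U_ge_of_le hW hy0 hy1 ht.2.le
      have hmid : univSched W t = 1 - Real.log (t / A) := by
        apply univSched_mid hW ht.1.le
        rw [heA]; exact ht.2.le.trans (by nlinarith)
      rw [hmid] at hU ⊢
      rw [max_eq_left (by linarith)]
      ring
  have hp3 : ∫ t in (A * Real.exp (1-y))..H, max (univSched W t - y) 0 = 0 := by
    rw [integral_congr_Ioo o2 (g := fun _ => (0:ℝ)) ?_]
    · simp
    · intro t ht
      have hU : univSched W t ≤ y := U_le_of_ge hW.le hy0 hy1 ht.1.le
      rw [max_eq_right (by linarith)]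
  rw [hsplit, hp1, hp2, hp3, Real.exp_zero]
  ring

lemma int_psi_W_mid {V r h y H : ℝ} (hV : 0 ≤ V) (hr0 : 0 < r)
    (hry : r < y) (hyh : y < h) (h1 : h ≤ 1)
    (hH : Real.exp 1 * V / (Real.exp 1 - 1) ≤ H) (hH0 : 0 ≤ H) :
    ∫ t in (0:ℝ)..H,
        max ((univSched V t + if t < H then min r (max (h - univSched V t) 0) else 0) - y) 0
      = V / (Real.exp 1 - 1)
          * (Real.exp (1+r-y) - Real.exp (1+r-h) + Real.exp (1-h) - 1) := by
  have hy0 : 0 ≤ y := by linarith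
  have hy1 : y ≤ 1 := by linarith
  have h0 : 0 < h := by linarith
  have hintble : ∀ lo hi : ℝ, IntervalIntegrable
      (fun t => max ((univSched V t + if t < H then min r (max (h - univSched V t) 0) else 0) - y) 0)
      volume lo hi := by
    intro lo hi
    apply intervalIntegrable_of_bdd (B := 2)
    · apply Measurable.max ?_ measurable_const
      apply Measurable.sub ?_ measurable_const
      apply (measurable_univSched V).add
      exact Measurable.ite (measurableSet_lt measurable_id measurable_const)
        (g_meas V r h) measurable_const
    · intro t
      rw [abs_le]
      constructor
      · linarith [le_max_right ((univSched V t + if t < H then min r (max (h - univSched V t) 0) else 0) - y) (0:ℝ)]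
      · apply max_le ?_ (by norm_num)
        have h2 : (if t < H then min r (max (h - univSched V t) 0) else 0) ≤ r := by
          split_ifs
          · exact min_le_left _ _
          · linarith
        linarith [univSched_le_one hV t]
  rcases hV.lt_or_eq with hV0 | hV0
  swap
  · rw [← hV0]
    have hU : ∀ t ∈ Set.Ioo (0:ℝ) H,
        max ((univSched 0 t + if t < H then min r (max (h - univSched 0 t) 0) else 0) - y) 0
          = 0 := by
      intro t ht
      rw [univSched_of_ge (by simpa using ht.1.le) le_rfl, if_pos ht.2, sub_zero,
        max_eq_left h0.le, min_eq_left (by linarith), zero_add]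
      rw [max_eq_right (by linarith)]
    rw [integral_congr_Ioo hH0 hU]
    simp
  · set A := V / (Real.exp 1 - 1) with hAdef
    have hA : 0 < A := div_pos hV0 em1_pos
    have heA : Real.exp 1 * V / (Real.exp 1 - 1) = A * Real.exp 1 := by rw [hAdef]; ring
    have e1 : Real.exp (1-h) ≤ Real.exp (1-h+r) := Real.exp_le_exp.2 (by linarith)
    have e2 : Real.exp (1-h+r) ≤ Real.exp (1+r-y) := Real.exp_le_exp.2 (by linarith)
    have e3 : Real.exp (1+r-y) ≤ Real.exp 1 := Real.exp_le_exp.2 (by linarith)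
    have o0 : 0 < A * Real.exp (1-h) := by positivity
    have o1 : A * Real.exp (1-h) ≤ A * Real.exp (1-h+r) := by nlinarith
    have o2 : A * Real.exp (1-h+r) ≤ A * Real.exp (1+r-y) := by nlinarith
    have o3 : A * Real.exp (1+r-y) ≤ H := by rw [heA] at hH; nlinarith
    have hsplit : ∫ t in (0:ℝ)..H,
        max ((univSched V t + if t < H then min r (max (h - univSched V t) 0) else 0) - y) 0
        = (∫ t in (0:ℝ)..(A * Real.exp (1-h)),
            max ((univSched V t + if t < H then min r (max (h - univSched V t) 0) else 0) - y) 0)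
          + ((∫ t in (A * Real.exp (1-h))..(A * Real.exp (1-h+r)),
            max ((univSched V t + if t < H then min r (max (h - univSched V t) 0) else 0) - y) 0)
          + ((∫ t in (A * Real.exp (1-h+r))..(A * Real.exp (1+r-y)),
            max ((univSched V t + if t < H then min r (max (h - univSched V t) 0) else 0) - y) 0)
          + ∫ t in (A * Real.exp (1+r-y))..H,
            max ((univSched V t + if t < H then min r (max (h - univSched V t) 0) else 0) - y) 0)) := by
      rw [intervalIntegral.integral_add_adjacent_intervals (hintble _ _) (hintble _ _),
        intervalIntegral.integral_add_adjacent_intervals (hintble _ _) (hintble _ _),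
        intervalIntegral.integral_add_adjacent_intervals (hintble _ _) (hintble _ _)]
    have hp1 : ∫ t in (0:ℝ)..(A * Real.exp (1-h)),
        max ((univSched V t + if t < H then min r (max (h - univSched V t) 0) else 0) - y) 0
        = (A * Real.exp (1-h) * (1 + h) - A) - y * (A * Real.exp (1-h)) := by
      have hcongr : ∀ t ∈ Set.Ioo (0:ℝ) (A * Real.exp (1-h)),
          max ((univSched V t + if t < H then min r (max (h - univSched V t) 0) else 0) - y) 0
            = univSched V t - y := by
        intro t ht
        have hU : h ≤ univSched V t := U_ge_of_le hV0 h0.le h1 ht.2.le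
        have hi1 : max (h - univSched V t) 0 = 0 := max_eq_right (by linarith)
        rw [if_pos (lt_of_lt_of_le ht.2 (o1.trans (o2.trans o3))), hi1,
          min_eq_right hr0.le, add_zero, max_eq_left (by linarith)]
      rw [integral_congr_Ioo o0.le hcongr,
        intervalIntegral.integral_sub (U_intble hV _ _) intervalIntegrable_const,
        int_U hV h0.le h1, intervalIntegral.integral_const]
      simp [smul_eq_mul]
      ring
    have hp2 : ∫ t in (A * Real.exp (1-h))..(A * Real.exp (1-h+r)),
        max ((univSched V t + if t < H then min r (max (h - univSched V t) 0) else 0) - y) 0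
        = (A * Real.exp (1-h+r) - A * Real.exp (1-h)) * (h - y) := by
      have hcongr : ∀ t ∈ Set.Ioo (A * Real.exp (1-h)) (A * Real.exp (1-h+r)),
          max ((univSched V t + if t < H then min r (max (h - univSched V t) 0) else 0) - y) 0
            = h - y := by
        intro t ht
        have hU1 : univSched V t ≤ h := U_le_of_ge hV h0.le h1 ht.1.le
        have hU2 : h - r ≤ univSched V t := by
          have := U_ge_of_le hV0 (show (0:ℝ) ≤ h - r by linarith)
            (show h - r ≤ 1 by linarith) (t := t)
            (by rw [show (1 - (h-r)) = 1-h+r by ring]; exact ht.2.le)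
          linarith
        have hi1 : max (h - univSched V t) 0 = h - univSched V t := max_eq_left (by linarith)
        have hi2 : min r (h - univSched V t) = h - univSched V t := min_eq_right (by linarith)
        rw [if_pos (lt_of_lt_of_le ht.2 (o2.trans o3)), hi1, hi2,
          show univSched V t + (h - univSched V t) - y = h - y by ring,
          max_eq_left (by linarith)]
      rw [integral_congr_Ioo o1 hcongr, intervalIntegral.integral_const, smul_eq_mul, mul_comm]
    have hp3 : ∫ t in (A * Real.exp (1-h+r))..(A * Real.exp (1+r-y)),
        max ((univSched V t + if t < H then min r (max (h - univSched V t) 0) else 0) - y) 0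
        = A * (((1+r-y)+1) * (Real.exp (1+r-y) - Real.exp (1-h+r))
            - (1+r-y) * Real.exp (1+r-y) + (1-h+r) * Real.exp (1-h+r)) := by
      have hcongr : ∀ t ∈ Set.Ioo (A * Real.exp (1-h+r)) (A * Real.exp (1+r-y)),
          max ((univSched V t + if t < H then min r (max (h - univSched V t) 0) else 0) - y) 0
            = (1+r-y) - Real.log (t / A) := by
        intro t ht
        have hU1 : univSched V t ≤ h - r := by
          apply U_le_of_ge hV (by linarith) (by linarith)
          rw [show (1 - (h-r)) = 1-h+r by ring]; exact ht.1.le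
        have hU2 : y - r ≤ univSched V t := by
          have := U_ge_of_le hV0 (show (0:ℝ) ≤ y - r by linarith)
            (show y - r ≤ 1 by linarith) (t := t)
            (by rw [show (1 - (y-r)) = 1+r-y by ring]; exact ht.2.le)
          linarith
        have hmid : univSched V t = 1 - Real.log (t / A) := by
          apply univSched_mid hV0
          · calc V / (Real.exp 1 - 1) = A := rfl
              _ ≤ A * Real.exp (1-h) := by nlinarith [Real.add_one_le_exp (1-h)]
              _ ≤ t := (o1.trans_lt ht.1).le
          · rw [heA]; exact ht.2.le.trans (by nlinarith)
        have hi1 : max (h - univSched V t) 0 = h - univSched V t := max_eq_left (by linarith)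
        have hi2 : min r (h - univSched V t) = r := min_eq_left (by linarith)
        have hU2' : y - r ≤ 1 - Real.log (t / A) := by rw [← hmid]; exact hU2
        rw [if_pos (lt_of_lt_of_le ht.2 o3), hi1, hi2, hmid, max_eq_left (by linarith)]
        ring
      rw [integral_congr_Ioo o2 hcongr, integral_LL hA.le (by linarith)]
    have hp4 : ∫ t in (A * Real.exp (1+r-y))..H,
        max ((univSched V t + if t < H then min r (max (h - univSched V t) 0) else 0) - y) 0
        = 0 := by
      have hcongr : ∀ t ∈ Set.Ioo (A * Real.exp (1+r-y)) H,
          max ((univSched V t + if t < H then min r (max (h - univSched V t) 0) else 0) - y) 0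
            = 0 := by
        intro t ht
        have hU1 : univSched V t ≤ y - r := by
          apply U_le_of_ge hV (by linarith) (by linarith)
          rw [show (1 - (y-r)) = 1+r-y by ring]; exact ht.1.le
        have hle : (if t < H then min r (max (h - univSched V t) 0) else 0) ≤ r := by
          split_ifs
          · exact min_le_left _ _
          · linarith
        rw [max_eq_right (by linarith)]
      rw [integral_congr_Ioo o3 hcongr]
      simp
    rw [hsplit, hp1, hp2, hp3, hp4]
    rw [show (1-h+r) = (1-h)+r by ring, show (1+r-y) = (1-y)+r by ring,
      show (1+r-h) = (1-h)+r by ring, Real.exp_add, Real.exp_add]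
    ring

lemma min_max_lip {r : ℝ} (x y : ℝ) :
    |min r (max x 0) - min r (max y 0)| ≤ |x - y| := by
  have aux : ∀ a b : ℝ, a ≤ b →
      min r (max b 0) - min r (max a 0) ≤ b - a ∧
      0 ≤ min r (max b 0) - min r (max a 0) := by
    intro a b hab
    have m1 : max a 0 ≤ max b 0 := max_le_max hab le_rfl
    have m2 : min r (max a 0) ≤ min r (max b 0) := min_le_min le_rfl m1
    have m4 : max b 0 - max a 0 ≤ b - a := by
      rcases le_total a 0 with h0 | h0
      · rw [max_eq_right h0]
        rcases le_total b 0 with hb0 | hb0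
        · rw [max_eq_right hb0]; linarith
        · rw [max_eq_left hb0]; linarith
      · rw [max_eq_left h0, max_eq_left (h0.trans hab)]
    have m3 : min r (max b 0) - min r (max a 0) ≤ max b 0 - max a 0 := by
      rcases le_total r (max a 0) with hr | hr
      · rw [min_eq_left hr, min_eq_left (hr.trans m1)]; linarith
      · rw [min_eq_right hr]
        linarith [min_le_right r (max b 0)]
    exact ⟨by linarith, by linarith⟩
  rcases le_total x y with h | h
  · have := aux x y h
    rw [abs_sub_comm, abs_of_nonneg this.2, abs_sub_comm x y, abs_of_nonneg (by linarith)]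
    linarith [this.1]
  · have := aux y x h
    rw [abs_of_nonneg this.2, abs_of_nonneg (by linarith : (0:ℝ) ≤ x - y)]
    linarith [this.1]

lemma partA_ineq {V v r H : ℝ} (hV : 0 ≤ V) (hv : 0 < v) (hr0 : 0 < r) (hr1 : r ≤ 1)
    (hH : Real.exp 1 / (Real.exp 1 - 1) * max (V + v) (v / r) ≤ H) :
    v ≤ r * H - V / (Real.exp 1 - 1) * (Real.exp r - 1) := by
  set E := Real.exp 1 with hE
  set M := max (V + v) (v / r) with hM
  set w := Real.exp r - 1 with hw
  have hEpos := em1_pos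
  have hw0 : 0 ≤ w := by
    have : (1:ℝ) ≤ Real.exp r := by nlinarith [Real.add_one_le_exp r]
    rw [hw]; linarith
  have hw1 : w ≤ r * (E - 1) := by
    have hcv := convexOn_exp.2 (Set.mem_univ (0:ℝ)) (Set.mem_univ (1:ℝ))
      (by linarith : (0:ℝ) ≤ 1 - r) (by linarith : (0:ℝ) ≤ r) (by ring)
    simp only [smul_eq_mul, mul_zero, mul_one, zero_add, Real.exp_zero] at hcv
    rw [hw, hE]; linarith
  have hw2 : w * (1 - r) ≤ r := by
    have h3 : 1 - r ≤ Real.exp (-r) := by nlinarith [Real.add_one_le_exp (-r)]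
    have h4 : Real.exp r * Real.exp (-r) = 1 := by
      rw [← Real.exp_add]; simp
    have h5 : Real.exp r * (1 - r) ≤ 1 := by
      nlinarith [Real.exp_pos r]
    rw [hw]; nlinarith
  have hM1 : v ≤ r * M := by
    have : v / r ≤ M := le_max_right _ _
    rw [div_le_iff₀ hr0] at this; linarith [this]
  have hM2 : V + v ≤ M := le_max_left _ _
  have hMH : E * M ≤ (E - 1) * H := by
    have h6 := mul_le_mul_of_nonneg_right hH hEpos.le
    have h7 : E / (E - 1) * M * (E - 1) = E * M := by
      field_simp [show E - 1 ≠ 0 from ne_of_gt hEpos]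
    rw [h7] at h6; linarith
  have hM0 : 0 ≤ M := le_trans (by positivity) (le_max_right (V+v) (v/r))
  have t1 : 0 ≤ r * (w * (M - V - v)) := by
    apply mul_nonneg hr0.le (mul_nonneg hw0 (by linarith))
  have t2 : 0 ≤ (E * r - w) * (r * M - v) := by
    apply mul_nonneg (by nlinarith) (by linarith)
  have t3 : 0 ≤ v * (w * r + r - w) := by
    apply mul_nonneg hv.le (by nlinarith)
  have key : r * ((E - 1) * v + V * w) ≤ E * r ^ 2 * M := by nlinarith
  have h8 : E * M * r ≤ (E - 1) * H * r := mul_le_mul_of_nonneg_right hMH hr0.le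
  have h9 : E * M * r * r ≤ (E - 1) * H * r * r := mul_le_mul_of_nonneg_right h8 hr0.le
  have final : (E - 1) * v + V * w ≤ r * ((E - 1) * H) := by
    have h10 : r * ((E - 1) * v + V * w) ≤ r * (r * ((E - 1) * H)) := by nlinarith
    exact le_of_mul_le_mul_left h10 hr0
  set P := V / (E - 1) with hP
  have hPE : P * (E - 1) = V := div_mul_cancel₀ _ (ne_of_gt hEpos)
  by_contra hcon
  push_neg at hcon
  have : (r * H - P * w) * (E - 1) < v * (E - 1) :=
    mul_lt_mul_of_pos_right hcon hEpos
  nlinarith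

lemma waterLevel_spec {V v r H : ℝ} (hV : 0 ≤ V) (hv : 0 < v) (hr0 : 0 < r)
    (hHa : v ≤ ∫ t in (0:ℝ)..H, min r (max (1 - univSched V t) 0)) (hH0 : 0 < H) :
    (0 < waterLevel (univSched V) v r H ∧ waterLevel (univSched V) v r H ≤ 1) ∧
    ∫ t in (0:ℝ)..H,
      min r (max (waterLevel (univSched V) v r H - univSched V t) 0) = v := by
  set g : ℝ → ℝ := fun h => ∫ t in (0:ℝ)..H, min r (max (h - univSched V t) 0) with hg
  have hWL : waterLevel (univSched V) v r H = sInf {h : ℝ | h ∈ Icc (0:ℝ) 1 ∧ v ≤ g h} := rfl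
  set S := {h : ℝ | h ∈ Icc (0:ℝ) 1 ∧ v ≤ g h} with hS
  have h1S : (1:ℝ) ∈ S := ⟨⟨zero_le_one, le_rfl⟩, hHa⟩
  have hbdd : BddBelow S := ⟨0, fun x hx => hx.1.1⟩
  have hne : S.Nonempty := ⟨1, h1S⟩
  have glip : ∀ h1 h2 : ℝ, |g h1 - g h2| ≤ H * |h1 - h2| := by
    intro h1 h2
    have hsub : g h1 - g h2 = ∫ t in (0:ℝ)..H,
        (min r (max (h1 - univSched V t) 0) - min r (max (h2 - univSched V t) 0)) := by
      rw [hg]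
      exact (intervalIntegral.integral_sub (g_intble hr0.le _ _) (g_intble hr0.le _ _)).symm
    rw [hsub]
    have := intervalIntegral.norm_integral_le_of_norm_le_const (C := |h1 - h2|)
      (f := fun t => min r (max (h1 - univSched V t) 0) - min r (max (h2 - univSched V t) 0))
      (a := 0) (b := H) ?_
    · rw [Real.norm_eq_abs] at this
      calc |∫ t in (0:ℝ)..H, (min r (max (h1 - univSched V t) 0)
            - min r (max (h2 - univSched V t) 0))| ≤ |h1 - h2| * |H - 0| := this
        _ = H * |h1 - h2| := by rw [sub_zero, abs_of_pos hH0]; ring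
    · intro x _
      rw [Real.norm_eq_abs]
      calc |min r (max (h1 - univSched V x) 0) - min r (max (h2 - univSched V x) 0)|
          ≤ |(h1 - univSched V x) - (h2 - univSched V x)| := min_max_lip _ _
        _ = |h1 - h2| := by ring_nf
  have gcont : Continuous g := by
    apply LipschitzWith.continuous (K := Real.toNNReal H)
    apply LipschitzWith.of_dist_le_mul
    intro h1 h2
    rw [Real.dist_eq, Real.dist_eq, Real.coe_toNNReal _ hH0.le]
    exact glip h1 h2
  have hclosed : IsClosed S := by
    have : S = Icc (0:ℝ) 1 ∩ g ⁻¹' (Ici v) := by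
      ext x; simp [hS, Set.mem_setOf_eq, Set.mem_preimage, Set.mem_Ici, and_comm]
    rw [this]
    exact isClosed_Icc.inter (isClosed_Ici.preimage gcont)
  have hmem : sInf S ∈ S := hclosed.csInf_mem hne hbdd
  have h0le : 0 ≤ sInf S := le_csInf hne fun b hb => hb.1.1
  have hle1 : sInf S ≤ 1 := csInf_le hbdd h1S
  have g0 : g 0 = 0 := by
    simp only [hg]
    rw [integral_congr_Ioo hH0.le (g := fun _ => (0:ℝ)) ?_]
    · simp
    · intro t ht
      rw [max_eq_right (by linarith [univSched_nonneg hV t]), min_eq_right hr0.le]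
  have hpos : 0 < sInf S := by
    rcases h0le.lt_or_eq with h | h
    · exact h
    · exfalso
      have := hmem.2
      rw [← h, g0] at this
      linarith
  have hglev : g (sInf S) ≤ v := by
    by_contra hcon
    push_neg at hcon
    set h0 := max 0 (sInf S - (g (sInf S) - v) / H) with hh0
    have hlt : h0 < sInf S := by
      apply max_lt hpos
      have : 0 < (g (sInf S) - v) / H := div_pos (by linarith) hH0
      linarith
    have hdivpos : 0 < (g (sInf S) - v) / H := div_pos (by linarith) hH0
    have hin : h0 ∈ S := by
      refine ⟨⟨le_max_left _ _, ?_⟩, ?_⟩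
      · exact max_le zero_le_one (by linarith)
      · have hd : sInf S - h0 ≤ (g (sInf S) - v) / H := by
          have := le_max_right 0 (sInf S - (g (sInf S) - v) / H)
          rw [← hh0] at this
          linarith
        have habs := glip (sInf S) h0
        rw [abs_sub_comm, abs_of_pos (by linarith : (0:ℝ) < sInf S - h0)] at habs
        have hmul : H * ((g (sInf S) - v) / H) = g (sInf S) - v := by
          field_simp
        have hfin : H * (sInf S - h0) ≤ H * ((g (sInf S) - v) / H) :=
          mul_le_mul_of_nonneg_left hd hH0.le
        have habs' := abs_le.1 habs
        linarith [habs'.1, habs'.2]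
    exact absurd (csInf_le hbdd hin) (not_le.2 hlt)
  rw [hWL]
  exact ⟨⟨hpos, hle1⟩, le_antisymm hglev hmem.2⟩

lemma U_formula_ge {W x : ℝ} (hW : 0 < W) (hx : W / (Real.exp 1 - 1) ≤ x) :
    univSched W x = max 0 (1 - Real.log (x / (W / (Real.exp 1 - 1)))) := by
  have hA : 0 < W / (Real.exp 1 - 1) := div_pos hW em1_pos
  have hx0 : 0 < x := lt_of_lt_of_le hA hx
  rcases le_or_gt x (Real.exp 1 * W / (Real.exp 1 - 1)) with h | h
  · rw [univSched_mid hW hx h]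
    rw [max_eq_right]
    have : x / (W / (Real.exp 1 - 1)) ≤ Real.exp 1 := by
      rw [div_le_iff₀ hA]
      rw [show Real.exp 1 * W / (Real.exp 1 - 1) = W / (Real.exp 1 - 1) * Real.exp 1 by ring] at h
      linarith
    have := Real.log_le_log (by positivity) this
    rw [Real.log_exp] at this
    linarith
  · rw [univSched_of_ge h.le hW.le]
    rw [max_eq_left]
    have : Real.exp 1 ≤ x / (W / (Real.exp 1 - 1)) := by
      rw [le_div_iff₀ hA]
      rw [show Real.exp 1 * W / (Real.exp 1 - 1) = W / (Real.exp 1 - 1) * Real.exp 1 by ring] at h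
      linarith
    have h2 := Real.log_le_log (Real.exp_pos 1) this
    rw [Real.log_exp] at h2
    linarith

lemma max_sub_max_eq {c u : ℝ} (hc : 0 ≤ c) :
    max 0 u - max 0 (u - c) = min c (max 0 u) := by
  rcases le_total u 0 with h | h
  · rw [max_eq_left h, max_eq_left (by linarith), min_eq_right hc]
    ring
  · rw [max_eq_right h]
    rcases le_total u c with h2 | h2
    · rw [max_eq_left (by linarith), min_eq_right h2]
      ring
    · rw [max_eq_right (by linarith), min_eq_left h2]
      ring

-- U' - U is antitone on [a', ∞)
lemma diff_anti {V v s t : ℝ} (hV : 0 ≤ V) (hv : 0 < v)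
    (hs : (V + v) / (Real.exp 1 - 1) ≤ s) (hst : s ≤ t) :
    univSched (V + v) t - univSched V t ≤ univSched (V + v) s - univSched V s := by
  have hVv : 0 < V + v := by linarith
  have hA' : 0 < (V + v) / (Real.exp 1 - 1) := div_pos hVv em1_pos
  have hs0 : 0 < s := lt_of_lt_of_le hA' hs
  have ht0 : 0 < t := lt_of_lt_of_le hs0 hst
  rcases hV.lt_or_eq with hV0 | hV0
  · set A := V / (Real.exp 1 - 1) with hA
    set A' := (V + v) / (Real.exp 1 - 1) with hA'd
    have hApos : 0 < A := div_pos hV0 em1_pos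
    have hAA' : A ≤ A' := by
      rw [hA, hA'd]
      gcongr
      · exact em1_pos.le
      · linarith
    have hAs : A ≤ s := hAA'.trans hs
    set c := Real.log A' - Real.log A with hcd
    have hc : 0 ≤ c := by
      rw [hcd]
      linarith [Real.log_le_log hApos hAA']
    have key : ∀ x : ℝ, 0 < x → A' ≤ x →
        univSched (V + v) x - univSched V x
          = min c (max 0 (1 - Real.log (x / A'))) := by
      intro x hx0 hx
      rw [U_formula_ge hVv hx, U_formula_ge hV0 ((hAA'.trans hx))]
      have e1 : 1 - Real.log (x / A) = (1 - Real.log (x / A')) - c := by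
        rw [Real.log_div (ne_of_gt hx0) (ne_of_gt hApos),
          Real.log_div (ne_of_gt hx0) (ne_of_gt hA'), hcd]
        ring
      rw [e1, max_sub_max_eq hc]
    rw [key s hs0 hs, key t ht0 (hs.trans hst)]
    apply min_le_min le_rfl
    apply max_le_max le_rfl
    have : Real.log (s / A') ≤ Real.log (t / A') := by
      apply Real.log_le_log (by positivity)
      gcongr
    linarith
  · rw [← hV0] at *
    have hU0s : univSched 0 s = 0 := univSched_of_ge (by simpa using hs0.le) le_rfl
    have hU0t : univSched 0 t = 0 := univSched_of_ge (by simpa using ht0.le) le_rfl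
    rw [hU0s, hU0t, zero_add]
    simpa using univSched_anti (by linarith : (0:ℝ) ≤ 0 + v) hst

lemma single_cross {V v r H h : ℝ} (hV : 0 ≤ V) (hv : 0 < v) (hr0 : 0 < r)
    (hh1 : h ≤ 1) (hH : Real.exp 1 * (V + v) / (Real.exp 1 - 1) ≤ H) :
    ∀ s t : ℝ, 0 ≤ s → s ≤ t →
      univSched (V + v) s <
        univSched V s + (if s < H then min r (max (h - univSched V s) 0) else 0) →
      univSched (V + v) t ≤
        univSched V t + (if t < H then min r (max (h - univSched V t) 0) else 0) := by
  intro s t hs0 hst hlt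
  have hVv : 0 < V + v := by linarith
  have hmono := univSched_mono_V hV (by linarith : V ≤ V + v)
  -- the added part at s is positive
  have hpos : 0 < (if s < H then min r (max (h - univSched V s) 0) else 0) := by
    by_contra hc
    push_neg at hc
    have := hmono s
    linarith
  have hsH : s < H := by
    by_contra hc
    rw [if_neg hc] at hpos
    linarith
  rw [if_pos hsH] at hlt
  have hUsh : univSched V s < h := by
    by_contra hc
    push_neg at hc
    rw [if_pos hsH, max_eq_right (by linarith), min_eq_right hr0.le] at hpos
    linarith
  have hWs : univSched V s + min r (max (h - univSched V s) 0) ≤ h := by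
    rw [max_eq_left (by linarith)]
    have := min_le_right r (h - univSched V s)
    linarith
  have hU's_h : univSched (V + v) s < h := lt_of_lt_of_le hlt hWs
  have hU's_r : univSched (V + v) s - univSched V s < r := by
    have := min_le_left r (max (h - univSched V s) 0)
    linarith
  -- s ≥ a'
  have hsA' : (V + v) / (Real.exp 1 - 1) ≤ s := by
    by_contra hc
    push_neg at hc
    rw [univSched_of_lt hc] at hU's_h
    linarith
  -- goal
  rcases le_or_gt (Real.exp 1 * (V + v) / (Real.exp 1 - 1)) t with hbig | hsmall
  · rw [univSched_of_ge hbig hVv.le]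
    have h1 : 0 ≤ univSched V t := univSched_nonneg hV t
    have h2 : (0:ℝ) ≤ (if t < H then min r (max (h - univSched V t) 0) else 0) := by
      split_ifs
      · exact le_min hr0.le (le_max_right _ _)
      · exact le_refl 0
    linarith
  · have htH : t < H := lt_of_lt_of_le hsmall hH
    rw [if_pos htH]
    have hUt : univSched V t ≤ univSched V s := univSched_anti hV hst
    have hUth : univSched V t < h := lt_of_le_of_lt hUt hUsh
    rw [max_eq_left (by linarith)]
    have hdiff := diff_anti hV hv hsA' hst
    have hU't : univSched (V + v) t ≤ univSched (V + v) s := univSched_anti hVv.le hst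
    rcases le_total r (h - univSched V t) with hm | hm
    · rw [min_eq_left hm]
      linarith
    · rw [min_eq_right hm]
      linarith

lemma ite_g_intble {V r h H : ℝ} (hr0 : 0 ≤ r) (lo hi : ℝ) :
    IntervalIntegrable (fun t => if t < H then min r (max (h - univSched V t) 0) else 0)
      volume lo hi := by
  apply intervalIntegrable_of_bdd (B := r)
  · exact Measurable.ite (measurableSet_lt measurable_id measurable_const)
      (g_meas V r h) measurable_const
  · intro t
    rw [abs_le]
    constructor
    · split_ifs
      · calc -r ≤ 0 := by linarith
          _ ≤ min r (max (h - univSched V t) 0) := le_min hr0 (le_max_right _ _)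
      · linarith
    · split_ifs
      · exact min_le_left _ _
      · exact hr0

lemma Wfun_intble {V r h H : ℝ} (hV : 0 ≤ V) (hr0 : 0 ≤ r) (lo hi : ℝ) :
    IntervalIntegrable
      (fun t => univSched V t + if t < H then min r (max (h - univSched V t) 0) else 0)
      volume lo hi :=
  (U_intble hV lo hi).add (ite_g_intble hr0 lo hi)

lemma psiW_intble {V r h y H : ℝ} (hV : 0 ≤ V) (hr0 : 0 ≤ r) (hr1 : r ≤ 1) (hy : 0 ≤ y) (lo hi : ℝ) :
    IntervalIntegrable
      (fun t => max ((univSched V t + if t < H then min r (max (h - univSched V t) 0) else 0) - y) 0)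
      volume lo hi := by
  apply intervalIntegrable_of_bdd (B := 2)
  · apply Measurable.max ?_ measurable_const
    apply Measurable.sub ?_ measurable_const
    apply (measurable_univSched V).add
    exact Measurable.ite (measurableSet_lt measurable_id measurable_const)
      (g_meas V r h) measurable_const
  · intro t
    rw [abs_le]
    constructor
    · linarith [le_max_right ((univSched V t + if t < H then min r (max (h - univSched V t) 0) else 0) - y) (0:ℝ)]
    · apply max_le ?_ (by norm_num)
      have h2 : (if t < H then min r (max (h - univSched V t) 0) else 0) ≤ r := by
        split_ifs
        · exact min_le_left _ _
        · linarith
      linarith [univSched_le_one hV t, hy]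

lemma psiU_intble {W y : ℝ} (hW : 0 ≤ W) (hy : 0 ≤ y) (lo hi : ℝ) :
    IntervalIntegrable (fun t => max (univSched W t - y) 0) volume lo hi := by
  apply intervalIntegrable_of_bdd
    ((((measurable_univSched W).sub measurable_const).max measurable_const)) (B := 1)
  intro t
  show |max (univSched W t - y) 0| ≤ 1
  rw [abs_le]
  refine ⟨by linarith [le_max_right (univSched W t - y) (0:ℝ)], ?_⟩
  apply max_le ?_ zero_le_one
  linarith [univSched_le_one hW t, hy]

lemma caseLow_ineq {Vv y H : ℝ} (hVv : 0 < Vv) (hy0 : 0 ≤ y)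
    (hH : Real.exp 1 * Vv / (Real.exp 1 - 1) ≤ H) :
    Vv - y * H ≤ Vv / (Real.exp 1 - 1) * (Real.exp (1 - y) - 1) := by
  set E := Real.exp 1 with hE
  set P := Vv / (E - 1) with hPd
  have hP0 : 0 < P := div_pos hVv em1_pos
  have hPE : P * (E - 1) = Vv := div_mul_cancel₀ _ (ne_of_gt em1_pos)
  have hexp : E * (1 - y) ≤ Real.exp (1 - y) := by
    rw [sub_eq_add_neg, Real.exp_add]
    have h3 : 1 - y ≤ Real.exp (-y) := by nlinarith [Real.add_one_le_exp (-y)]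
    rw [hE]
    nlinarith [Real.exp_pos 1]
  have hEP : E * Vv / (E - 1) = E * P := by rw [hPd]; ring
  have hyH : y * (E * P) ≤ y * H := by
    apply mul_le_mul_of_nonneg_left ?_ hy0
    rw [← hEP]; exact hH
  nlinarith [mul_le_mul_of_nonneg_left hexp hP0.le]

lemma caseMid_ineq {A Q Z z c0 er : ℝ} (hA : 0 ≤ A) (hQ : 0 ≤ Q) (her : 1 ≤ er)
    (hz : 1 < z) (hzZ : z ≤ Z) (hc1 : 1 ≤ c0)
    (hS2 : A * (er - 1) * (Z - c0) ≤ Q * (Z - 1)) :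
    A * (z * er - c0 * er + c0 - 1) ≤ A * (z - 1) + Q * (z - 1) := by
  set K := A * (er - 1) with hK
  have hK0 : 0 ≤ K := mul_nonneg hA (by linarith)
  have hZ1 : (0:ℝ) < Z - 1 := by linarith
  have m1 : K * (z - c0) * (Z - 1) ≤ K * (Z - c0) * (z - 1) := by
    nlinarith [mul_nonneg (mul_nonneg hK0 (by linarith : (0:ℝ) ≤ c0 - 1))
      (by linarith : (0:ℝ) ≤ Z - z)]
  have m2 : K * (Z - c0) * (z - 1) ≤ Q * (Z - 1) * (z - 1) :=
    mul_le_mul_of_nonneg_right hS2 (by linarith)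
  have m4 : K * (z - c0) ≤ Q * (z - 1) := by
    apply le_of_mul_le_mul_right ?_ hZ1
    calc K * (z - c0) * (Z - 1) ≤ Q * (Z - 1) * (z - 1) := le_trans m1 m2
      _ = Q * (z - 1) * (Z - 1) := by ring
  have hid : A * (z * er - c0 * er + c0 - 1) = A * (z - 1) + K * (z - c0) := by
    rw [hK]; ring
  linarith

set_option maxHeartbeats 2000000 in
/-- For `H ≥ (e/(e-1))·max(V+v, v/r)`, (a) a water-filling step augmenting the universal
schedule `U_V` by a job of volume `v` and requirement `r` with target completion time `H`
succeeds, and (b) the augmented schedule is flatter than the universal schedule `U_{V+v}`. -/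
theorem stmt6 (V v r H : ℝ) (hV : 0 ≤ V) (hv : 0 < v) (hr0 : 0 < r) (hr1 : r ≤ 1)
    (hH : Real.exp 1 / (Real.exp 1 - 1) * max (V + v) (v / r) ≤ H) :
    (v ≤ ∫ t in (0:ℝ)..H, min r (1 - univSched V t)) ∧
    Flatter
      (fun t => univSched V t +
        if t < H then min r (max (waterLevel (univSched V) v r H - univSched V t) 0) else 0)
      (univSched (V + v)) := by
  have hE := em1_pos
  have hVv : 0 < V + v := by linarith
  have hH1 : Real.exp 1 * (V + v) / (Real.exp 1 - 1) ≤ H := by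
    refine le_trans ?_ hH
    rw [show Real.exp 1 * (V + v) / (Real.exp 1 - 1)
        = Real.exp 1 / (Real.exp 1 - 1) * (V + v) by ring]
    exact mul_le_mul_of_nonneg_left (le_max_left _ _)
      (le_of_lt (div_pos (Real.exp_pos 1) hE))
  have hH2 : Real.exp 1 * V / (Real.exp 1 - 1) ≤ H := by
    refine le_trans ?_ hH1
    rw [div_le_div_iff₀ hE hE]
    nlinarith [Real.exp_pos 1, mul_le_mul_of_nonneg_right
      (mul_le_mul_of_nonneg_left (show V ≤ V + v by linarith) (Real.exp_pos 1).le) hE.le]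
  have hH0 : 0 < H := lt_of_lt_of_le (div_pos (by positivity) hE) hH1
  -- part (a)
  have hga := int_g_r_le (h := 1) hV hr0 le_rfl hr1 hH2 hH0.le
  have hpartA : v ≤ ∫ t in (0:ℝ)..H, min r (max (1 - univSched V t) 0) := by
    rw [hga]
    have h2 := partA_ineq hV hv hr0 hr1 hH
    have h3 : Real.exp (1 - (1:ℝ)) = 1 := by norm_num
    rw [h3]
    linarith
  have hpartA' : v ≤ ∫ t in (0:ℝ)..H, min r (1 - univSched V t) := by
    refine le_trans hpartA (le_of_eq ?_)
    apply integral_congr_Ioo hH0.le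
    intro t _
    rw [max_eq_left (by linarith [univSched_le_one hV t])]
  obtain ⟨⟨hh0, hh1⟩, hgv⟩ := waterLevel_spec hV hv hr0 hpartA hH0
  refine ⟨hpartA', ?_⟩
  intro C hC y hy
  obtain ⟨hy0, hy1⟩ := hy
  set h := waterLevel (univSched V) v r H with hhdef
  show (∫ t in (0:ℝ)..C,
      max ((univSched V t + if t < H then min r (max (h - univSched V t) 0) else 0) - y) 0)
      ≤ ∫ t in (0:ℝ)..C, max (univSched (V + v) t - y) 0
  by_cases hyh : h ≤ y
  · -- pointwise comparison
    apply intervalIntegral.integral_mono_on hC (psiW_intble hV hr0.le hr1 hy0 0 C)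
      (psiU_intble hVv.le hy0 0 C)
    intro x _
    rcases le_or_gt
      (univSched V x + if x < H then min r (max (h - univSched V x) 0) else 0) y with hle | hgt
    · rw [max_eq_right (by linarith)]
      exact le_max_right _ _
    · have hhu : h ≤ univSched V x := by
        by_contra hc
        push_neg at hc
        have hWle : univSched V x + (if x < H then min r (max (h - univSched V x) 0) else 0)
            ≤ h := by
          split_ifs with hxH
          · rw [max_eq_left (by linarith)]
            linarith [min_le_right r (h - univSched V x)]
          · linarith
        linarith
      have hW_eq : (if x < H then min r (max (h - univSched V x) 0) else 0) = 0 := by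
        split_ifs with hxH
        · rw [max_eq_right (by linarith), min_eq_right hr0.le]
        · rfl
      rw [hW_eq, add_zero]
      exact max_le_max (sub_le_sub_right (univSched_mono_V hV (by linarith) x) y) le_rfl
  · push_neg at hyh
    -- KEY inequality on [0, H]
    have hKEY : (∫ t in (0:ℝ)..H,
        max ((univSched V t + if t < H then min r (max (h - univSched V t) 0) else 0) - y) 0)
        ≤ ∫ t in (0:ℝ)..H, max (univSched (V + v) t - y) 0 := by
      rw [int_psi_full hVv hy0 hy1 hH1]
      rcases le_or_gt y (min r h) with hylow | hyhigh
      · -- low case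
        have hcongr : ∀ t ∈ Set.Ioo (0:ℝ) H,
            max ((univSched V t + if t < H then min r (max (h - univSched V t) 0) else 0) - y) 0
              = (univSched V t + if t < H then min r (max (h - univSched V t) 0) else 0) - y := by
          intro t ht
          apply max_eq_left
          rw [if_pos ht.2]
          rcases le_total h (univSched V t) with hcase | hcase
          · have : min r h ≤ h := min_le_right _ _
            have h9 : (0:ℝ) ≤ min r (max (h - univSched V t) 0) :=
              le_min hr0.le (le_max_right _ _)
            linarith
          · rw [max_eq_left (by linarith)]
            rcases le_total r (h - univSched V t) with hm | hm
            · rw [min_eq_left hm]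
              have : min r h ≤ r := min_le_left _ _
              linarith [univSched_nonneg hV t]
            · rw [min_eq_right hm]
              have : min r h ≤ h := min_le_right _ _
              linarith
        have hWeq : (∫ t in (0:ℝ)..H,
            max ((univSched V t + if t < H then min r (max (h - univSched V t) 0) else 0) - y) 0)
            = V + v - y * H := by
          rw [integral_congr_Ioo hH0.le hcongr,
            intervalIntegral.integral_sub (Wfun_intble hV hr0.le 0 H) intervalIntegrable_const,
            intervalIntegral.integral_add (U_intble hV 0 H) (ite_g_intble hr0.le 0 H),
            int_U_full hV hH2]
          have hite : (∫ t in (0:ℝ)..H,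
              (if t < H then min r (max (h - univSched V t) 0) else 0)) = v := by
            rw [integral_congr_Ioo hH0.le
              (g := fun t => min r (max (h - univSched V t) 0)) (fun t ht => if_pos ht.2)]
            exact hgv
          rw [hite, intervalIntegral.integral_const]
          simp only [smul_eq_mul, sub_zero]
          ring
        rw [hWeq]
        exact caseLow_ineq hVv hy0 hH1
      · -- middle case : min r h < y < h, so r < y and r < h
        have hminr : min r h = r := by
          rcases le_total r h with hm | hm
          · exact min_eq_left hm
          · rw [min_eq_right hm] at hyhigh
            linarith
        have hry : r < y := by rw [hminr] at hyhigh; exact hyhigh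
        have hrh : r < h := lt_trans hry hyh
        rw [int_psi_W_mid hV hr0 hry hyh hh1 hH2 hH0.le]
        set A := V / (Real.exp 1 - 1) with hA
        set P' := (V + v) / (Real.exp 1 - 1) with hP'
        have hA0 : 0 ≤ A := div_nonneg hV hE.le
        have hAe : A * (Real.exp 1 - 1) = V := div_mul_cancel₀ _ (ne_of_gt hE)
        have hveq : v = r * H - A * Real.exp (1 - h) * (Real.exp r - 1) := by
          have := int_g_r_le hV hr0 hh1 hrh.le hH2 hH0.le
          rw [hgv] at this
          rw [this, hA]
        have hstep1 : (V + v) - r * H ≤ P' * (Real.exp (1 - r) - 1) := by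
          have := caseLow_ineq hVv hr0.le hH1
          rw [hP']
          linarith
        have hQ0 : 0 ≤ P' - A := by
          rw [hP', hA, div_sub_div_same]
          have : V + v - V = v := by ring
          rw [this]
          positivity
        have herZ : Real.exp 1 = Real.exp r * Real.exp (1 - r) := by
          rw [← Real.exp_add]; ring_nf
        have e2 : A * Real.exp 1 = A * (Real.exp r * Real.exp (1 - r)) := by rw [← herZ]
        have e1 : V + v - r * H
            = A * (Real.exp 1 - 1) - A * Real.exp (1 - h) * (Real.exp r - 1) := by
          rw [hAe]; linarith
        have e4 : A * (Real.exp 1 - 1) - A * Real.exp (1 - h) * (Real.exp r - 1)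
            ≤ P' * (Real.exp (1 - r) - 1) := by linarith
        have hS2 : A * (Real.exp r - 1) * (Real.exp (1 - r) - Real.exp (1 - h))
            ≤ (P' - A) * (Real.exp (1 - r) - 1) := by nlinarith [e4, e2]
        have her : (1:ℝ) ≤ Real.exp r := by nlinarith [Real.add_one_le_exp r]
        have hz : (1:ℝ) < Real.exp (1 - y) := by
          have : (0:ℝ) < 1 - y := by linarith
          calc (1:ℝ) = Real.exp 0 := by rw [Real.exp_zero]
            _ < Real.exp (1 - y) := Real.exp_lt_exp.2 this
        have hzZ : Real.exp (1 - y) ≤ Real.exp (1 - r) := Real.exp_le_exp.2 (by linarith)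
        have hc1 : (1:ℝ) ≤ Real.exp (1 - h) := by nlinarith [Real.add_one_le_exp (1 - h)]
        have hmid := caseMid_ineq hA0 hQ0 her hz hzZ hc1 hS2
        have hzer : Real.exp (1 + r - y) = Real.exp (1 - y) * Real.exp r := by
          rw [← Real.exp_add]; ring_nf
        have hcer : Real.exp (1 + r - h) = Real.exp (1 - h) * Real.exp r := by
          rw [← Real.exp_add]; ring_nf
        rw [hzer, hcer]
        nlinarith [hmid]
    -- single-crossing reduction
    by_cases hex : ∃ s ∈ Set.Icc (0:ℝ) C, univSched (V + v) s
        < univSched V s + (if s < H then min r (max (h - univSched V s) 0) else 0)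
    · obtain ⟨s, hsmem, hslt⟩ := hex
      set L := max C H with hL
      have hCL : C ≤ L := le_max_left _ _
      have hHL : H ≤ L := le_max_right _ _
      have hp_CL : ∀ x ∈ Set.Icc C L,
          max (univSched (V + v) x - y) 0
            ≤ max ((univSched V x + if x < H then min r (max (h - univSched V x) 0) else 0) - y) 0 := by
        intro x hx
        have := single_cross hV hv hr0 hh1 hH1 s x hsmem.1 (le_trans hsmem.2 hx.1) hslt
        exact max_le_max (by linarith) le_rfl
      have hp_HL : ∀ x ∈ Set.Icc H L,
          max ((univSched V x + if x < H then min r (max (h - univSched V x) 0) else 0) - y) 0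
            ≤ max (univSched (V + v) x - y) 0 := by
        intro x hx
        rw [if_neg (not_lt.2 hx.1), add_zero]
        exact max_le_max (sub_le_sub_right (univSched_mono_V hV (by linarith) x) y) le_rfl
      have i1 : (∫ t in C..L, max (univSched (V + v) t - y) 0)
          ≤ ∫ t in C..L,
            max ((univSched V t + if t < H then min r (max (h - univSched V t) 0) else 0) - y) 0 :=
        intervalIntegral.integral_mono_on hCL (psiU_intble hVv.le hy0 C L)
          (psiW_intble hV hr0.le hr1 hy0 C L) hp_CL
      have i2 : (∫ t in H..L,
            max ((univSched V t + if t < H then min r (max (h - univSched V t) 0) else 0) - y) 0)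
          ≤ ∫ t in H..L, max (univSched (V + v) t - y) 0 :=
        intervalIntegral.integral_mono_on hHL (psiW_intble hV hr0.le hr1 hy0 H L)
          (psiU_intble hVv.le hy0 H L) hp_HL
      have s1 := intervalIntegral.integral_add_adjacent_intervals
        (psiW_intble hV hr0.le hr1 hy0 (V := V) (r := r) (h := h) (H := H) 0 C)
        (psiW_intble hV hr0.le hr1 hy0 C L)
      have s2 := intervalIntegral.integral_add_adjacent_intervals
        (psiW_intble hV hr0.le hr1 hy0 (V := V) (r := r) (h := h) (H := H) 0 H)
        (psiW_intble hV hr0.le hr1 hy0 H L)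
      have s3 := intervalIntegral.integral_add_adjacent_intervals
        (psiU_intble hVv.le hy0 (W := V + v) (y := y) 0 C) (psiU_intble hVv.le hy0 C L)
      have s4 := intervalIntegral.integral_add_adjacent_intervals
        (psiU_intble hVv.le hy0 (W := V + v) (y := y) 0 H) (psiU_intble hVv.le hy0 H L)
      linarith
    · push_neg at hex
      apply intervalIntegral.integral_mono_on hC (psiW_intble hV hr0.le hr1 hy0 0 C)
        (psiU_intble hVv.le hy0 0 C)
      intro x hx
      exact max_le_max (by linarith [hex x hx]) le_rfl
end
end

section
/- For every n ≥ 1 and every sequence of jobs (v_j, r_j)_{j=1}^n with v_j > 0 and r_j ∈ (0,1], there exists a feasible schedule R = (R_j)_{j=1}^n such that for every j ∈ {1,…,n}, C_j(R) ≤ (e/(e−1))·max(Σ_{i=1}^j v_i, max_{1≤i≤j} v_i/r_i). (The water-filling algorithm achieves competitive ratio e/(e−1) for online makespan minimization in the list-scheduling model: every prefix's completion times stay within e/(e−1) of that prefix's optimal makespan.) -/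
open MeasureTheory Set ENNReal

noncomputable section

namespace Stmt7Aux

open scoped Classical

variable {n m : ℕ}

/-- Residual reachability (with depth) in the bipartite transportation network. -/
inductive ReachN (b x : Fin n → Fin m → ℝ) (j₀ : Fin n) : ℕ → (Fin n ⊕ Fin m) → Prop
  | base : ReachN b x j₀ 0 (Sum.inl j₀)
  | fwd {d : ℕ} {j : Fin n} {k : Fin m} :
      ReachN b x j₀ d (Sum.inl j) → x j k < b j k → ReachN b x j₀ (d+1) (Sum.inr k)
  | bwd {d : ℕ} {j : Fin n} {k : Fin m} :
      ReachN b x j₀ d (Sum.inr k) → 0 < x j k → ReachN b x j₀ (d+1) (Sum.inl j)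

lemma ReachN.mono {b x x' : Fin n → Fin m → ℝ} {j₀ : Fin n}
    (h1 : ∀ j k, x j k < b j k → x' j k < b j k)
    (h2 : ∀ j k, 0 < x j k → 0 < x' j k) :
    ∀ {d : ℕ} {s : Fin n ⊕ Fin m}, ReachN b x j₀ d s → ReachN b x' j₀ d s := by
  intro d s h
  induction h with
  | base => exact .base
  | fwd h he ih => exact .fwd ih (h1 _ _ he)
  | bwd h he ih => exact .bwd ih (h2 _ _ he)

/-- total flow -/
def Fl (x : Fin n → Fin m → ℝ) : ℝ := ∑ j, ∑ k, x j k

def Feas (v : Fin n → ℝ) (c : Fin m → ℝ) (b x : Fin n → Fin m → ℝ) : Prop :=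
  (∀ j k, 0 ≤ x j k) ∧ (∀ j k, x j k ≤ b j k) ∧
  (∀ k, ∑ j, x j k ≤ c k) ∧ (∀ j, ∑ k, x j k ≤ v j)

/-- single-entry additive update -/
def upd (x : Fin n → Fin m → ℝ) (j : Fin n) (k : Fin m) (δ : ℝ) : Fin n → Fin m → ℝ :=
  fun a b' => x a b' + (if a = j ∧ b' = k then δ else 0)

lemma upd_apply (x : Fin n → Fin m → ℝ) (j : Fin n) (k : Fin m) (δ : ℝ) (a : Fin n) (b' : Fin m) :
    upd x j k δ a b' = x a b' + (if a = j ∧ b' = k then δ else 0) := rfl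

lemma upd_row (x : Fin n → Fin m → ℝ) (j : Fin n) (k : Fin m) (δ : ℝ) (a : Fin n) :
    ∑ k', upd x j k δ a k' = (∑ k', x a k') + (if a = j then δ else 0) := by
  simp only [upd]
  rw [Finset.sum_add_distrib]
  by_cases h : a = j <;> simp [h]

lemma upd_col (x : Fin n → Fin m → ℝ) (j : Fin n) (k : Fin m) (δ : ℝ) (k' : Fin m) :
    ∑ a, upd x j k δ a k' = (∑ a, x a k') + (if k' = k then δ else 0) := by
  simp only [upd]
  rw [Finset.sum_add_distrib]
  by_cases h : k' = k <;> simp [h]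

lemma upd_Fl (x : Fin n → Fin m → ℝ) (j : Fin n) (k : Fin m) (δ : ℝ) :
    Fl (upd x j k δ) = Fl x + δ := by
  unfold Fl
  rw [Finset.sum_congr rfl (fun a _ => upd_row x j k δ a), Finset.sum_add_distrib]
  simp

/-- augmenting one edge directly -/
lemma augment_one (v : Fin n → ℝ) (c : Fin m → ℝ) (b : Fin n → Fin m → ℝ)
    (x : Fin n → Fin m → ℝ) (hx : Feas v c b x) (j : Fin n) (k : Fin m)
    (hdef : ∑ k', x j k' < v j) (hedge : x j k < b j k) (hunsat : ∑ a, x a k < c k) :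
    ∃ x', Feas v c b x' ∧ Fl x < Fl x' := by
  obtain ⟨hx0, hxb, hxc, hxv⟩ := hx
  set ε : ℝ := min (min ((b j k - x j k)/2) ((c k - ∑ a, x a k)/2)) ((v j - ∑ k', x j k')/2)
    with hεdef
  have hεb : ε ≤ (b j k - x j k)/2 := le_trans (min_le_left _ _) (min_le_left _ _)
  have hεc : ε ≤ (c k - ∑ a, x a k)/2 := le_trans (min_le_left _ _) (min_le_right _ _)
  have hεv : ε ≤ (v j - ∑ k', x j k')/2 := min_le_right _ _
  have hε0 : 0 < ε :=
    lt_min (lt_min (by linarith) (by linarith)) (by linarith)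
  refine ⟨upd x j k ε, ⟨?_, ?_, ?_, ?_⟩, ?_⟩
  · intro a b'
    rw [upd_apply]
    by_cases h : a = j ∧ b' = k
    · rw [if_pos h]; linarith [hx0 a b']
    · rw [if_neg h]; simpa using hx0 a b'
  · intro a b'
    rw [upd_apply]
    by_cases h : a = j ∧ b' = k
    · obtain ⟨h1, h2⟩ := h; subst h1; subst h2
      rw [if_pos ⟨rfl, rfl⟩]; linarith
    · rw [if_neg h]; simpa using hxb a b'
  · intro k'
    rw [upd_col]
    by_cases h : k' = k
    · subst h; rw [if_pos rfl]; linarith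
    · rw [if_neg h]; simpa using hxc k'
  · intro a
    rw [upd_row]
    by_cases h : a = j
    · subst h; rw [if_pos rfl]; linarith
    · rw [if_neg h]; simpa using hxv a
  · rw [upd_Fl]; linarith

/-- The augmenting lemma: if some column reachable from a deficient row is unsaturated,
the total flow is not maximal. -/
lemma augment (v : Fin n → ℝ) (c : Fin m → ℝ) (b : Fin n → Fin m → ℝ) (j₀ : Fin n) :
    ∀ d : ℕ, ∀ x : Fin n → Fin m → ℝ, Feas v c b x → (∑ k, x j₀ k < v j₀) →
    ∀ k : Fin m, ReachN b x j₀ d (Sum.inr k) → (∑ j, x j k < c k) →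
    ∃ x', Feas v c b x' ∧ Fl x < Fl x' := by
  intro d
  induction d using Nat.strong_induction_on with
  | _ d ih =>
    intro x hx hdef k hreach hunsat
    obtain ⟨hx0, hxb, hxc, hxv⟩ := hx
    cases hreach with
    | @fwd d' j _ hj hedge =>
      cases hj with
      | base =>
        exact augment_one v c b x ⟨hx0, hxb, hxc, hxv⟩ _ _ hdef hedge hunsat
      | @bwd d'' _ k' hk' hpos =>
        by_cases hkk : k' = k
        · subst hkk
          exact ih d'' (by omega) x ⟨hx0, hxb, hxc, hxv⟩ hdef k' hk' hunsat
        -- reroute ε from (j,k') to (j,k)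
        set ε : ℝ := min (min ((b j k - x j k)/2) ((c k - ∑ j', x j' k)/2)) ((x j k')/2)
          with hεdef
        have hεb : ε ≤ (b j k - x j k)/2 := le_trans (min_le_left _ _) (min_le_left _ _)
        have hεc : ε ≤ (c k - ∑ j', x j' k)/2 := le_trans (min_le_left _ _) (min_le_right _ _)
        have hεk' : ε ≤ (x j k')/2 := min_le_right _ _
        have hε0 : 0 < ε :=
          lt_min (lt_min (by linarith) (by linarith)) (by linarith)
        set y := upd (upd x j k ε) j k' (-ε) with hy
        have hyval : ∀ a b', y a b' = x a b' + (if a = j ∧ b' = k then ε else 0)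
            + (if a = j ∧ b' = k' then -ε else 0) := by
          intro a b'; rw [hy, upd_apply, upd_apply]
        have hy0 : ∀ a b', 0 ≤ y a b' := by
          intro a b'
          rw [hyval a b']
          by_cases h1 : a = j ∧ b' = k'
          · have hne : ¬(a = j ∧ b' = k) := by
              rintro ⟨-, h2⟩; exact hkk (by rw [← h1.2, h2])
            rw [if_pos h1, if_neg hne]
            have hxx : x a b' = x j k' := by rw [h1.1, h1.2]
            rw [hxx]; linarith
          · rw [if_neg h1]
            by_cases h2 : a = j ∧ b' = k
            · rw [if_pos h2]; linarith [hx0 a b']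
            · rw [if_neg h2]; simpa using hx0 a b'
        have hyb : ∀ a b', y a b' ≤ b a b' := by
          intro a b'
          rw [hyval a b']
          by_cases h2 : a = j ∧ b' = k
          · have hne : ¬(a = j ∧ b' = k') := by
              rintro ⟨-, h1⟩; exact hkk (by rw [← h1, h2.2])
            rw [if_pos h2, if_neg hne]
            have hx' : x a b' = x j k := by rw [h2.1, h2.2]
            have hb' : b a b' = b j k := by rw [h2.1, h2.2]
            rw [hx', hb']; linarith
          · rw [if_neg h2]
            by_cases h1 : a = j ∧ b' = k'
            · rw [if_pos h1]; linarith [hxb a b']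
            · rw [if_neg h1]; simpa using hxb a b'
        have hyc : ∀ k'', ∑ a, y a k'' ≤ c k'' := by
          intro k''
          have hcol : ∑ a, y a k'' =
              ((∑ a, x a k'') + (if k'' = k then ε else 0)) + (if k'' = k' then -ε else 0) := by
            rw [hy, upd_col, upd_col]
          rw [hcol]
          by_cases h1 : k'' = k
          · have hne : ¬ k'' = k' := fun h => hkk (by rw [← h, h1])
            rw [if_pos h1, if_neg hne, h1]
            linarith
          · rw [if_neg h1]
            by_cases h2 : k'' = k'
            · rw [if_pos h2, h2]
              linarith [hxc k']
            · rw [if_neg h2]; simpa using hxc k''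
        have hyrow : ∀ a, ∑ k'', y a k'' = ∑ k'', x a k'' := by
          intro a
          rw [hy, upd_row, upd_row]
          by_cases h : a = j
          · rw [if_pos h, if_pos h]; ring
          · rw [if_neg h, if_neg h]; ring
        have hyv : ∀ a, ∑ k'', y a k'' ≤ v a := fun a => (hyrow a) ▸ hxv a
        have hyFl : Fl y = Fl x := by
          rw [hy, upd_Fl, upd_Fl]; ring
        have hreach' : ReachN b y j₀ d'' (Sum.inr k') := by
          refine ReachN.mono ?_ ?_ hk'
          · intro a b' hlt
            have := hyb a b'
            rcases lt_or_eq_of_le this with h | h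
            · exact h
            -- y a b' = b a b' : only possible if entry untouched or the k-entry; handle by cases
            · rw [hyval a b'] at h ⊢
              by_cases h2 : a = j ∧ b' = k
              · have hne : ¬(a = j ∧ b' = k') := by
                  rintro ⟨-, h1⟩; exact hkk (by rw [← h1, h2.2])
                rw [if_pos h2, if_neg hne] at h ⊢
                have hx' : x a b' = x j k := by rw [h2.1, h2.2]
                have hb' : b a b' = b j k := by rw [h2.1, h2.2]
                rw [hx', hb'] at h ⊢
                linarith
              · rw [if_neg h2] at h ⊢
                by_cases h1 : a = j ∧ b' = k'
                · rw [if_pos h1] at h ⊢; linarith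
                · rw [if_neg h1] at h ⊢; simpa using hlt
          · intro a b' hlt
            rw [hyval a b']
            by_cases h1 : a = j ∧ b' = k'
            · have hne : ¬(a = j ∧ b' = k) := by
                rintro ⟨-, h2⟩; exact hkk (by rw [← h1.2, h2])
              rw [if_pos h1, if_neg hne]
              have hx' : x a b' = x j k' := by rw [h1.1, h1.2]
              rw [hx']; linarith
            · rw [if_neg h1]
              by_cases h2 : a = j ∧ b' = k
              · rw [if_pos h2]; linarith
              · rw [if_neg h2]; simpa using hlt
        have hdef' : ∑ k'', y j₀ k'' < v j₀ := by rw [hyrow]; exact hdef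
        have hunsat' : ∑ a, y a k' < c k' := by
          have hcol : ∑ a, y a k' =
              ((∑ a, x a k') + (if k' = k then ε else 0)) + (if k' = k' then -ε else 0) := by
            rw [hy, upd_col, upd_col]
          rw [hcol, if_neg hkk, if_pos rfl]
          linarith [hxc k']
        obtain ⟨x', hx', hFl⟩ := ih d'' (by omega) y ⟨hy0, hyb, hyc, hyv⟩ hdef' k' hreach' hunsat'
        exact ⟨x', hx', by rw [← hyFl]; exact hFl⟩

/-- Feasibility of the finite transportation problem under the cut condition. -/
theorem transport (v : Fin n → ℝ) (c : Fin m → ℝ) (b : Fin n → Fin m → ℝ)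
    (hv : ∀ j, 0 ≤ v j) (hc : ∀ k, 0 ≤ c k) (hb : ∀ j k, 0 ≤ b j k)
    (hcut : ∀ S : Finset (Fin n), ∑ j ∈ S, v j ≤ ∑ k, min (c k) (∑ j ∈ S, b j k)) :
    ∃ x : Fin n → Fin m → ℝ, Feas v c b x ∧ ∀ j, ∑ k, x j k = v j := by
  -- the feasible set
  set P : Set (Fin n → Fin m → ℝ) := {x | Feas v c b x} with hP
  have hPne : P.Nonempty := by
    refine ⟨fun _ _ => 0, ⟨fun j k => le_refl 0, fun j k => hb j k, ?_, ?_⟩⟩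
    · intro k; simpa using hc k
    · intro j; simpa using hv j
  have hPsub : P ⊆ Set.Icc (fun _ _ => (0:ℝ)) b := by
    rintro x ⟨h0, hbb, -, -⟩
    constructor
    · intro j; intro k; exact h0 j k
    · intro j; intro k; exact hbb j k
  have hPclosed : IsClosed P := by
    have h1 : P = (⋂ j, ⋂ k, {x : Fin n → Fin m → ℝ | 0 ≤ x j k}) ∩
        ((⋂ j, ⋂ k, {x : Fin n → Fin m → ℝ | x j k ≤ b j k}) ∩
        ((⋂ k, {x : Fin n → Fin m → ℝ | ∑ j, x j k ≤ c k}) ∩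
        (⋂ j, {x : Fin n → Fin m → ℝ | ∑ k, x j k ≤ v j}))) := by
      ext x
      simp only [Set.mem_inter_iff, Set.mem_iInter, Set.mem_setOf_eq, hP]
      constructor
      · rintro ⟨a1, a2, a3, a4⟩; exact ⟨a1, a2, a3, a4⟩
      · rintro ⟨a1, a2, a3, a4⟩; exact ⟨a1, a2, a3, a4⟩
    rw [h1]
    have capp : ∀ (j : Fin n) (k : Fin m), Continuous fun x : Fin n → Fin m → ℝ => x j k :=
      fun j k => (continuous_apply k).comp (continuous_apply j)
    refine IsClosed.inter ?_ (IsClosed.inter ?_ (IsClosed.inter ?_ ?_))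
    · exact isClosed_iInter fun j => isClosed_iInter fun k =>
        isClosed_le continuous_const (capp j k)
    · exact isClosed_iInter fun j => isClosed_iInter fun k =>
        isClosed_le (capp j k) continuous_const
    · exact isClosed_iInter fun k =>
        isClosed_le (continuous_finset_sum _ fun j _ => capp j k) continuous_const
    · exact isClosed_iInter fun j =>
        isClosed_le (continuous_finset_sum _ fun k _ => capp j k) continuous_const
  have hPcompact : IsCompact P :=
    IsCompact.of_isClosed_subset isCompact_Icc hPclosed hPsub
  have hFlcont : Continuous (Fl (n := n) (m := m)) :=
    continuous_finset_sum _ fun j _ => continuous_finset_sum _ fun k _ =>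
      (continuous_apply k).comp (continuous_apply j)
  obtain ⟨x, hxP, hxmax⟩ := hPcompact.exists_isMaxOn hPne hFlcont.continuousOn
  obtain ⟨hx0, hxb, hxc, hxv⟩ := hxP
  refine ⟨x, ⟨hx0, hxb, hxc, hxv⟩, ?_⟩
  by_contra hcon
  push_neg at hcon
  obtain ⟨j₀, hj₀⟩ := hcon
  have hdef : ∑ k, x j₀ k < v j₀ := lt_of_le_of_ne (hxv j₀) hj₀
  -- no reachable column is unsaturated
  have hnounsat : ∀ k, (∃ d, ReachN b x j₀ d (Sum.inr k)) → ∑ j, x j k = c k := by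
    rintro k ⟨d, hreach⟩
    refine le_antisymm (hxc k) ?_
    by_contra hlt
    push_neg at hlt
    obtain ⟨x', hx', hFl⟩ := augment v c b j₀ d x ⟨hx0, hxb, hxc, hxv⟩ hdef k hreach hlt
    exact absurd (hxmax hx') (not_le.mpr hFl)
  -- reach sets
  set A : Finset (Fin n) := Finset.univ.filter (fun j => ∃ d, ReachN b x j₀ d (Sum.inl j))
    with hA
  have hj₀A : j₀ ∈ A := by
    rw [hA, Finset.mem_filter]
    exact ⟨Finset.mem_univ _, 0, .base⟩
  have hkey : ∀ k, min (c k) (∑ j ∈ A, b j k) ≤ ∑ j ∈ A, x j k := by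
    intro k
    by_cases hkB : ∃ d, ReachN b x j₀ d (Sum.inr k)
    · -- saturated column, and all its flow comes from A
      have hz : ∀ j ∉ A, x j k = 0 := by
        intro j hj
        by_contra hne
        have hpos : 0 < x j k := lt_of_le_of_ne (hx0 j k) (Ne.symm hne)
        obtain ⟨d, hd⟩ := hkB
        exact hj (by
          rw [hA, Finset.mem_filter]
          exact ⟨Finset.mem_univ _, d+1, .bwd hd hpos⟩)
      have : ∑ j ∈ A, x j k = ∑ j, x j k :=
        Finset.sum_subset (Finset.subset_univ A) (fun j _ hj => hz j hj)
      rw [this, hnounsat k hkB]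
      exact min_le_left _ _
    · -- unreachable column: every A-row saturates its edge
      have hsat : ∀ j ∈ A, x j k = b j k := by
        intro j hj
        by_contra hne
        have hlt : x j k < b j k := lt_of_le_of_ne (hxb j k) hne
        rw [hA, Finset.mem_filter] at hj
        obtain ⟨-, d, hd⟩ := hj
        exact hkB ⟨d+1, .fwd hd hlt⟩
      calc min (c k) (∑ j ∈ A, b j k) ≤ ∑ j ∈ A, b j k := min_le_right _ _
        _ = ∑ j ∈ A, x j k := by
            exact (Finset.sum_congr rfl fun j hj => (hsat j hj).symm)
  have hlt : ∑ j ∈ A, ∑ k, x j k < ∑ j ∈ A, v j :=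
    Finset.sum_lt_sum (fun j _ => hxv j) ⟨j₀, hj₀A, hdef⟩
  have hge : ∑ j ∈ A, v j ≤ ∑ j ∈ A, ∑ k, x j k := by
    calc ∑ j ∈ A, v j ≤ ∑ k, min (c k) (∑ j ∈ A, b j k) := hcut A
      _ ≤ ∑ k, ∑ j ∈ A, x j k := Finset.sum_le_sum fun k _ => hkey k
      _ = ∑ j ∈ A, ∑ k, x j k := Finset.sum_comm
  exact absurd hge (not_le.mpr hlt)

section Hall

/-- prefix sums -/
def pre (n : ℕ) (v : Fin n → ℝ) (i : ℕ) : ℝ :=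
  ∑ j ∈ Finset.univ.filter (fun j : Fin n => (j : ℕ) < i), v j

lemma pre_zero (n : ℕ) (v : Fin n → ℝ) : pre n v 0 = 0 := by
  simp [pre]

lemma pre_succ (n : ℕ) (v : Fin n → ℝ) (j : Fin n) :
    pre n v ((j : ℕ) + 1) = pre n v (j : ℕ) + v j := by
  unfold pre
  have hins : Finset.univ.filter (fun j' : Fin n => (j' : ℕ) < (j : ℕ) + 1) =
      insert j (Finset.univ.filter (fun j' : Fin n => (j' : ℕ) < (j : ℕ))) := by
    ext j'
    simp only [Finset.mem_filter, Finset.mem_univ, true_and, Finset.mem_insert,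
      Nat.lt_succ_iff_lt_or_eq]
    constructor
    · rintro (h | h)
      · exact Or.inr h
      · exact Or.inl (Fin.ext h)
    · rintro (h | h)
      · exact Or.inr (by rw [h])
      · exact Or.inl h
  rw [hins, Finset.sum_insert (by simp)]
  ring

lemma pre_mono (n : ℕ) (v : Fin n → ℝ) (hv : ∀ j, 0 < v j) : Monotone (pre n v) := by
  intro i i' h
  apply Finset.sum_le_sum_of_subset_of_nonneg
  · intro j hj
    rw [Finset.mem_filter] at hj ⊢
    exact ⟨hj.1, lt_of_lt_of_le hj.2 h⟩
  · intro j _ _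
    exact (hv j).le

lemma pre_nonneg (n : ℕ) (v : Fin n → ℝ) (hv : ∀ j, 0 < v j) (i : ℕ) : 0 ≤ pre n v i := by
  rw [← pre_zero n v]
  exact pre_mono n v hv (Nat.zero_le i)

lemma pre_succ_pos (n : ℕ) (v : Fin n → ℝ) (hv : ∀ j, 0 < v j) (j : Fin n) :
    0 < pre n v ((j : ℕ) + 1) := by
  rw [pre_succ]
  have := pre_nonneg n v hv (j : ℕ)
  linarith [hv j]

/-- The key analytic lemma: the mandatory-work ("Hall") inequality for deadlines
`D j ≥ ρ·OPT j` with `ρ = e/(e-1)`. -/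
lemma hall {n : ℕ} (v r D : Fin n → ℝ) (hv : ∀ j, 0 < v j) (hr0 : ∀ j, 0 < r j)
    (hrD : ∀ j, (Real.exp 1 / (Real.exp 1 - 1)) * v j ≤ r j * D j)
    (hVD : ∀ j : Fin n, (Real.exp 1 / (Real.exp 1 - 1)) * pre n v ((j : ℕ) + 1) ≤ D j)
    (a : ℝ) (ha : 0 ≤ a) :
    ∑ j, max (v j - r j * max (D j - a) 0) 0 ≤ a := by
  set e := Real.exp 1 with hedef
  have he1 : (1:ℝ) < e := by
    have := Real.exp_one_gt_d9
    rw [hedef]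
    linarith
  have he0 : (0:ℝ) < e - 1 := by linarith
  set ρ : ℝ := e / (e - 1) with hρdef
  have hρ1 : 1 < ρ := by
    rw [hρdef, lt_div_iff₀ he0]
    linarith
  have hρ0 : 0 < ρ := by linarith
  -- dispose of the case a = 0
  rcases eq_or_lt_of_le ha with rfl | ha0
  · have : ∀ j : Fin n, max (v j - r j * max (D j - 0) 0) 0 = 0 := by
      intro j
      have hDj : 0 < D j := by
        have h1 := hrD j
        have h2 := hv j
        nlinarith [hr0 j]
      rw [max_eq_right]
      have : max (D j - 0) 0 = D j := by
        rw [sub_zero, max_eq_left hDj.le]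
      rw [this]
      nlinarith [hrD j, hv j, hr0 j]
    rw [Finset.sum_congr rfl (fun j _ => this j)]
    simp
  -- main case a > 0
  set g : ℝ → ℝ := fun s => if s ≤ 0 then 1 else min 1 (max 0 (1 - ρ + a / s)) with hgdef
  have hg_le_one : ∀ s, g s ≤ 1 := by
    intro s
    rw [hgdef]
    by_cases h : s ≤ 0
    · simp [h]
    · simp only [if_neg h]
      exact min_le_left _ _
  have hg_nonneg : ∀ s, 0 ≤ g s := by
    intro s
    rw [hgdef]
    by_cases h : s ≤ 0
    · simp [h]
    · simp only [if_neg h]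
      exact le_min one_pos.le (le_max_left _ _)
  have hg_anti : Antitone g := by
    intro s t hst
    rw [hgdef]
    by_cases ht : t ≤ 0
    · have hs : s ≤ 0 := le_trans hst ht
      simp [hs, ht]
    · simp only [if_neg ht]
      by_cases hs : s ≤ 0
      · simp only [if_pos hs]
        exact min_le_left _ _
      · simp only [if_neg hs]
        push_neg at hs ht
        refine min_le_min le_rfl (max_le_max le_rfl ?_)
        have : a / t ≤ a / s := by
          apply div_le_div_of_nonneg_left ha0.le hs hst
        linarith
  have hg_one : ∀ s, ρ * s ≤ a → g s = 1 := by
    intro s hs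
    rw [hgdef]
    by_cases h : s ≤ 0
    · simp [h]
    · push_neg at h
      simp only [if_neg (not_le.mpr h)]
      have h1 : ρ ≤ a / s := (le_div_iff₀ h).mpr (by linarith [hs])
      have h2 : (1:ℝ) ≤ 1 - ρ + a / s := by linarith
      rw [max_eq_right (by linarith), min_eq_left h2]
  have hg_zero : ∀ s, (e - 1) * a ≤ s → g s = 0 := by
    intro s hs
    have hspos : 0 < s := lt_of_lt_of_le (by positivity) hs
    rw [hgdef]
    simp only [if_neg (not_le.mpr hspos)]
    have h1 : a / s ≤ 1 / (e - 1) := by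
      rw [div_le_div_iff₀ hspos he0]
      linarith
    have h2 : ρ - 1 = 1 / (e - 1) := by
      rw [hρdef]
      field_simp
      ring
    have h3 : 1 - ρ + a / s ≤ 0 := by
      rw [← h2] at h1
      linarith
    rw [max_eq_left h3, min_eq_right zero_le_one]
  -- per-job bound
  have hper : ∀ j : Fin n, max (v j - r j * max (D j - a) 0) 0 ≤
      v j * g (pre n v ((j : ℕ) + 1)) := by
    intro j
    set s := pre n v ((j : ℕ) + 1) with hs
    have hspos : 0 < s := pre_succ_pos n v hv j
    have hvj := hv j
    apply max_le
    · by_cases hDa : D j ≤ a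
      · have h1 : ρ * s ≤ a := le_trans (hVD j) hDa
        rw [hg_one s h1, mul_one]
        have h2 : 0 ≤ r j * max (D j - a) 0 := mul_nonneg (hr0 j).le (le_max_right _ _)
        linarith
      · push_neg at hDa
        have hmax : max (D j - a) 0 = D j - a := max_eq_left (by linarith)
        rw [hmax]
        have hDpos : 0 < D j := lt_trans ha0 hDa
        have hbound1 : v j - r j * (D j - a) ≤ v j := by nlinarith [hr0 j]
        have hbound2 : v j - r j * (D j - a) ≤ v j * (1 - ρ + a / s) := by
          have h1 : ρ * v j * (1 - a / D j) ≤ r j * (D j - a) := by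
            have h2 : ρ * v j ≤ r j * D j := hrD j
            have h3 : (0:ℝ) < 1 - a / D j := by
              rw [sub_pos, div_lt_one hDpos]; exact hDa
            calc ρ * v j * (1 - a / D j) ≤ r j * D j * (1 - a / D j) := by nlinarith
              _ = r j * (D j - a) := by field_simp
          have h4 : ρ * s ≤ D j := hVD j
          have h5 : ρ * v j * a / D j ≤ v j * a / s := by
            rw [div_le_div_iff₀ hDpos hspos]
            nlinarith [mul_le_mul_of_nonneg_left h4 (mul_nonneg hvj.le ha0.le)]
          have expand : v j * (1 - ρ + a / s) = v j - ρ * v j + v j * a / s := by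
            field_simp
          rw [expand]
          have h6 : ρ * v j * (1 - a / D j) = ρ * v j - ρ * v j * a / D j := by
            field_simp
          nlinarith [h1, h5]
        rcases le_total (1 - ρ + a / s) 1 with hX | hX
        · have hgs : g s = max 0 (1 - ρ + a / s) := by
            rw [hgdef]; simp only [if_neg (not_le.mpr hspos)]
            exact min_eq_right (max_le zero_le_one hX)
          rw [hgs]
          rcases le_total (1 - ρ + a / s) 0 with hX0 | hX0
          · rw [max_eq_left hX0]
            nlinarith [hbound2, hvj]
          · rw [max_eq_right hX0]; exact hbound2
        · have hgs : g s = 1 := by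
            rw [hgdef]; simp only [if_neg (not_le.mpr hspos)]
            exact min_eq_left (le_max_of_le_right hX)
          rw [hgs, mul_one]; exact hbound1
    · exact mul_nonneg (hv j).le (hg_nonneg _)
  -- integrability
  have hint : ∀ x y : ℝ, IntervalIntegrable g MeasureTheory.volume x y := by
    intro x y
    exact (hg_anti.antitoneOn _).intervalIntegrable
  -- Riemann bound
  have hRie : ∀ j : Fin n, v j * g (pre n v ((j : ℕ) + 1)) ≤
      ∫ s in (pre n v (j : ℕ))..(pre n v ((j : ℕ) + 1)), g s := by
    intro j
    have hle : pre n v (j : ℕ) ≤ pre n v ((j : ℕ) + 1) := pre_mono n v hv (Nat.le_succ _)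
    have h1 : (∫ _s in (pre n v (j : ℕ))..(pre n v ((j : ℕ) + 1)),
        g (pre n v ((j : ℕ) + 1))) =
        (pre n v ((j : ℕ) + 1) - pre n v (j : ℕ)) * g (pre n v ((j : ℕ) + 1)) := by
      rw [intervalIntegral.integral_const, smul_eq_mul]
    have h2 : v j * g (pre n v ((j : ℕ) + 1)) =
        (pre n v ((j : ℕ) + 1) - pre n v (j : ℕ)) * g (pre n v ((j : ℕ) + 1)) := by
      rw [pre_succ]; ring
    rw [h2, ← h1]
    apply intervalIntegral.integral_mono_on hle intervalIntegrable_const (hint _ _)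
    intro x hx
    exact hg_anti hx.2
  -- telescoping
  have htel : ∀ N : ℕ, (∑ i ∈ Finset.range N, ∫ s in (pre n v i)..(pre n v (i + 1)), g s) =
      ∫ s in (pre n v 0)..(pre n v N), g s := by
    intro N
    induction N with
    | zero => simp
    | succ N ihN =>
      rw [Finset.sum_range_succ, ihN,
        intervalIntegral.integral_add_adjacent_intervals (hint _ _) (hint _ _)]
  -- the explicit integral
  set c1 : ℝ := a * (e - 1) / e with hc1def
  set c2 : ℝ := (e - 1) * a with hc2def
  have hepos : (0:ℝ) < e := by linarith
  have hc1pos : 0 < c1 := by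
    rw [hc1def]; positivity
  have hc12 : c1 ≤ c2 := by
    rw [hc1def, hc2def, div_le_iff₀ hepos]
    nlinarith [mul_nonneg (mul_nonneg ha0.le he0.le) (sub_nonneg.mpr he1.le)]
  have hρc1 : ρ * c1 = a := by
    rw [hρdef, hc1def]
    field_simp
  have hpiece1 : (∫ s in (0:ℝ)..c1, g s) = c1 := by
    have heq : Set.EqOn g (fun _ => (1:ℝ)) (Set.uIcc 0 c1) := by
      intro x hx
      rw [Set.uIcc_of_le hc1pos.le] at hx
      apply hg_one
      have : x ≤ c1 := hx.2
      nlinarith [hρ0]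
    rw [intervalIntegral.integral_congr heq, intervalIntegral.integral_const, smul_eq_mul]
    ring
  have hpiece2 : (∫ s in c1..c2, g s) = (1 - ρ) * (c2 - c1) + a * 1 := by
    have heq : Set.EqOn g (fun s => 1 - ρ + a / s) (Set.uIcc c1 c2) := by
      intro x hx
      rw [Set.uIcc_of_le hc12] at hx
      obtain ⟨hx1, hx2⟩ := hx
      have hxpos : 0 < x := lt_of_lt_of_le hc1pos hx1
      rw [hgdef]
      simp only [if_neg (not_le.mpr hxpos)]
      have hup : 1 - ρ + a / x ≤ 1 := by
        have : a ≤ ρ * x := by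
          calc a = ρ * c1 := hρc1.symm
            _ ≤ ρ * x := by nlinarith
        have : a / x ≤ ρ := (div_le_iff₀ hxpos).mpr (by linarith)
        linarith
      have hdn : 0 ≤ 1 - ρ + a / x := by
        have h2 : ρ - 1 = 1 / (e - 1) := by rw [hρdef]; field_simp; ring
        have h3 : 1 / (e - 1) ≤ a / x := by
          rw [div_le_div_iff₀ he0 hxpos]
          rw [hc2def] at hx2
          linarith
        rw [← h2] at h3
        linarith
      rw [max_eq_right hdn, min_eq_right hup]
    rw [intervalIntegral.integral_congr heq]
    have hderiv : ∀ x ∈ Set.uIcc c1 c2,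
        HasDerivAt (fun s : ℝ => (1 - ρ) * s + a * Real.log s) (1 - ρ + a / x) x := by
      intro x hx
      rw [Set.uIcc_of_le hc12] at hx
      have hxpos : 0 < x := lt_of_lt_of_le hc1pos hx.1
      have h1 : HasDerivAt (fun s : ℝ => (1 - ρ) * s) (1 - ρ) x := by
        simpa using (hasDerivAt_id x).const_mul (1 - ρ)
      have h2 : HasDerivAt (fun s : ℝ => a * Real.log s) (a / x) x := by
        have := (Real.hasDerivAt_log (ne_of_gt hxpos)).const_mul a
        simpa [div_eq_mul_inv] using this
      exact h1.add h2
    have hcont : IntervalIntegrable (fun s : ℝ => 1 - ρ + a / s) MeasureTheory.volume c1 c2 := by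
      apply ContinuousOn.intervalIntegrable
      apply ContinuousOn.add continuousOn_const
      apply ContinuousOn.div continuousOn_const continuousOn_id
      intro x hx
      rw [Set.uIcc_of_le hc12] at hx
      exact ne_of_gt (lt_of_lt_of_le hc1pos hx.1)
    rw [intervalIntegral.integral_eq_sub_of_hasDerivAt hderiv hcont]
    have hc2c1 : c2 = e * c1 := by
      rw [hc1def, hc2def]
      field_simp
    have hlog : Real.log c2 - Real.log c1 = 1 := by
      rw [hc2c1, Real.log_mul (ne_of_gt hepos) (ne_of_gt hc1pos), hedef, Real.log_exp]
      ring
    have : (1 - ρ) * c2 + a * Real.log c2 - ((1 - ρ) * c1 + a * Real.log c1)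
        = (1 - ρ) * (c2 - c1) + a * (Real.log c2 - Real.log c1) := by ring
    rw [this, hlog]
  have hfull : (∫ s in (0:ℝ)..c2, g s) = a := by
    rw [← intervalIntegral.integral_add_adjacent_intervals (hint 0 c1) (hint c1 c2),
      hpiece1, hpiece2]
    have h1 : (1 - ρ) * (c2 - c1) = - c1 := by
      rw [hρdef, hc1def, hc2def]
      field_simp
      ring
    rw [h1]; ring
  -- bound the integral up to B := pre n v n
  have hBbound : (∫ s in (0:ℝ)..(pre n v n), g s) ≤ a := by
    set B := pre n v n with hB
    have hB0 : 0 ≤ B := pre_nonneg n v hv n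
    rcases le_total B c2 with hBc | hBc
    · have : (∫ s in (0:ℝ)..c2, g s) = (∫ s in (0:ℝ)..B, g s) + ∫ s in B..c2, g s :=
        (intervalIntegral.integral_add_adjacent_intervals (hint 0 B) (hint B c2)).symm
      have hpos : 0 ≤ ∫ s in B..c2, g s :=
        intervalIntegral.integral_nonneg hBc (fun x _ => hg_nonneg x)
      rw [hfull] at this
      linarith
    · have hsplit : (∫ s in (0:ℝ)..B, g s) = (∫ s in (0:ℝ)..c2, g s) + ∫ s in c2..B, g s :=
        (intervalIntegral.integral_add_adjacent_intervals (hint 0 c2) (hint c2 B)).symm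
      have hzero : (∫ s in c2..B, g s) = 0 := by
        have heq : Set.EqOn g (fun _ => (0:ℝ)) (Set.uIcc c2 B) := by
          intro x hx
          rw [Set.uIcc_of_le hBc] at hx
          exact hg_zero x hx.1
        rw [intervalIntegral.integral_congr heq]
        simp
      rw [hsplit, hzero, hfull]
      linarith
  -- put everything together
  calc ∑ j, max (v j - r j * max (D j - a) 0) 0
      ≤ ∑ j, v j * g (pre n v ((j : ℕ) + 1)) := Finset.sum_le_sum fun j _ => hper j
    _ ≤ ∑ j : Fin n, ∫ s in (pre n v (j : ℕ))..(pre n v ((j : ℕ) + 1)), g s :=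
        Finset.sum_le_sum fun j _ => hRie j
    _ = ∑ i ∈ Finset.range n, ∫ s in (pre n v i)..(pre n v (i + 1)), g s := by
        rw [Fin.sum_univ_eq_sum_range (fun i => ∫ s in (pre n v i)..(pre n v (i + 1)), g s) n]
    _ = ∫ s in (pre n v 0)..(pre n v n), g s := htel n
    _ ≤ a := by rw [pre_zero]; exact hBbound

end Hall

end Stmt7Aux

/-- A feasible schedule for `n` jobs with volumes `v` and resource requirements `r`. -/
def IsFeasible (n : ℕ) (v r : Fin n → ℝ) (R : Fin n → ℝ → ℝ) : Prop :=
  (∀ j, Integrable (R j)) ∧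
  (∀ j t, 0 ≤ R j t ∧ R j t ≤ 1) ∧
  (∀ j, ∀ t < (0:ℝ), R j t = 0) ∧
  (∀ t, ∑ j, R j t ≤ 1) ∧
  (∀ j t, R j t ≤ r j) ∧
  (∀ j, v j ≤ ∫ t in Ioi (0:ℝ), R j t)

/-- The completion time of job `j` in schedule `R` (in `ℝ≥0∞`). -/
def compTime (n : ℕ) (R : Fin n → ℝ → ℝ) (j : Fin n) : ℝ≥0∞ :=
  ⨆ t ∈ {t : ℝ | 0 < R j t}, ENNReal.ofReal t

/-- Water-filling is `e/(e-1)`-competitive for online makespan minimization: for every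
job sequence there is a feasible schedule in which every job `j` completes within
`e/(e-1)` times the optimal makespan of the prefix `{1,…,j}`. -/
theorem stmt7 (n : ℕ) (hn : 1 ≤ n) (v r : Fin n → ℝ)
    (hv : ∀ j, 0 < v j) (hr : ∀ j, 0 < r j ∧ r j ≤ 1) :
    ∃ R : Fin n → ℝ → ℝ, IsFeasible n v r R ∧
      ∀ j : Fin n,
        compTime n R j ≤
          ENNReal.ofReal (Real.exp 1 / (Real.exp 1 - 1) *
            max (∑ i ∈ Finset.Iic j, v i)
              ((Finset.Iic j).sup' ⟨j, Finset.mem_Iic.mpr le_rfl⟩ fun i => v i / r i)) := by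

  classical
  have he1 : (1:ℝ) < Real.exp 1 := by
    have := Real.exp_one_gt_d9; linarith
  have he0 : (0:ℝ) < Real.exp 1 - 1 := by linarith
  set ρ : ℝ := Real.exp 1 / (Real.exp 1 - 1) with hρdef
  have hρ1 : 1 < ρ := by rw [hρdef, lt_div_iff₀ he0]; linarith
  have hρ0 : 0 < ρ := by linarith
  set O : Fin n → ℝ := fun j => max (∑ i ∈ Finset.Iic j, v i)
      ((Finset.Iic j).sup' ⟨j, Finset.mem_Iic.mpr le_rfl⟩ fun i => v i / r i) with hOdef
  set D : Fin n → ℝ := fun j => ρ * O j with hDdef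
  have hIic_pre : ∀ j : Fin n, (∑ i ∈ Finset.Iic j, v i) = Stmt7Aux.pre n v ((j:ℕ)+1) := by
    intro j
    unfold Stmt7Aux.pre
    apply Finset.sum_congr _ (fun _ _ => rfl)
    ext i
    simp only [Finset.mem_Iic, Finset.mem_filter, Finset.mem_univ, true_and]
    rw [Fin.le_def, Nat.lt_succ_iff]
  have hOv : ∀ j, v j / r j ≤ O j := by
    intro j
    have h1 : v j / r j ≤ (Finset.Iic j).sup' ⟨j, Finset.mem_Iic.mpr le_rfl⟩
        (fun i => v i / r i) :=
      Finset.le_sup' (fun i => v i / r i) (Finset.mem_Iic.mpr le_rfl)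
    exact le_trans h1 (le_max_right _ _)
  have hOV : ∀ j : Fin n, Stmt7Aux.pre n v ((j:ℕ)+1) ≤ O j := fun j =>
    (hIic_pre j) ▸ le_max_left _ _
  have hOpos : ∀ j, 0 < O j := by
    intro j
    have h1 : 0 < v j / r j := div_pos (hv j) (hr j).1
    linarith [hOv j]
  have hDpos : ∀ j, 0 < D j := fun j => mul_pos hρ0 (hOpos j)
  have hrD : ∀ j, ρ * v j ≤ r j * D j := by
    intro j
    have h1 : v j ≤ r j * O j := by
      have h2 := hOv j
      rw [div_le_iff₀ (hr j).1] at h2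
      linarith
    calc ρ * v j ≤ ρ * (r j * O j) := by nlinarith
      _ = r j * D j := by rw [hDdef]; ring
  have hVD : ∀ j : Fin n, ρ * Stmt7Aux.pre n v ((j:ℕ)+1) ≤ D j := by
    intro j
    rw [hDdef]
    exact mul_le_mul_of_nonneg_left (hOV j) hρ0.le
  have hOmono : Monotone O := by
    intro j j' hj
    apply max_le_max
    · apply Finset.sum_le_sum_of_subset_of_nonneg (Finset.Iic_subset_Iic.mpr hj)
      intro i _ _; exact (hv i).le
    · exact Finset.sup'_mono _ (Finset.Iic_subset_Iic.mpr hj) _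
  have hDmono : Monotone D := fun j j' hj => by
    simp only [hDdef]
    exact mul_le_mul_of_nonneg_left (hOmono hj) hρ0.le
  -- breakpoints
  set bd : ℕ → ℝ := fun i => if 1 ≤ i then D ⟨min (i-1) (n-1), by omega⟩ else 0 with hbddef
  have hbd0 : bd 0 = 0 := by simp only [hbddef]; norm_num
  have hbdD : ∀ j : Fin n, bd ((j:ℕ)+1) = D j := by
    intro j
    simp only [hbddef]
    rw [if_pos (by omega : 1 ≤ (j:ℕ)+1)]
    congr 1
    apply Fin.ext
    have := j.isLt
    simp only
    omega
  have hbdmono : Monotone bd := by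
    intro i i' h
    simp only [hbddef]
    by_cases h1 : 1 ≤ i
    · rw [if_pos h1, if_pos (le_trans h1 h)]
      apply hDmono
      rw [Fin.le_def]
      simp only
      omega
    · rw [if_neg h1]
      by_cases h2 : 1 ≤ i'
      · rw [if_pos h2]; exact (hDpos _).le
      · rw [if_neg h2]
  have hbdnn : ∀ i, 0 ≤ bd i := fun i => hbd0 ▸ hbdmono (Nat.zero_le i)
  -- interval lengths and capacities
  set L : Fin n → ℝ := fun k => bd ((k:ℕ)+1) - bd (k:ℕ) with hLdef
  have hL0 : ∀ k, 0 ≤ L k := fun k => sub_nonneg.mpr (hbdmono (Nat.le_succ _))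
  set b : Fin n → Fin n → ℝ := fun j k => if (k:ℕ) ≤ (j:ℕ) then r j * L k else 0 with hbdef
  have hbnn : ∀ j k, 0 ≤ b j k := by
    intro j k
    simp only [hbdef]
    split
    · exact mul_nonneg (hr j).1.le (hL0 k)
    · exact le_rfl
  -- prefix sums of interval lengths
  have hbdsum : ∀ M : ℕ, M ≤ n →
      (∑ k : Fin n, if (k:ℕ) < M then L k else 0) = bd M := by
    intro M
    induction M with
    | zero => intro _; simp [hbd0]
    | succ M ihM =>
      intro hM
      have hM' : M ≤ n := by omega
      have hMn : M < n := by omega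
      have hsplit : ∀ k : Fin n, (if (k:ℕ) < M+1 then L k else 0)
          = (if (k:ℕ) < M then L k else 0) + (if k = (⟨M, hMn⟩ : Fin n) then L k else 0) := by
        intro k
        by_cases h1 : (k:ℕ) < M
        · rw [if_pos (by omega), if_pos h1, if_neg, add_zero]
          intro hk
          rw [hk] at h1
          simp only at h1
          omega
        · by_cases h2 : k = (⟨M, hMn⟩ : Fin n)
          · rw [if_pos (by rw [h2]; simp), if_neg h1, if_pos h2, zero_add]
          · rw [if_neg, if_neg h1, if_neg h2, add_zero]
            intro hk
            apply h2
            apply Fin.ext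
            simp only
            omega
      rw [Finset.sum_congr rfl (fun k _ => hsplit k), Finset.sum_add_distrib, ihM hM',
        Finset.sum_ite_eq' Finset.univ (⟨M, hMn⟩ : Fin n) (fun k => L k),
        if_pos (Finset.mem_univ _)]
      show bd M + (bd (M+1) - bd M) = bd (M+1)
      ring
  -- the cut condition
  have hhall : ∀ a : ℝ, 0 ≤ a →
      ∑ jj, max (v jj - r jj * max (D jj - a) 0) 0 ≤ a := by
    intro a ha
    exact Stmt7Aux.hall v r D hv (fun j => (hr j).1) hrD hVD a ha
  have hcut : ∀ S : Finset (Fin n), ∑ j ∈ S, v j ≤ ∑ k, min (L k) (∑ j ∈ S, b j k) := by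
    intro S
    set RS : Fin n → ℝ := fun k => ∑ j ∈ S.filter (fun j : Fin n => (k:ℕ) ≤ (j:ℕ)), r j with hRSdef
    have hRSnn : ∀ k, 0 ≤ RS k := fun k => Finset.sum_nonneg (fun j _ => (hr j).1.le)
    have hbsum : ∀ k, (∑ j ∈ S, b j k) = L k * RS k := by
      intro k
      simp only [hRSdef, hbdef]
      rw [Finset.sum_filter, Finset.mul_sum]
      apply Finset.sum_congr rfl
      intro j _
      by_cases h : (k:ℕ) ≤ (j:ℕ)
      · rw [if_pos h, if_pos h]; ring
      · rw [if_neg h, if_neg h]; ring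
    have hRSanti : ∀ k k' : Fin n, (k:ℕ) ≤ (k':ℕ) → RS k' ≤ RS k := by
      intro k k' h
      apply Finset.sum_le_sum_of_subset_of_nonneg
      · intro j hj
        rw [Finset.mem_filter] at hj ⊢
        exact ⟨hj.1, le_trans h hj.2⟩
      · intro j _ _; exact (hr j).1.le
    set T : Finset (Fin n) := Finset.univ.filter (fun k => 1 ≤ RS k) with hTdef
    set K : ℕ := if hT : T.Nonempty then ((T.max' hT : Fin n) : ℕ) + 1 else 0 with hKdef
    have hKn : K ≤ n := by
      simp only [hKdef]
      split
      · next hT => have := (T.max' hT).isLt; omega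
      · omega
    have hKlow : ∀ k : Fin n, (k:ℕ) < K → 1 ≤ RS k := by
      intro k hk
      simp only [hKdef] at hk
      split at hk
      · next hT =>
        have hmax : 1 ≤ RS (T.max' hT) := by
          have hall' : ∀ x ∈ T, 1 ≤ RS x := by
            intro x hx
            rw [hTdef] at hx
            exact (Finset.mem_filter.mp hx).2
          exact hall' _ (T.max'_mem hT)
        exact le_trans hmax (hRSanti k (T.max' hT) (by omega))
      · omega
    have hKhigh : ∀ k : Fin n, K ≤ (k:ℕ) → RS k < 1 := by
      intro k hk
      by_contra hcon
      push_neg at hcon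
      have hkT : k ∈ T := by rw [hTdef, Finset.mem_filter]; exact ⟨Finset.mem_univ _, hcon⟩
      have hne : T.Nonempty := ⟨k, hkT⟩
      simp only [hKdef, dif_pos hne] at hk
      have hle := T.le_max' k hkT
      rw [Fin.le_def] at hle
      omega
    have hmin : ∀ k : Fin n,
        (if (k:ℕ) < K then L k else L k * RS k) ≤ min (L k) (∑ j ∈ S, b j k) := by
      intro k
      rw [hbsum k]
      by_cases h : (k:ℕ) < K
      · rw [if_pos h]
        refine le_min le_rfl ?_
        have h1 := hKlow k h
        nlinarith [hL0 k]
      · rw [if_neg h]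
        push_neg at h
        have h1 := (hKhigh k h).le
        refine le_min ?_ le_rfl
        nlinarith [hL0 k, hRSnn k]
    have hsum1 : (∑ k : Fin n, if (k:ℕ) < K then L k else L k * RS k)
        = bd K + ∑ k : Fin n, (if K ≤ (k:ℕ) then L k * RS k else 0) := by
      rw [← hbdsum K hKn, ← Finset.sum_add_distrib]
      apply Finset.sum_congr rfl
      intro k _
      by_cases h : (k:ℕ) < K
      · rw [if_pos h, if_pos h, if_neg (by omega), add_zero]
      · rw [if_neg h, if_neg h, if_pos (by omega), zero_add]
    have hsum2 : (∑ k : Fin n, if K ≤ (k:ℕ) then L k * RS k else 0)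
        = ∑ j ∈ S, r j * (bd ((j:ℕ)+1) - bd (min ((j:ℕ)+1) K)) := by
      have hexp : ∀ k : Fin n, (if K ≤ (k:ℕ) then L k * RS k else 0)
          = ∑ j ∈ S, (if K ≤ (k:ℕ) ∧ (k:ℕ) ≤ (j:ℕ) then r j * L k else 0) := by
        intro k
        by_cases h : K ≤ (k:ℕ)
        · rw [if_pos h]
          simp only [hRSdef]
          rw [Finset.sum_filter, Finset.mul_sum]
          apply Finset.sum_congr rfl
          intro j _
          by_cases h2 : (k:ℕ) ≤ (j:ℕ)
          · rw [if_pos h2, if_pos ⟨h, h2⟩]; ring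
          · rw [if_neg h2, if_neg (by tauto)]; ring
        · rw [if_neg h]
          symm
          apply Finset.sum_eq_zero
          intro j _
          rw [if_neg (by tauto)]
      rw [Finset.sum_congr rfl (fun k _ => hexp k), Finset.sum_comm]
      apply Finset.sum_congr rfl
      intro j _
      have hptwise : ∀ k : Fin n, (if K ≤ (k:ℕ) ∧ (k:ℕ) ≤ (j:ℕ) then r j * L k else 0)
          = r j * ((if (k:ℕ) < (j:ℕ)+1 then L k else 0)
            - (if (k:ℕ) < min ((j:ℕ)+1) K then L k else 0)) := by
        intro k
        by_cases h1 : K ≤ (k:ℕ) ∧ (k:ℕ) ≤ (j:ℕ)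
        · rw [if_pos h1, if_pos (by omega), if_neg (by omega)]
          ring
        · rw [if_neg h1]
          by_cases h2 : (k:ℕ) < min ((j:ℕ)+1) K
          · rw [if_pos (by omega), if_pos h2]; ring
          · rw [if_neg (by omega), if_neg h2]; ring
      rw [Finset.sum_congr rfl (fun k _ => hptwise k), ← Finset.mul_sum]
      congr 1
      rw [Finset.sum_sub_distrib, hbdsum ((j:ℕ)+1) (by omega),
        hbdsum (min ((j:ℕ)+1) K) (by omega)]
    have hperjob : ∀ j ∈ S, v j ≤ max (v j - r j * max (D j - bd K) 0) 0
        + r j * (bd ((j:ℕ)+1) - bd (min ((j:ℕ)+1) K)) := by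
      intro j _
      have hmaxterm : r j * max (D j - bd K) 0
          = r j * (bd ((j:ℕ)+1) - bd (min ((j:ℕ)+1) K)) := by
        by_cases h : K ≤ (j:ℕ)
        · have hmin' : min ((j:ℕ)+1) K = K := by omega
          rw [hmin']
          have hDj : D j - bd K = bd ((j:ℕ)+1) - bd K := by rw [hbdD j]
          rw [hDj, max_eq_left (sub_nonneg.mpr (hbdmono (by omega)))]
        · push_neg at h
          have hmin' : min ((j:ℕ)+1) K = (j:ℕ)+1 := by omega
          rw [hmin', sub_self, mul_zero]
          have h1 : D j ≤ bd K := by rw [← hbdD j]; exact hbdmono (by omega)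
          rw [max_eq_right (by linarith), mul_zero]
      rw [← hmaxterm]
      have h2 := le_max_left (v j - r j * max (D j - bd K) 0) (0:ℝ)
      linarith
    calc ∑ j ∈ S, v j
        ≤ ∑ j ∈ S, (max (v j - r j * max (D j - bd K) 0) 0
          + r j * (bd ((j:ℕ)+1) - bd (min ((j:ℕ)+1) K))) := Finset.sum_le_sum hperjob
      _ = (∑ j ∈ S, max (v j - r j * max (D j - bd K) 0) 0)
          + ∑ j ∈ S, r j * (bd ((j:ℕ)+1) - bd (min ((j:ℕ)+1) K)) := Finset.sum_add_distrib
      _ ≤ (∑ j : Fin n, max (v j - r j * max (D j - bd K) 0) 0)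
          + ∑ j ∈ S, r j * (bd ((j:ℕ)+1) - bd (min ((j:ℕ)+1) K)) := by
          apply add_le_add_left
          exact Finset.sum_le_sum_of_subset_of_nonneg (Finset.subset_univ S)
            (fun i _ _ => le_max_right _ _)
      _ ≤ bd K + ∑ j ∈ S, r j * (bd ((j:ℕ)+1) - bd (min ((j:ℕ)+1) K)) := by
          apply add_le_add_left
          exact hhall (bd K) (hbdnn K)
      _ = ∑ k : Fin n, (if (k:ℕ) < K then L k else L k * RS k) := by rw [hsum1, hsum2]
      _ ≤ ∑ k, min (L k) (∑ j ∈ S, b j k) := Finset.sum_le_sum (fun k _ => hmin k)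
  -- solve the transportation problem
  obtain ⟨x, ⟨hx0, hxb, hxc, hxv⟩, hxrow⟩ :=
    Stmt7Aux.transport v L b (fun j => (hv j).le) hL0 hbnn hcut
  -- rates
  set y : Fin n → Fin n → ℝ := fun j k => if L k = 0 then 0 else x j k / L k with hydef
  have hxzeroL : ∀ j k, L k = 0 → x j k = 0 := by
    intro j k h
    have hb' : b j k ≤ 0 := by
      simp only [hbdef]
      split
      · rw [h, mul_zero]
      · exact le_rfl
    exact le_antisymm (le_trans (hxb j k) hb') (hx0 j k)
  have hyL : ∀ j k, y j k * L k = x j k := by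
    intro j k
    simp only [hydef]
    by_cases h : L k = 0
    · rw [if_pos h, h, mul_zero, hxzeroL j k h]
    · rw [if_neg h, div_mul_cancel₀ _ h]
  have hynn : ∀ j k, 0 ≤ y j k := by
    intro j k
    simp only [hydef]
    split
    · exact le_rfl
    · exact div_nonneg (hx0 j k) (hL0 k)
  have hyr : ∀ j k, y j k ≤ r j := by
    intro j k
    simp only [hydef]
    by_cases h : L k = 0
    · rw [if_pos h]; exact (hr j).1.le
    · rw [if_neg h]
      have hLpos : 0 < L k := lt_of_le_of_ne (hL0 k) (Ne.symm h)
      rw [div_le_iff₀ hLpos]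
      calc x j k ≤ b j k := hxb j k
        _ ≤ r j * L k := by
            simp only [hbdef]
            split
            · exact le_rfl
            · exact mul_nonneg (hr j).1.le (hL0 k)
  have hycol : ∀ k, L k ≠ 0 → ∑ j, y j k ≤ 1 := by
    intro k h
    have hLpos : 0 < L k := lt_of_le_of_ne (hL0 k) (Ne.symm h)
    have hsum : ∑ j, y j k = (∑ j, x j k) / L k := by
      rw [Finset.sum_div]
      apply Finset.sum_congr rfl
      intro j _
      simp only [hydef]
      rw [if_neg h]
    rw [hsum, div_le_one hLpos]
    exact hxc k
  have hyzero : ∀ j k : Fin n, (j:ℕ) < (k:ℕ) → y j k = 0 := by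
    intro j k h
    have hb0 : b j k = 0 := by simp only [hbdef]; rw [if_neg (by omega)]
    have hx00 : x j k = 0 := le_antisymm (hb0 ▸ hxb j k) (hx0 j k)
    simp only [hydef]
    split
    · rfl
    · rw [hx00, zero_div]
  -- the schedule
  set R : Fin n → ℝ → ℝ :=
    fun j t => ∑ k : Fin n, (Ioc (bd (k:ℕ)) (bd ((k:ℕ)+1))).indicator (fun _ => y j k) t
    with hRdef
  have hIoc_disj : ∀ (t : ℝ) (k k' : Fin n), t ∈ Ioc (bd (k:ℕ)) (bd ((k:ℕ)+1)) →
      t ∈ Ioc (bd (k':ℕ)) (bd ((k':ℕ)+1)) → k = k' := by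
    intro t k k' h1 h2
    by_contra hne
    have hvne : (k:ℕ) ≠ (k':ℕ) := fun h => hne (Fin.ext h)
    rcases Nat.lt_or_ge (k:ℕ) (k':ℕ) with h | h
    · have hmono := hbdmono (show (k:ℕ)+1 ≤ (k':ℕ) by omega)
      have := h1.2
      have := h2.1
      linarith
    · have hmono := hbdmono (show (k':ℕ)+1 ≤ (k:ℕ) by omega)
      have := h2.2
      have := h1.1
      linarith
  have hRval : ∀ (j : Fin n) (t : ℝ) (k : Fin n),
      t ∈ Ioc (bd (k:ℕ)) (bd ((k:ℕ)+1)) → R j t = y j k := by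
    intro j t k hk
    simp only [hRdef]
    rw [Finset.sum_eq_single k]
    · rw [Set.indicator_of_mem hk]
    · intro k' _ hne
      apply Set.indicator_of_notMem
      intro hk'
      exact hne (hIoc_disj t k' k hk' hk)
    · intro h; exact absurd (Finset.mem_univ k) h
  have hRzero : ∀ (j : Fin n) (t : ℝ),
      (∀ k : Fin n, t ∉ Ioc (bd (k:ℕ)) (bd ((k:ℕ)+1))) → R j t = 0 := by
    intro j t h
    simp only [hRdef]
    apply Finset.sum_eq_zero
    intro k _
    exact Set.indicator_of_notMem (h k) _
  have hRnn : ∀ j t, 0 ≤ R j t := by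
    intro j t
    by_cases h : ∃ k : Fin n, t ∈ Ioc (bd (k:ℕ)) (bd ((k:ℕ)+1))
    · obtain ⟨k, hk⟩ := h; rw [hRval j t k hk]; exact hynn j k
    · push_neg at h; rw [hRzero j t h]
  have hRr : ∀ j t, R j t ≤ r j := by
    intro j t
    by_cases h : ∃ k : Fin n, t ∈ Ioc (bd (k:ℕ)) (bd ((k:ℕ)+1))
    · obtain ⟨k, hk⟩ := h; rw [hRval j t k hk]; exact hyr j k
    · push_neg at h; rw [hRzero j t h]; exact (hr j).1.le
  have hRsum : ∀ t, ∑ j, R j t ≤ 1 := by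
    intro t
    by_cases h : ∃ k : Fin n, t ∈ Ioc (bd (k:ℕ)) (bd ((k:ℕ)+1))
    · obtain ⟨k, hk⟩ := h
      rw [Finset.sum_congr rfl (fun j _ => hRval j t k hk)]
      have hLk : L k ≠ 0 := by
        intro h0
        have hzero : bd ((k:ℕ)+1) - bd (k:ℕ) = 0 := by
          rw [hLdef] at h0
          exact h0
        have := hk.1
        have := hk.2
        linarith
      exact hycol k hLk
    · push_neg at h
      rw [Finset.sum_congr rfl (fun j _ => hRzero j t h)]
      simp
  have hRneg : ∀ (j : Fin n), ∀ t < (0:ℝ), R j t = 0 := by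
    intro j t ht
    apply hRzero
    intro k hk
    have := hbdnn (k:ℕ)
    have := hk.1
    linarith
  have hRint : ∀ j, Integrable (R j) := by
    intro j
    have hReq : R j = fun t => ∑ k : Fin n,
        (Ioc (bd (k:ℕ)) (bd ((k:ℕ)+1))).indicator (fun _ => y j k) t := rfl
    rw [hReq]
    apply MeasureTheory.integrable_finset_sum
    intro k _
    apply MeasureTheory.IntegrableOn.integrable_indicator _ measurableSet_Ioc
    rw [integrableOn_const_iff]
    right; exact measure_Ioc_lt_top
  have hRvol : ∀ j, (∫ t in Ioi (0:ℝ), R j t) = v j := by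
    intro j
    have hReq : R j = fun t => ∑ k : Fin n,
        (Ioc (bd (k:ℕ)) (bd ((k:ℕ)+1))).indicator (fun _ => y j k) t := rfl
    rw [hReq]
    rw [MeasureTheory.integral_finset_sum]
    · have hterm : ∀ k : Fin n, (∫ t in Ioi (0:ℝ),
          (Ioc (bd (k:ℕ)) (bd ((k:ℕ)+1))).indicator (fun _ => y j k) t) = y j k * L k := by
        intro k
        rw [MeasureTheory.setIntegral_indicator measurableSet_Ioc]
        have hsub : Ioi (0:ℝ) ∩ Ioc (bd (k:ℕ)) (bd ((k:ℕ)+1)) = Ioc (bd (k:ℕ)) (bd ((k:ℕ)+1)) := by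
          apply Set.inter_eq_self_of_subset_right
          intro s hs
          have := hbdnn (k:ℕ)
          have := hs.1
          exact lt_of_le_of_lt (hbdnn (k:ℕ)) hs.1
        rw [hsub, MeasureTheory.setIntegral_const, Real.volume_real_Ioc_of_le (hbdmono (Nat.le_succ _)), smul_eq_mul]
        simp only [hLdef]
        ring
      rw [Finset.sum_congr rfl (fun k _ => hterm k),
        Finset.sum_congr rfl (fun k _ => hyL j k)]
      exact hxrow j
    · intro k _
      apply MeasureTheory.Integrable.integrableOn
      apply MeasureTheory.IntegrableOn.integrable_indicator _ measurableSet_Ioc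
      rw [integrableOn_const_iff]
      right; exact measure_Ioc_lt_top
  have hsupp : ∀ (j : Fin n) (t : ℝ), 0 < R j t → t ≤ D j := by
    intro j t ht
    by_cases h : ∃ k : Fin n, t ∈ Ioc (bd (k:ℕ)) (bd ((k:ℕ)+1))
    · obtain ⟨k, hk⟩ := h
      rw [hRval j t k hk] at ht
      have hkj : (k:ℕ) ≤ (j:ℕ) := by
        by_contra hc
        rw [hyzero j k (by omega)] at ht
        exact lt_irrefl 0 ht
      calc t ≤ bd ((k:ℕ)+1) := hk.2
        _ ≤ bd ((j:ℕ)+1) := hbdmono (by omega)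
        _ = D j := hbdD j
    · push_neg at h
      rw [hRzero j t h] at ht
      exact absurd ht (lt_irrefl 0)
  refine ⟨R, ⟨hRint, fun j t => ⟨hRnn j t, le_trans (hRr j t) (hr j).2⟩,
    hRneg, hRsum, hRr, fun j => (hRvol j).ge⟩, ?_⟩
  intro j
  unfold compTime
  refine iSup_le fun t => iSup_le fun ht => ?_
  exact ENNReal.ofReal_le_ofReal (hsupp j t ht)
end
end

section
/- For every c < e/(e−1) there exists n ≥ 1 such that for the job set J = {1,…,n} with volumes v_j = 1/n and resource requirements r_j = 1/j for j = 1,…,n, there is no feasible schedule R satisfying C_j(R) ≤ c·j/n for all j ∈ {1,…,n}. (Since the optimal makespan of the prefix {1,…,j} of this instance equals j/n, this shows no deterministic list-scheduling algorithm for makespan minimization has competitive ratio below e/(e−1).) -/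
open MeasureTheory Set ENNReal

noncomputable section

/-- Telescoping harmonic lower bound. -/
lemma harmonic_lower (k n : ℕ) (hk : k ≤ n) :
    Real.log (n+1) - Real.log (k+1) ≤ ∑ j ∈ Finset.Ico k n, (1 : ℝ)/(j+1) := by
  have key : ∀ i : ℕ, Real.log ((k:ℝ)+1+(i+1)) - Real.log ((k:ℝ)+1+i) ≤ (1:ℝ)/((k+i : ℕ)+1) := by
    intro i
    have hx : (0:ℝ) < (k:ℝ)+1+i := by positivity
    have h1 : Real.log (((k:ℝ)+1+(i+1))/((k:ℝ)+1+i)) ≤ ((k:ℝ)+1+(i+1))/((k:ℝ)+1+i) - 1 :=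
      Real.log_le_sub_one_of_pos (by positivity)
    rw [Real.log_div (by positivity) (by positivity)] at h1
    have h2 : ((k:ℝ)+1+(i+1))/((k:ℝ)+1+i) - 1 = 1/((k:ℝ)+1+i) := by
      field_simp
      ring
    rw [h2] at h1
    have h3 : ((k+i : ℕ):ℝ)+1 = (k:ℝ)+1+i := by push_cast; ring
    rw [h3]
    linarith
  rw [Finset.sum_Ico_eq_sum_range]
  have tel : ∑ i ∈ Finset.range (n-k), (Real.log ((k:ℝ)+1+(i+1)) - Real.log ((k:ℝ)+1+i))
      = Real.log ((k:ℝ)+1+(n-k : ℕ)) - Real.log ((k:ℝ)+1+(0:ℕ)) := by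
    have := Finset.sum_range_sub (fun i : ℕ => Real.log ((k:ℝ)+1+i)) (n-k)
    simpa using this
  have hcast : ((n-k : ℕ):ℝ) = (n:ℝ) - k := Nat.cast_sub hk
  calc Real.log (n+1) - Real.log (k+1)
      = ∑ i ∈ Finset.range (n-k), (Real.log ((k:ℝ)+1+(i+1)) - Real.log ((k:ℝ)+1+i)) := by
        rw [tel, hcast]; norm_num; ring_nf
    _ ≤ ∑ i ∈ Finset.range (n-k), (1:ℝ)/((k+i : ℕ)+1) :=
        Finset.sum_le_sum fun i _ => key i

/-- The arithmetic core: for `n` large the lower-bound sum exceeds `c - 1`. -/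
lemma arith_main (c : ℝ) (hc1 : 1 < c) (_hL : 1 < Real.log (c/(c-1))) (n : ℕ) (hn : 1 ≤ n)
    (hbig : 2*c < n*((c-1)*(Real.log (c/(c-1))-1))) :
    c - 1 < ∑ j : Fin n, (1/(n:ℝ) - (max (c * ((j:ℕ)+1) / n) (c-1) - (c-1)) * (1/((j:ℕ)+1))) := by
  set L := Real.log (c/(c-1)) with hLdef
  have hnpos : (0:ℝ) < n := by exact_mod_cast hn
  have hn0 : (n:ℝ) ≠ 0 := ne_of_gt hnpos
  have hcpos : (0:ℝ) < c := by linarith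
  have hc1' : (0:ℝ) < c - 1 := by linarith
  set k : ℕ := ⌊(c-1)*n/c⌋₊ with hkdef
  have hk2 : (k:ℝ) ≤ (c-1)*n/c := Nat.floor_le (by positivity)
  have hk1 : (c-1)*n/c < (k:ℝ) + 1 := Nat.lt_floor_add_one _
  have hkn : k < n := by
    have h : (k:ℝ) < (n:ℝ) := lt_of_le_of_lt hk2 (by rw [div_lt_iff₀ hcpos]; nlinarith)
    exact_mod_cast h
  rw [Fin.sum_univ_eq_sum_range
    (fun j : ℕ => 1/(n:ℝ) - (max (c * ((j:ℕ)+1) / n) (c-1) - (c-1)) * (1/((j:ℕ)+1))) n]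
  rw [Finset.range_eq_Ico, ← Finset.sum_Ico_consecutive _ (Nat.zero_le k) hkn.le]
  have hfun1 : ∀ j ∈ Finset.Ico 0 k,
      (1/(n:ℝ) - (max (c * ((j:ℕ)+1) / n) (c-1) - (c-1)) * (1/((j:ℕ)+1))) = 1/(n:ℝ) := by
    intro j hj
    have hj' : j + 1 ≤ k := (Finset.mem_Ico.1 hj).2
    have hj'' : ((j:ℝ)+1) ≤ (k:ℝ) := by exact_mod_cast hj'
    have hmaxr : c * ((j:ℕ)+1) / n ≤ c - 1 := by
      rw [div_le_iff₀ hnpos]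
      rw [le_div_iff₀ hcpos] at hk2
      nlinarith [mul_le_mul_of_nonneg_right hj'' hcpos.le]
    rw [max_eq_right hmaxr]
    simp
  have hfun2 : ∀ j ∈ Finset.Ico k n,
      (1/(n:ℝ) - (max (c * ((j:ℕ)+1) / n) (c-1) - (c-1)) * (1/((j:ℕ)+1)))
        = (1-c)/n + (c-1) * (1/((j:ℝ)+1)) := by
    intro j hj
    have hj' : k ≤ j := (Finset.mem_Ico.1 hj).1
    have hj'' : (k:ℝ) ≤ (j:ℝ) := Nat.cast_le.mpr hj'
    have hmax : c - 1 ≤ c * ((j:ℕ)+1) / n := by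
      rw [le_div_iff₀ hnpos]
      rw [div_lt_iff₀ hcpos] at hk1
      nlinarith
    rw [max_eq_left hmax]
    have hj0 : ((j:ℝ)+1) ≠ 0 := by positivity
    field_simp
    ring
  rw [Finset.sum_congr rfl hfun1, Finset.sum_congr rfl hfun2, Finset.sum_const, Nat.card_Ico,
    Nat.sub_zero, nsmul_eq_mul, Finset.sum_add_distrib, Finset.sum_const, Nat.card_Ico,
    nsmul_eq_mul, ← Finset.mul_sum, Nat.cast_sub hkn.le]
  set H := ∑ j ∈ Finset.Ico k n, (1:ℝ)/((j:ℝ)+1) with hHdef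
  have hH1 : Real.log ((n:ℝ)+1) - Real.log ((k:ℝ)+1) ≤ H := by
    have := harmonic_lower k n hkn.le
    push_cast at this ⊢
    convert this using 2
  set y : ℝ := c/((c-1)*n) with hydef
  have hypos : 0 < y := by positivity
  have hx1c : ((k:ℝ)+1)*c ≤ (c-1)*n + c := by
    rw [le_div_iff₀ hcpos] at hk2
    nlinarith
  have hq : (c/(c-1))/(1+y) ≤ ((n:ℝ)+1)/((k:ℝ)+1) := by
    rw [div_le_div_iff₀ (by positivity) (by positivity)]
    have hid : (c/(c-1))*(c-1) = c := by field_simp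
    have h1 : (c/(c-1))*((k:ℝ)+1) ≤ (n:ℝ) + c/(c-1) := by
      rw [div_mul_eq_mul_div, div_le_iff₀ hc1']
      nlinarith
    have h2 : (n:ℝ)*y = c/(c-1) := by
      rw [hydef]; field_simp
    nlinarith
  have hlogle := Real.log_le_log (by positivity) hq
  have e2 : Real.log (((n:ℝ)+1)/((k:ℝ)+1))
      = Real.log ((n:ℝ)+1) - Real.log ((k:ℝ)+1) :=
    Real.log_div (by positivity) (by positivity)
  have e3 : Real.log ((c/(c-1))/(1+y)) = L - Real.log (1+y) := by
    rw [Real.log_div (by positivity) (by positivity)]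
  have h1y : Real.log (1+y) ≤ y := by
    have := Real.log_le_sub_one_of_pos (show (0:ℝ) < 1 + y by positivity)
    linarith
  have hHkey : L - y ≤ H := by
    rw [e3] at hlogle
    rw [e2] at hlogle
    linarith
  have hyid : (c-1)*y = c/n := by
    rw [hydef]; field_simp
  have hxc : (c-1) - c/n < c*(k:ℝ)/n := by
    rw [div_lt_iff₀ hcpos] at hk1
    have step : ((c-1)*(n:ℝ) - c)/n < (c*(k:ℝ))/n := by
      rw [div_lt_div_iff₀ hnpos hnpos]
      nlinarith
    have lhs_eq : (c-1) - c/(n:ℝ) = ((c-1)*(n:ℝ) - c)/n := by field_simp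
    rw [lhs_eq]
    exact step
  have hmul : (c-1)*(L-y) ≤ (c-1)*H := mul_le_mul_of_nonneg_left hHkey (le_of_lt hc1')
  have hnb : 2*(c/(n:ℝ)) < (c-1)*(L-1) := by
    rw [show 2*(c/(n:ℝ)) = 2*c/n by ring, div_lt_iff₀ hnpos]
    linear_combination hbig
  have hexp1 : (c-1)*(L-1) = (c-1)*L - (c-1) := by ring
  have hexp2 : (c-1)*(L-y) = (c-1)*L - c/n := by rw [mul_sub, hyid]
  have e1 : (k:ℝ) * (1/(n:ℝ)) + ((n:ℝ) - (k:ℝ)) * ((1-c)/n) = c*(k:ℝ)/n - (c-1) := by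
    field_simp
    ring
  linarith [hmul, hxc, hnb, e1, hexp1, hexp2]

/-- The measure-theoretic core: any feasible deadline-respecting schedule gives the key
upper bound on the lower-bound sum. -/
lemma meas_main (n : ℕ) (hn : 1 ≤ n) (c : ℝ) (hc1 : 1 < c)
    (R : Fin n → ℝ → ℝ)
    (hfeas : IsFeasible n (fun _ => 1 / (n : ℝ)) (fun j => 1 / ((j : ℕ) + 1 : ℝ)) R)
    (hdead : ∀ j : Fin n,
      compTime n R j ≤ ENNReal.ofReal (c * ((j : ℕ) + 1 : ℝ) / (n : ℝ))) :
    ∑ j : Fin n, (1/(n:ℝ) - (max (c * ((j:ℕ)+1) / n) (c-1) - (c-1)) * (1/((j:ℕ)+1))) ≤ c - 1 := by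
  obtain ⟨hint, h01, hneg, hsum, hreq, hvol⟩ := hfeas
  have hnpos : (0:ℝ) < n := by exact_mod_cast hn
  set t0 : ℝ := c - 1 with ht0
  have ht0pos : 0 < t0 := by simp [ht0]; linarith
  have hstop : ∀ (j : Fin n) (s : ℝ), max (c * ((j:ℕ)+1) / n) t0 < s → R j s = 0 := by
    intro j s hs
    by_contra h
    have hpos : 0 < R j s := lt_of_le_of_ne (h01 j s).1 (Ne.symm h)
    have h1 : ENNReal.ofReal s ≤ compTime n R j :=
      le_iSup₂ (f := fun (t : ℝ) (_ : t ∈ {t : ℝ | 0 < R j t}) => ENNReal.ofReal t) s hpos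
    have h2 := h1.trans (hdead j)
    have hd0 : (0:ℝ) ≤ c * ((j:ℕ)+1) / n := by positivity
    rw [ENNReal.ofReal_le_ofReal_iff hd0] at h2
    have : c * ((j:ℕ)+1) / n < s := lt_of_le_of_lt (le_max_left _ _) hs
    linarith
  have hB : ∀ j : Fin n,
      1/(n:ℝ) - (max (c * ((j:ℕ)+1) / n) t0 - t0) * (1/((j:ℕ)+1)) ≤ ∫ s in Ioc (0:ℝ) t0, R j s := by
    intro j
    set D : ℝ := max (c * ((j:ℕ)+1) / n) t0 with hD
    have ht0D : t0 ≤ D := le_max_right _ _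
    have hi1 : IntegrableOn (R j) (Ioc (0:ℝ) t0) := (hint j).integrableOn
    have hi2 : IntegrableOn (R j) (Ioc t0 D) := (hint j).integrableOn
    have hi3 : IntegrableOn (R j) (Ioi D) := (hint j).integrableOn
    have hsplit2 : ∫ s in Ioi t0, R j s = (∫ s in Ioc t0 D, R j s) + ∫ s in Ioi D, R j s := by
      rw [← setIntegral_union (Ioc_disjoint_Ioi le_rfl) measurableSet_Ioi hi2 hi3,
        Ioc_union_Ioi_eq_Ioi ht0D]
    have hsplit1 : ∫ s in Ioi (0:ℝ), R j s = (∫ s in Ioc (0:ℝ) t0, R j s) + ∫ s in Ioi t0, R j s := by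
      rw [← setIntegral_union (Ioc_disjoint_Ioi le_rfl) measurableSet_Ioi hi1 (hint j).integrableOn,
        Ioc_union_Ioi_eq_Ioi ht0pos.le]
    have hzero : ∫ s in Ioi D, R j s = 0 :=
      setIntegral_eq_zero_of_forall_eq_zero fun s hs => hstop j s hs
    have hupper : ∫ s in Ioc t0 D, R j s ≤ (D - t0) * (1/((j:ℕ)+1)) := by
      have hmono : ∫ s in Ioc t0 D, R j s ≤ ∫ s in Ioc t0 D, (1/((j:ℕ)+1) : ℝ) :=
        setIntegral_mono_on hi2 (integrableOn_const measure_Ioc_lt_top.ne)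
          measurableSet_Ioc (fun s _ => hreq j s)
      have hconst : ∫ s in Ioc t0 D, (1/((j:ℕ)+1) : ℝ) = (D - t0) * (1/((j:ℕ)+1)) := by
        rw [setIntegral_const, measureReal_def, Real.volume_Ioc, ENNReal.toReal_ofReal (by linarith), smul_eq_mul]
      linarith
    have hv := hvol j
    simp only at hv
    linarith [hv, hsplit1, hsplit2, hzero, hupper]
  have hC : ∑ j : Fin n, (∫ s in Ioc (0:ℝ) t0, R j s) ≤ t0 := by
    rw [← integral_finset_sum _ (fun j _ => (hint j).integrableOn)]
    have h1 : ∫ s in Ioc (0:ℝ) t0, (∑ j, R j s) ≤ ∫ s in Ioc (0:ℝ) t0, (1:ℝ) :=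
      setIntegral_mono_on (integrable_finset_sum _ fun j _ => (hint j).integrableOn)
        (integrableOn_const measure_Ioc_lt_top.ne)
        measurableSet_Ioc (fun s _ => hsum s)
    have h2 : ∫ s in Ioc (0:ℝ) t0, (1:ℝ) = t0 := by
      rw [setIntegral_const, measureReal_def, Real.volume_Ioc, ENNReal.toReal_ofReal (by linarith), smul_eq_mul]
      ring
    linarith
  calc ∑ j : Fin n, (1/(n:ℝ) - (max (c * ((j:ℕ)+1) / n) (c-1) - (c-1)) * (1/((j:ℕ)+1)))
      ≤ ∑ j : Fin n, (∫ s in Ioc (0:ℝ) t0, R j s) := Finset.sum_le_sum fun j _ => hB j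
    _ ≤ t0 := hC

lemma main_case (c : ℝ) (hc1 : 1 < c) (hc : c < Real.exp 1 / (Real.exp 1 - 1)) :
    ∃ n : ℕ, 1 ≤ n ∧
      ¬ ∃ R : Fin n → ℝ → ℝ,
          IsFeasible n (fun _ => 1 / (n : ℝ)) (fun j => 1 / ((j : ℕ) + 1 : ℝ)) R ∧
          ∀ j : Fin n,
            compTime n R j ≤ ENNReal.ofReal (c * ((j : ℕ) + 1 : ℝ) / (n : ℝ)) := by
  have he1 : (1:ℝ) < Real.exp 1 := by
    have := Real.exp_one_gt_d9
    linarith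
  have hc1' : (0:ℝ) < c - 1 := by linarith
  rw [lt_div_iff₀ (by linarith)] at hc
  have hratio : Real.exp 1 < c/(c-1) := by
    rw [lt_div_iff₀ hc1']
    nlinarith
  have hL : 1 < Real.log (c/(c-1)) := by
    have := Real.log_lt_log (Real.exp_pos 1) hratio
    rwa [Real.log_exp] at this
  have hLpos : (0:ℝ) < (c-1)*(Real.log (c/(c-1)) - 1) := by
    have : (0:ℝ) < Real.log (c/(c-1)) - 1 := by linarith
    positivity
  obtain ⟨N, hN⟩ := exists_nat_gt (2*c/((c-1)*(Real.log (c/(c-1))-1)))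
  refine ⟨N+1, Nat.succ_le_succ (Nat.zero_le N), ?_⟩
  rintro ⟨R, hfeas, hdead⟩
  have hbig : 2*c < ((N+1 : ℕ):ℝ)*((c-1)*(Real.log (c/(c-1))-1)) := by
    rw [div_lt_iff₀ hLpos] at hN
    have : (N:ℝ) ≤ ((N+1 : ℕ):ℝ) := by push_cast; linarith
    nlinarith
  exact absurd (meas_main (N+1) (Nat.succ_le_succ (Nat.zero_le N)) c hc1 R hfeas hdead)
    (not_le.2 (arith_main c hc1 hL (N+1) (Nat.succ_le_succ (Nat.zero_le N)) hbig))

/-- Lower bound `e/(e-1)` on the competitive ratio: for every `c < e/(e-1)` there is an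
instance (volumes `1/n`, resource requirements `1/j` for the `j`-th job, whose prefix
`{1,…,j}` has optimal makespan `j/n`) that admits no feasible schedule completing every
job `j` by time `c·j/n`. -/
theorem stmt8 (c : ℝ) (hc : c < Real.exp 1 / (Real.exp 1 - 1)) :
    ∃ n : ℕ, 1 ≤ n ∧
      ¬ ∃ R : Fin n → ℝ → ℝ,
          IsFeasible n (fun _ => 1 / (n : ℝ)) (fun j => 1 / ((j : ℕ) + 1 : ℝ)) R ∧
          ∀ j : Fin n,
            compTime n R j ≤ ENNReal.ofReal (c * ((j : ℕ) + 1 : ℝ) / (n : ℝ)) := by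
  have he1 : (1:ℝ) < Real.exp 1 := by
    have := Real.exp_one_gt_d9
    linarith
  have he3 : Real.exp 1 < 3 := by
    have := Real.exp_one_lt_d9
    linarith
  have h32 : (3/2 : ℝ) < Real.exp 1 / (Real.exp 1 - 1) := by
    rw [lt_div_iff₀ (by linarith)]
    nlinarith
  set c' : ℝ := max c (3/2) with hc'def
  have hc'1 : 1 < c' := lt_of_lt_of_le (by norm_num) (le_max_right c (3/2))
  have hc'lt : c' < Real.exp 1 / (Real.exp 1 - 1) := max_lt hc h32
  obtain ⟨n, hn, hnot⟩ := main_case c' hc'1 hc'lt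
  refine ⟨n, hn, ?_⟩
  rintro ⟨R, hfeas, hdead⟩
  refine hnot ⟨R, hfeas, fun j => (hdead j).trans (ENNReal.ofReal_le_ofReal ?_)⟩
  have hnpos : (0:ℝ) < n := by exact_mod_cast hn
  have hcc' : c ≤ c' := le_max_left _ _
  have hj : (0:ℝ) ≤ ((j:ℕ):ℝ) + 1 := by positivity
  gcongr
end
end

section
/- Let J = {1,…,n} be a job set with volumes sorted in ascending order, v_1 ≤ v_2 ≤ … ≤ v_n. Then for every feasible schedule R for J, the total completion time satisfies Σ_{j=1}^n C_j(R) ≥ Σ_{j=1}^n Σ_{i=1}^j v_i. (The squashed-area bound: C^A := Σ_{j=1}^n Σ_{i=1}^j v_i, the SPT total completion time when all resource requirements are relaxed to 1, is a lower bound on the optimal total completion time.) -/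
open MeasureTheory Set ENNReal

noncomputable section

/-- Sum of the `k` smallest values of a monotone tuple is at most the sum over any
`k`-element subset. -/
lemma sum_range_le_sum_subset (n : ℕ) (v : Fin n → ℝ) (hmono : Monotone v) :
    ∀ (k : ℕ) (S : Finset (Fin n)), S.card = k →
      ∑ m ∈ Finset.range k, (if h : m < n then v ⟨m, h⟩ else 0) ≤ ∑ i ∈ S, v i := by
  intro k
  induction k with
  | zero => intro S hS; simp [Finset.card_eq_zero.mp hS]
  | succ k ih =>
    intro S hS
    have hne : S.Nonempty := Finset.card_pos.mp (by omega)
    set M := S.max' hne with hMdef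
    have hMmem : M ∈ S := S.max'_mem hne
    have hsub : S ⊆ Finset.Iic M := fun x hx => Finset.mem_Iic.mpr (S.le_max' x hx)
    have hcard : k + 1 ≤ (M : ℕ) + 1 := by
      calc k + 1 = S.card := hS.symm
      _ ≤ (Finset.Iic M).card := Finset.card_le_card hsub
      _ = (M : ℕ) + 1 := Fin.card_Iic M
    have hk : k ≤ (M : ℕ) := by omega
    have hkn : k < n := lt_of_le_of_lt hk M.isLt
    have hIH := ih (S.erase M) (by rw [Finset.card_erase_of_mem hMmem, hS]; rfl)
    have hterm : (if h : k < n then v ⟨k, h⟩ else 0) ≤ v M := by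
      rw [dif_pos hkn]
      exact hmono (show (⟨k, hkn⟩ : Fin n) ≤ M from hk)
    calc ∑ m ∈ Finset.range (k + 1), (if h : m < n then v ⟨m, h⟩ else 0)
        = ∑ m ∈ Finset.range k, (if h : m < n then v ⟨m, h⟩ else 0)
            + (if h : k < n then v ⟨k, h⟩ else 0) := Finset.sum_range_succ _ _
      _ ≤ ∑ i ∈ S.erase M, v i + v M := add_le_add hIH hterm
      _ = ∑ i ∈ S, v i := Finset.sum_erase_add S v hMmem

/-- The sum over `Iic j` equals the sum over the corresponding range. -/
lemma sum_Iic_eq_sum_range (n : ℕ) (v : Fin n → ℝ) (j : Fin n) :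
    ∑ i ∈ Finset.Iic j, v i
      = ∑ m ∈ Finset.range ((j : ℕ) + 1), (if h : m < n then v ⟨m, h⟩ else 0) := by
  have h1 : Finset.range ((j : ℕ) + 1) = Finset.Iic (j : ℕ) := by
    ext m; simp [Nat.lt_succ_iff]
  rw [h1, ← Fin.map_valEmbedding_Iic, Finset.sum_map]
  apply Finset.sum_congr rfl
  intro i _
  simp [Fin.valEmbedding, i.isLt]

/-- Key analytic lemma: the total volume of any set of jobs is at most any common upper
bound on their completion times. -/
lemma sum_vol_le_bound (n : ℕ) (v r : Fin n → ℝ) (R : Fin n → ℝ → ℝ)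
    (hR : IsFeasible n v r R) (S : Finset (Fin n)) (B : ℝ≥0∞)
    (hB : ∀ i ∈ S, compTime n R i ≤ B) :
    ENNReal.ofReal (∑ i ∈ S, v i) ≤ B := by
  obtain ⟨hint, h01, _, hsum1, _, hvol⟩ := hR
  rcases eq_top_or_lt_top B with hBtop | hBlt
  · simp [hBtop]
  set M := B.toReal with hMdef
  have hM0 : 0 ≤ M := ENNReal.toReal_nonneg
  have hzero : ∀ i ∈ S, ∀ t : ℝ, M < t → R i t = 0 := by
    intro i hi t ht
    by_contra h
    have hpos : 0 < R i t := lt_of_le_of_ne (h01 i t).1 (Ne.symm h)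
    have h1 : ENNReal.ofReal t ≤ compTime n R i :=
      le_iSup₂ (f := fun (t : ℝ) (_ : t ∈ {t : ℝ | 0 < R i t}) => ENNReal.ofReal t) t hpos
    have h2 : ENNReal.ofReal t ≤ B := h1.trans (hB i hi)
    have h3 : t ≤ M := by
      have h4 := ENNReal.toReal_mono hBlt.ne h2
      rwa [ENNReal.toReal_ofReal (le_of_lt (lt_of_le_of_lt hM0 ht))] at h4
    exact absurd h3 (not_le.2 ht)
  have hfint : IntegrableOn (fun t => ∑ i ∈ S, R i t) (Ioi (0:ℝ)) :=
    (integrable_finset_sum S (fun i _ => hint i)).integrableOn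
  have hgint : IntegrableOn ((Ioc (0:ℝ) M).indicator (fun _ => (1:ℝ))) (Ioi (0:ℝ)) := by
    apply Integrable.integrableOn
    rw [integrable_indicator_iff measurableSet_Ioc]
    exact integrableOn_const (by simp [Real.volume_Ioc])
  have hle : ∑ i ∈ S, v i ≤ M := by
    calc ∑ i ∈ S, v i ≤ ∑ i ∈ S, ∫ t in Ioi (0:ℝ), R i t :=
          Finset.sum_le_sum fun i _ => hvol i
      _ = ∫ t in Ioi (0:ℝ), ∑ i ∈ S, R i t :=
          (integral_finset_sum S fun i _ => (hint i).integrableOn).symm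
      _ ≤ ∫ t in Ioi (0:ℝ), (Ioc (0:ℝ) M).indicator (fun _ => (1:ℝ)) t := by
          apply setIntegral_mono_on hfint hgint measurableSet_Ioi
          intro t ht
          rcases le_or_gt t M with h | h
          · have htmem : t ∈ Ioc (0:ℝ) M := ⟨ht, h⟩
            rw [Set.indicator_of_mem htmem]
            calc ∑ i ∈ S, R i t ≤ ∑ i, R i t :=
                  Finset.sum_le_sum_of_subset_of_nonneg (Finset.subset_univ S)
                    (fun i _ _ => (h01 i t).1)
              _ ≤ 1 := hsum1 t
          · have htmem : t ∉ Ioc (0:ℝ) M := fun hm => absurd hm.2 (not_le.2 h)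
            rw [Set.indicator_of_notMem htmem]
            have : ∀ i ∈ S, R i t = 0 := fun i hi => hzero i hi t h
            simp [Finset.sum_congr rfl this]
      _ = M := by
          rw [setIntegral_indicator measurableSet_Ioc]
          rw [Set.inter_eq_self_of_subset_right Ioc_subset_Ioi_self]
          simp [Real.volume_Ioc, ENNReal.toReal_ofReal hM0, hM0]
  calc ENNReal.ofReal (∑ i ∈ S, v i) ≤ ENNReal.ofReal M := ENNReal.ofReal_le_ofReal hle
    _ = B := ENNReal.ofReal_toReal hBlt.ne

/-- The squashed-area bound: if the volumes are sorted ascending, the total completion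
time of every feasible schedule is at least `∑_{j=1}^n ∑_{i=1}^j v_i`. -/
theorem stmt10 (n : ℕ) (v r : Fin n → ℝ)
    (hv : ∀ j, 0 < v j) (hr : ∀ j, 0 < r j ∧ r j ≤ 1)
    (hsorted : Monotone v)
    (R : Fin n → ℝ → ℝ) (hR : IsFeasible n v r R) :
    ENNReal.ofReal (∑ j, ∑ i ∈ Finset.Iic j, v i) ≤ ∑ j, compTime n R j := by
  set C := compTime n R with hC
  set σ := Tuple.sort C with hσ
  have hmonoC : Monotone (C ∘ σ) := Tuple.monotone_sort C
  have hsum : ∑ j, C (σ j) = ∑ j, C j := Equiv.sum_comp σ C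
  -- key per-index bound
  have hkey : ∀ j : Fin n, ENNReal.ofReal (∑ i ∈ Finset.Iic j, v i) ≤ C (σ j) := by
    intro j
    set S : Finset (Fin n) := (Finset.Iic j).image σ with hSdef
    have hcard : S.card = (j : ℕ) + 1 := by
      rw [hSdef, Finset.card_image_of_injective _ σ.injective, Fin.card_Iic]
    have h1 : ∑ i ∈ Finset.Iic j, v i ≤ ∑ i ∈ S, v i := by
      rw [sum_Iic_eq_sum_range n v j]
      exact sum_range_le_sum_subset n v hsorted ((j : ℕ) + 1) S hcard
    have h2 : ENNReal.ofReal (∑ i ∈ S, v i) ≤ C (σ j) := by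
      apply sum_vol_le_bound n v r R hR S (C (σ j))
      intro i hi
      rw [hSdef] at hi
      obtain ⟨m, hm, rfl⟩ := Finset.mem_image.mp hi
      exact hmonoC (Finset.mem_Iic.mp hm)
    exact (ENNReal.ofReal_le_ofReal h1).trans h2
  have hofsum : ENNReal.ofReal (∑ j, ∑ i ∈ Finset.Iic j, v i)
      ≤ ∑ j, ENNReal.ofReal (∑ i ∈ Finset.Iic j, v i) := by
        rw [ENNReal.ofReal_sum_of_nonneg (fun j _ => Finset.sum_nonneg fun i _ => (hv i).le)]
  calc ENNReal.ofReal (∑ j, ∑ i ∈ Finset.Iic j, v i)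
      ≤ ∑ j, ENNReal.ofReal (∑ i ∈ Finset.Iic j, v i) := hofsum
    _ ≤ ∑ j, C (σ j) := Finset.sum_le_sum fun j _ => hkey j
    _ = ∑ j, C j := hsum
end
end

section
/- For every job set J, the optimal total completion time dominates the optimal fractional total completion time plus half the total processing time: C* ≥ C^{F*} + (1/2)·Σ_{j∈J} v_j/r_j, where C* = inf{Σ_{j∈J} C_j(R) : R feasible for J} and C^{F*} = inf{Σ_{j∈J} C^F_j(R) : R feasible for J}. -/
open MeasureTheory Set ENNReal

noncomputable section

/-- The fractional completion time of job `j` in schedule `R` (in `ℝ≥0∞`):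
`∫_0^∞ R_j(t)·t/v_j dt`. -/
def fracCompTime (n : ℕ) (v : Fin n → ℝ) (R : Fin n → ℝ → ℝ) (j : Fin n) : ℝ≥0∞ :=
  ∫⁻ t in Ioi (0:ℝ), ENNReal.ofReal (R j t * t / v j)

lemma real_key (R : ℝ → ℝ) (r C : ℝ) (hr : 0 < r) (hC : 0 ≤ C)
    (hint : Integrable R) (hR0 : ∀ t, 0 ≤ R t) (hRr : ∀ t, R t ≤ r)
    (hsupp : ∀ t, C < t → R t = 0) :
    ∫ t in Ioi (0:ℝ), R t * t ≤ (∫ t in Ioi (0:ℝ), R t) * C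
      - (∫ t in Ioi (0:ℝ), R t)^2 / (2*r) := by
  set m : ℝ := ∫ t in Ioi (0:ℝ), R t with hm_def
  -- support reductions
  have hRIoi : ∀ s : Set ℝ, IntegrableOn R s := fun s => hint.integrableOn
  have hRt_int : IntegrableOn (fun t => R t * t) (Ioc 0 C) := by
    apply Integrable.mono' ((hRIoi (Ioc 0 C)).mul_const C)
    · exact hint.aestronglyMeasurable.restrict.mul aestronglyMeasurable_id
    · filter_upwards [ae_restrict_mem measurableSet_Ioc] with t ht
      rw [Real.norm_eq_abs, abs_of_nonneg (mul_nonneg (hR0 t) (le_of_lt ht.1))]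
      exact mul_le_mul_of_nonneg_left ht.2 (hR0 t)
  have hzero : ∀ t ∈ Ioi C, R t = 0 := fun t ht => hsupp t ht
  have hzero' : ∀ t ∈ Ioi C, R t * t = 0 := fun t ht => by rw [hsupp t ht, zero_mul]
  have hsplit : Ioi (0:ℝ) = Ioc 0 C ∪ Ioi C := (Ioc_union_Ioi_eq_Ioi hC).symm
  have hdisj : Disjoint (Ioc (0:ℝ) C) (Ioi C) := by
    rw [Set.disjoint_left]; rintro t ⟨_, h2⟩ h3; exact absurd h3 (not_lt.2 h2)
  have hRt_intC : IntegrableOn (fun t => R t * t) (Ioi C) := by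
    apply (integrableOn_congr_fun hzero' measurableSet_Ioi).mpr
    exact integrableOn_zero
  have hIoiC0 : ∀ f : ℝ → ℝ, (∀ t ∈ Ioi C, f t = 0) → ∫ t in Ioi C, f t = 0 := by
    intro f hf
    rw [setIntegral_congr_fun measurableSet_Ioi hf, integral_zero]
  have hm_eq : m = ∫ t in Ioc 0 C, R t := by
    rw [hm_def, hsplit, setIntegral_union hdisj measurableSet_Ioi (hRIoi _) (hRIoi _),
      hIoiC0 R hzero, add_zero]
  have hI_eq : ∫ t in Ioi (0:ℝ), R t * t = ∫ t in Ioc 0 C, R t * t := by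
    rw [hsplit, setIntegral_union hdisj measurableSet_Ioi hRt_int hRt_intC,
      hIoiC0 _ hzero', add_zero]
  -- basic bounds on m
  have hm0 : 0 ≤ m := by
    rw [hm_eq]
    exact setIntegral_nonneg measurableSet_Ioc (fun t _ => hR0 t)
  have hmrC : m ≤ r * C := by
    rw [hm_eq]
    calc ∫ t in Ioc 0 C, R t ≤ ∫ _t in Ioc (0:ℝ) C, r :=
          setIntegral_mono_on (hRIoi _) (integrableOn_const (by simp) (by simp))
            measurableSet_Ioc (fun t _ => hRr t)
      _ = r * C := by
          simp [Real.volume_Ioc, hC, mul_comm]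
  set a : ℝ := C - m / r with ha_def
  have ha0 : 0 ≤ a := by
    rw [ha_def]
    have : m / r ≤ C := by
      rw [div_le_iff₀ hr]; linarith [hmrC]
    linarith
  have haC : a ≤ C := by
    rw [ha_def]
    have : 0 ≤ m / r := div_nonneg hm0 hr.le
    linarith
  have hCa : C - a = m / r := by rw [ha_def]; ring
  -- split Ioc 0 C at a
  have hsplit2 : Ioc (0:ℝ) C = Ioc 0 a ∪ Ioc a C := (Ioc_union_Ioc_eq_Ioc ha0 haC).symm
  have hdisj2 : Disjoint (Ioc (0:ℝ) a) (Ioc a C) := by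
    rw [Set.disjoint_left]; rintro t ⟨_, h2⟩ ⟨h3, _⟩; exact absurd h3 (not_lt.2 h2)
  have hRt_int1 : IntegrableOn (fun t => R t * t) (Ioc 0 a) :=
    hRt_int.mono_set (Ioc_subset_Ioc_right haC)
  have hRt_int2 : IntegrableOn (fun t => R t * t) (Ioc a C) :=
    hRt_int.mono_set (Ioc_subset_Ioc_left ha0)
  -- bound on Ioc 0 a : ∫ R t * t ≤ a * ∫ R
  have hbound1 : ∫ t in Ioc 0 a, R t * t ≤ a * ∫ t in Ioc 0 a, R t := by
    have h : 0 ≤ ∫ t in Ioc 0 a, R t * (a - t) := setIntegral_nonneg measurableSet_Ioc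
      (fun t (ht : t ∈ Ioc 0 a) => mul_nonneg (hR0 t) (by linarith [ht.2] : (0:ℝ) ≤ a - t))
    have heq : ∫ t in Ioc 0 a, R t * (a - t)
        = a * (∫ t in Ioc 0 a, R t) - ∫ t in Ioc 0 a, R t * t := by
      have : ∀ t : ℝ, R t * (a - t) = a * R t - R t * t := fun t => by ring
      simp_rw [this]
      rw [integral_sub ((hRIoi _).const_mul a) hRt_int1, integral_const_mul]
    linarith [heq ▸ h]
  -- bound on Ioc a C : ∫ R t * (t - a) ≤ ∫ r * (t - a) = r * (C-a)^2 / 2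
  have hlin_int : IntegrableOn (fun t => r * (t - a)) (Ioc a C) := by
    exact (continuous_const.mul (continuous_id.sub continuous_const)).integrableOn_Ioc
  have hbound2' : ∫ t in Ioc a C, R t * (t - a) ≤ ∫ t in Ioc a C, r * (t - a) := by
    apply setIntegral_mono_on _ hlin_int measurableSet_Ioc
    · intro t ht
      exact mul_le_mul_of_nonneg_right (hRr t) (by linarith [ht.1])
    · have : ∀ t : ℝ, R t * (t - a) = R t * t - a * R t := fun t => by ring
      simp_rw [this]
      exact hRt_int2.sub ((hRIoi _).const_mul a)
  have hlin_val : ∫ t in Ioc a C, r * (t - a) = r * (C - a)^2 / 2 := by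
    rw [← intervalIntegral.integral_of_le haC]
    rw [intervalIntegral.integral_const_mul]
    have : ∫ t in a..C, (t - a) = (C - a)^2/2 := by
      rw [intervalIntegral.integral_sub intervalIntegral.intervalIntegrable_id
        intervalIntegrable_const, integral_id, intervalIntegral.integral_const,
        smul_eq_mul]
      ring
    rw [this]; ring
  have hbound2 : ∫ t in Ioc a C, R t * t ≤ r * (C - a)^2/2 + a * ∫ t in Ioc a C, R t := by
    have heq : ∫ t in Ioc a C, R t * (t - a)
        = (∫ t in Ioc a C, R t * t) - a * ∫ t in Ioc a C, R t := by
      have : ∀ t : ℝ, R t * (t - a) = R t * t - a * R t := fun t => by ring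
      simp_rw [this]
      rw [integral_sub hRt_int2 ((hRIoi _).const_mul a), integral_const_mul]
    have := hbound2'
    rw [heq, hlin_val] at this
    linarith
  -- combine
  have hmsum : (∫ t in Ioc 0 a, R t) + (∫ t in Ioc a C, R t) = m := by
    rw [hm_eq, hsplit2, setIntegral_union hdisj2 measurableSet_Ioc (hRIoi _) (hRIoi _)]
  have hIsum : ∫ t in Ioi (0:ℝ), R t * t
      = (∫ t in Ioc 0 a, R t * t) + (∫ t in Ioc a C, R t * t) := by
    rw [hI_eq, hsplit2, setIntegral_union hdisj2 measurableSet_Ioc hRt_int1 hRt_int2]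
  have hfinal : r * (C - a)^2/2 = m^2 / (2*r) := by
    rw [hCa]; field_simp
  rw [hIsum]
  calc (∫ t in Ioc 0 a, R t * t) + (∫ t in Ioc a C, R t * t)
      ≤ a * (∫ t in Ioc 0 a, R t) + (r * (C - a)^2/2 + a * ∫ t in Ioc a C, R t) :=
        add_le_add hbound1 hbound2
    _ = a * m + m^2/(2*r) := by rw [← hmsum] at *; rw [hfinal]; ring
    _ = m * C - m^2/(2*r) := by
        rw [ha_def]; field_simp; ring

lemma Rt_integrable (R : ℝ → ℝ) (C : ℝ) (hC : 0 ≤ C)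
    (hint : Integrable R) (hR0 : ∀ t, 0 ≤ R t)
    (hsupp : ∀ t, C < t → R t = 0) :
    IntegrableOn (fun t => R t * t) (Ioi 0) := by
  have hRIoi : ∀ s : Set ℝ, IntegrableOn R s := fun s => hint.integrableOn
  have hRt_int : IntegrableOn (fun t => R t * t) (Ioc 0 C) := by
    apply Integrable.mono' ((hRIoi (Ioc 0 C)).mul_const C)
    · exact hint.aestronglyMeasurable.restrict.mul aestronglyMeasurable_id
    · filter_upwards [ae_restrict_mem measurableSet_Ioc] with t ht
      rw [Real.norm_eq_abs, abs_of_nonneg (mul_nonneg (hR0 t) (le_of_lt ht.1))]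
      exact mul_le_mul_of_nonneg_left ht.2 (hR0 t)
  have hzero' : ∀ t ∈ Ioi C, R t * t = 0 := fun t ht => by rw [hsupp t ht, zero_mul]
  have hRt_intC : IntegrableOn (fun t => R t * t) (Ioi C) :=
    (integrableOn_congr_fun hzero' measurableSet_Ioi).mpr integrableOn_zero
  rw [(Ioc_union_Ioi_eq_Ioi hC).symm]
  exact hRt_int.union hRt_intC

set_option maxHeartbeats 1000000 in
lemma perjob (v r C : ℝ) (R : ℝ → ℝ) (hr : 0 < r) (hv : 0 < v) (hC : 0 ≤ C)
    (hint : Integrable R) (hR0 : ∀ t, 0 ≤ R t) (hRr : ∀ t, R t ≤ r)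
    (hsupp : ∀ t, C < t → R t = 0)
    (hvol : v ≤ ∫ t in Ioi (0:ℝ), R t) :
    (∫⁻ t in Ioi (0:ℝ), ENNReal.ofReal (v / (∫ s in Ioi (0:ℝ), R s) * R t * t / v))
      + ENNReal.ofReal (v / (2*r)) ≤ ENNReal.ofReal C := by
  set m : ℝ := ∫ s in Ioi (0:ℝ), R s with hm_def
  have hm : 0 < m := lt_of_lt_of_le hv hvol
  have hrw : ∀ t : ℝ, v / m * R t * t / v = R t * t / m := by
    intro t; field_simp
  simp_rw [hrw]
  have hRt_all : IntegrableOn (fun t => R t * t) (Ioi 0) :=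
    Rt_integrable R C hC hint hR0 hsupp
  have hg_int : IntegrableOn (fun t => R t * t / m) (Ioi 0) := hRt_all.div_const m
  have hg_nonneg : 0 ≤ᵐ[volume.restrict (Ioi (0:ℝ))] fun t => R t * t / m := by
    filter_upwards [ae_restrict_mem measurableSet_Ioi] with t ht
    exact div_nonneg (mul_nonneg (hR0 t) (le_of_lt ht)) hm.le
  rw [← ofReal_integral_eq_lintegral_ofReal hg_int hg_nonneg]
  rw [← ENNReal.ofReal_add (integral_nonneg_of_ae hg_nonneg) (by positivity)]
  apply ENNReal.ofReal_le_ofReal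
  have key := real_key R r C hr hC hint hR0 hRr hsupp
  rw [← hm_def] at key
  have hI_div : ∫ t in Ioi (0:ℝ), R t * t / m = (∫ t in Ioi (0:ℝ), R t * t) / m := by
    rw [integral_div]
  rw [hI_div]
  have hmv : m * v / (2*r) ≤ m^2 / (2*r) := by
    gcongr
    nlinarith
  have h2 : (∫ t in Ioi (0:ℝ), R t * t) / m ≤ C - v/(2*r) := by
    rw [div_le_iff₀ hm]
    have hexp : (C - v/(2*r)) * m = m * C - m * v / (2*r) := by ring
    rw [hexp]
    linarith
  linarith

/-- The optimal total completion time dominates the optimal fractional total completion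
time plus half the total processing time: `C* ≥ C^{F*} + (1/2)·∑_j v_j/r_j`. -/
theorem stmt11 (n : ℕ) (v r : Fin n → ℝ)
    (hv : ∀ j, 0 < v j) (hr : ∀ j, 0 < r j ∧ r j ≤ 1) :
    sInf {x : ℝ≥0∞ | ∃ R, IsFeasible n v r R ∧ x = ∑ j, fracCompTime n v R j}
      + ENNReal.ofReal ((1 / 2) * ∑ j, v j / r j)
    ≤ sInf {x : ℝ≥0∞ | ∃ R, IsFeasible n v r R ∧ x = ∑ j, compTime n R j} := by
  apply le_sInf
  rintro x ⟨R, ⟨hint, h01, hneg, hsum, hrle, hvle⟩, rfl⟩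
  have hm : ∀ j, (0:ℝ) < ∫ t in Ioi (0:ℝ), R j t := fun j =>
    lt_of_lt_of_le (hv j) (hvle j)
  set R' : Fin n → ℝ → ℝ :=
    fun j t => v j / (∫ s in Ioi (0:ℝ), R j s) * R j t with hR'_def
  have hscale : ∀ j, 0 ≤ v j / (∫ s in Ioi (0:ℝ), R j s) ∧
      v j / (∫ s in Ioi (0:ℝ), R j s) ≤ 1 := fun j =>
    ⟨div_nonneg (hv j).le (hm j).le, div_le_one_of_le₀ (hvle j) (hm j).le⟩
  have hR'le : ∀ j t, R' j t ≤ R j t := fun j t =>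
    mul_le_of_le_one_left (h01 j t).1 (hscale j).2
  have hR'0 : ∀ j t, 0 ≤ R' j t := fun j t =>
    mul_nonneg (hscale j).1 (h01 j t).1
  have hfeas' : IsFeasible n v r R' := by
    refine ⟨fun j => (hint j).const_mul _, fun j t => ⟨hR'0 j t, le_trans (hR'le j t) (h01 j t).2⟩,
      fun j t ht => by rw [hR'_def]; simp [hneg j t ht],
      fun t => le_trans (Finset.sum_le_sum fun j _ => hR'le j t) (hsum t),
      fun j t => le_trans (hR'le j t) (hrle j t), fun j => ?_⟩
    rw [hR'_def]
    simp only
    rw [integral_const_mul, div_mul_cancel₀ _ (hm j).ne']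
  have h1 : sInf {x : ℝ≥0∞ | ∃ R, IsFeasible n v r R ∧ x = ∑ j, fracCompTime n v R j}
      ≤ ∑ j, fracCompTime n v R' j := sInf_le ⟨R', hfeas', rfl⟩
  refine le_trans (add_le_add_left h1 _) ?_
  have hofr : ENNReal.ofReal ((1 / 2) * ∑ j, v j / r j)
      = ∑ j, ENNReal.ofReal (v j / (2 * r j)) := by
    rw [Finset.mul_sum, ← ENNReal.ofReal_sum_of_nonneg (fun j _ => div_nonneg (hv j).le (mul_nonneg zero_le_two (hr j).1.le))]
    congr 1
    refine Finset.sum_congr rfl fun j _ => ?_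
    rw [div_mul_eq_div_div_swap]
    ring
  rw [hofr, ← Finset.sum_add_distrib]
  apply Finset.sum_le_sum
  intro j _
  by_cases hcomp : compTime n R j = ⊤
  · rw [hcomp]; exact le_top
  set C := (compTime n R j).toReal with hC_def
  have hC0 : 0 ≤ C := ENNReal.toReal_nonneg
  have hsupp : ∀ t, C < t → R j t = 0 := by
    intro t ht
    by_contra h
    have hpos : 0 < R j t := lt_of_le_of_ne (h01 j t).1 (Ne.symm h)
    have hle : ENNReal.ofReal t ≤ compTime n R j :=
      le_biSup (fun t : ℝ => ENNReal.ofReal t) (hpos : t ∈ {t : ℝ | 0 < R j t})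
    rw [← ENNReal.ofReal_toReal hcomp, ← hC_def] at hle
    exact absurd ((ENNReal.ofReal_le_ofReal_iff hC0).1 hle) (not_le.2 ht)
  have := perjob (v j) (r j) C (R j) (hr j).1 (hv j) hC0 (hint j)
    (fun t => (h01 j t).1) (hrle j) hsupp (hvle j)
  rw [← ENNReal.ofReal_toReal hcomp, ← hC_def]
  convert this using 3 with t <;> rfl
end
end

section
/- Let f : ℝ_{≥0} → ℝ_{≥0} be integrable with ∫_0^∞ f(t) dt = v > 0, let T = sup{t : f(t) > 0}, and suppose f is non-decreasing on [0, T) (f is ascending until its completion). Let c = (1/v)·∫_0^∞ t·f(t) dt be the fractional completion time. Then ∫_0^c f(t) dt ≤ v/2; equivalently, at least half of the volume v is scheduled after time c. -/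
set_option maxHeartbeats 1000000

open MeasureTheory Set

noncomputable section

lemma aux_int (p q r k : ℝ) (hpq : p ≤ q) :
    (∫ t in Ioc p q, (t - r) * k) = k * ((q^2 - p^2)/2 - r*(q - p)) := by
  rw [← intervalIntegral.integral_of_le hpq]
  have h1 : IntervalIntegrable (fun t : ℝ => t) volume p q :=
    continuous_id.intervalIntegrable p q
  have h2 : IntervalIntegrable (fun _ : ℝ => r) volume p q :=
    intervalIntegrable_const
  calc (∫ t in p..q, (t - r) * k) = (∫ t in p..q, (t - r)) * k := by
        rw [intervalIntegral.integral_mul_const]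
    _ = ((∫ t in p..q, t) - ∫ t in p..q, (r:ℝ)) * k := by
        rw [intervalIntegral.integral_sub h1 h2]
    _ = ((q^2 - p^2)/2 - (q - p)*r) * k := by
        rw [integral_id, intervalIntegral.integral_const]; norm_num
    _ = k * ((q^2 - p^2)/2 - r*(q - p)) := by ring

lemma aux_intg (p q r k : ℝ) : IntegrableOn (fun t : ℝ => (t - r) * k) (Ioc p q) := by
  apply Continuous.integrableOn_Ioc
  continuity

/-- If a job's resource assignment `f` (nonnegative, integrable, vanishing on negatives)
schedules total volume `v > 0` and is non-decreasing on `[0, T)` where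
`T = sup{t : f t > 0}` — here formalized as the set of nonnegative times that are
strictly below some point of the support — then at most half of the volume is scheduled
before the fractional completion time `c = (1/v)·∫_0^∞ t·f(t) dt`. -/
theorem stmt12 (f : ℝ → ℝ) (hf : Integrable f)
    (hpos : ∀ t, 0 ≤ f t) (hneg : ∀ t < (0:ℝ), f t = 0)
    (v : ℝ) (hv : 0 < v) (hvol : (∫ t in Ioi (0:ℝ), f t) = v)
    (hasc : MonotoneOn f {s : ℝ | 0 ≤ s ∧ ∃ u, s < u ∧ 0 < f u})
    (c : ℝ) (hc : c = (1 / v) * ∫ t in Ioi (0:ℝ), t * f t) :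
    (∫ t in (0:ℝ)..c, f t) ≤ v / 2 := by
  rcases le_or_gt c 0 with hc0 | hc0
  · have h1 : (∫ t in (0:ℝ)..c, f t) = -(∫ t in Ioc c 0, f t) := by
      rw [intervalIntegral.integral_symm, intervalIntegral.integral_of_le hc0]
    have h2 : 0 ≤ ∫ t in Ioc c (0:ℝ), f t :=
      setIntegral_nonneg measurableSet_Ioc fun t _ => hpos t
    rw [h1]; linarith
  rw [intervalIntegral.integral_of_le hc0.le]
  have hf0 : IntegrableOn f (Ioi (0:ℝ)) := hf.integrableOn
  have hfc : IntegrableOn f (Ioc (0:ℝ) c) := hf.integrableOn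
  have hfI : IntegrableOn f (Ioi c) := hf.integrableOn
  set G := ∫ t in Ioc (0:ℝ) c, f t with hGdef
  set b := ∫ t in Ioi c, f t with hbdef
  have hG0 : 0 ≤ G := setIntegral_nonneg measurableSet_Ioc fun t _ => hpos t
  have hb0 : 0 ≤ b := setIntegral_nonneg measurableSet_Ioi fun t _ => hpos t
  -- total integral of t*f
  have hIv : (∫ t in Ioi (0:ℝ), t * f t) = c * v := by
    rw [hc]; field_simp
  have htf : IntegrableOn (fun t => t * f t) (Ioi (0:ℝ)) := by
    by_contra h
    rw [integral_undef h] at hIv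
    nlinarith
  -- integrability pieces
  have hcf0 : IntegrableOn (fun t => c * f t) (Ioi (0:ℝ)) := hf0.const_mul c
  have htfc : IntegrableOn (fun t => (t - c) * f t) (Ioi (0:ℝ)) := by
    have h : IntegrableOn (fun t => t * f t - c * f t) (Ioi (0:ℝ)) := Integrable.sub htf hcf0
    have he : (fun t => (t - c) * f t) = (fun t => t * f t - c * f t) := by
      funext t; ring
    rw [he]; exact h
  have hIcf : IntegrableOn (fun t => (c - t) * f t) (Ioc (0:ℝ) c) := by
    have h1 : IntegrableOn (fun t => c * f t) (Ioc (0:ℝ) c) := hfc.const_mul c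
    have h2 : IntegrableOn (fun t => t * f t) (Ioc (0:ℝ) c) :=
      htf.mono_set Ioc_subset_Ioi_self
    have h : IntegrableOn (fun t => c * f t - t * f t) (Ioc (0:ℝ) c) := Integrable.sub h1 h2
    have he : (fun t => (c - t) * f t) = (fun t => c * f t - t * f t) := by
      funext t; ring
    rw [he]; exact h
  have hIif : IntegrableOn (fun t => (t - c) * f t) (Ioi c) :=
    htfc.mono_set (Ioi_subset_Ioi hc0.le)
  -- splitting
  have hsplit : ∀ g : ℝ → ℝ, IntegrableOn g (Ioi (0:ℝ)) →
      (∫ t in Ioi (0:ℝ), g t) = (∫ t in Ioc (0:ℝ) c, g t) + ∫ t in Ioi c, g t := by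
    intro g hg
    have h1 : IntegrableOn g (Ioc (0:ℝ) c) volume := hg.mono_set Ioc_subset_Ioi_self
    have h2 : IntegrableOn g (Ioi c) volume := hg.mono_set (Ioi_subset_Ioi hc0.le)
    have hdisj : Disjoint (Ioc (0:ℝ) c) (Ioi c) := by
      rw [Set.disjoint_left]
      intro x hx hy
      exact absurd hx.2 (not_le.mpr hy)
    rw [← setIntegral_union hdisj measurableSet_Ioi h1 h2, Ioc_union_Ioi_eq_Ioi hc0.le]
  have hGb : G + b = v := by
    rw [hGdef, hbdef, ← hsplit f hf0, hvol]
  set A := ∫ t in Ioc (0:ℝ) c, (c - t) * f t with hAdef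
  set B := ∫ t in Ioi c, (t - c) * f t with hBdef
  have hID : A = B := by
    have h0 : (∫ t in Ioi (0:ℝ), (t - c) * f t) = 0 := by
      have he : (fun t => (t - c) * f t) = (fun t => t * f t - c * f t) := by
        funext t; ring
      rw [he, integral_sub htf hcf0, integral_const_mul, hvol, hIv]
      ring
    have h1 : (∫ t in Ioc (0:ℝ) c, (t - c) * f t) = -A := by
      rw [hAdef, ← integral_neg]
      congr 1; funext t; ring
    have h2 := hsplit (fun t => (t - c) * f t) htfc
    rw [h0, h1] at h2
    linarith
  rcases hG0.eq_or_lt with hGz | hGpos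
  · linarith
  by_cases hP : ∃ u, c < u ∧ 0 < f u
  · obtain ⟨u₀, hcu₀, hfu₀⟩ := hP
    have hmem : ∀ t : ℝ, 0 ≤ t → t ≤ c → t ∈ {s : ℝ | 0 ≤ s ∧ ∃ u, s < u ∧ 0 < f u} :=
      fun t ht ht' => ⟨ht, u₀, lt_of_le_of_lt ht' hcu₀, hfu₀⟩
    have hcS := hmem c hc0.le le_rfl
    set k := f c with hkdef
    have hfk : ∀ t, 0 ≤ t → t ≤ c → f t ≤ k := fun t h1 h2 => hasc (hmem t h1 h2) hcS h2
    have hGkc : G ≤ k * c := by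
      have hconst : IntegrableOn (fun _ : ℝ => k) (Ioc (0:ℝ) c) :=
        integrableOn_const measure_Ioc_lt_top.ne
      have h := setIntegral_mono_on hfc hconst measurableSet_Ioc
        (fun t ht => hfk t ht.1.le ht.2)
      rwa [setIntegral_const, Real.volume_real_Ioc_of_le (by linarith),
        smul_eq_mul, sub_zero, mul_comm] at h
    have hk0 : 0 < k := by nlinarith
    have hfge : ∀ s, c < s → (∃ u, s < u ∧ 0 < f u) → k ≤ f s := fun s hs hw =>
      hasc hcS ⟨le_trans hc0.le hs.le, hw⟩ hs.le
    have hbd : ∀ u, c < u → 0 < f u → u ≤ c + b / k := by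
      intro u hcu hfu
      have hconst : IntegrableOn (fun _ : ℝ => k) (Ioo c u) :=
        integrableOn_const measure_Ioo_lt_top.ne
      have hfo : IntegrableOn f (Ioo c u) := hf.integrableOn
      have h2 : k * (u - c) ≤ ∫ s in Ioo c u, f s := by
        have h := setIntegral_mono_on hconst hfo measurableSet_Ioo
          (fun s hs => hfge s hs.1 ⟨u, hs.2, hfu⟩)
        rwa [setIntegral_const, Real.volume_real_Ioo_of_le (by linarith),
          smul_eq_mul, mul_comm] at h
      have h3 : (∫ s in Ioo c u, f s) ≤ b :=
        setIntegral_mono_set hfI (Filter.Eventually.of_forall fun t => hpos t)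
          (HasSubset.Subset.eventuallyLE Ioo_subset_Ioi_self)
      have h4 : u - c ≤ b / k := (le_div_iff₀ hk0).mpr (by nlinarith)
      linarith
    set P := {u : ℝ | c < u ∧ 0 < f u} with hPdef
    have hPne : P.Nonempty := ⟨u₀, hcu₀, hfu₀⟩
    have hPbd : BddAbove P := ⟨c + b / k, fun u hu => hbd u hu.1 hu.2⟩
    set T := sSup P with hTdef
    have hcT : c < T := lt_of_lt_of_le hcu₀ (le_csSup hPbd ⟨hcu₀, hfu₀⟩)
    have hTe : T ≤ c + b / k := csSup_le hPne fun u hu => hbd u hu.1 hu.2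
    have hfT : ∀ u, T < u → f u = 0 := by
      intro u hu
      by_contra h
      have h2 : 0 < f u := lt_of_le_of_ne (hpos u) (Ne.symm h)
      exact absurd (le_csSup hPbd ⟨lt_trans hcT hu, h2⟩) (not_le.mpr hu)
    have hfk2 : ∀ u, c < u → u < T → k ≤ f u := by
      intro u h1 h2
      obtain ⟨p, hp, hup⟩ := exists_lt_of_lt_csSup hPne h2
      exact hfge u h1 ⟨p, hup, hp.2⟩
    -- lower bound on A
    set d := c - G / k with hddef
    have hd0 : 0 ≤ d := by
      rw [hddef, sub_nonneg, div_le_iff₀ hk0]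
      nlinarith
    have hdc : d ≤ c := by
      have : 0 ≤ G / k := div_nonneg hG0 hk0.le
      rw [hddef]; linarith
    set φ : ℝ → ℝ := (Ioc d c).indicator (fun _ => k) with hφdef
    have hφint : IntegrableOn φ (Ioc (0:ℝ) c) := by
      have h1 : IntegrableOn (fun _ : ℝ => k) (Ioc d c) :=
        integrableOn_const measure_Ioc_lt_top.ne
      exact (IntegrableOn.integrable_indicator h1 measurableSet_Ioc).integrableOn
    have hφval : (∫ t in Ioc (0:ℝ) c, φ t) = G := by
      rw [hφdef, setIntegral_indicator measurableSet_Ioc,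
        inter_eq_right.mpr (Ioc_subset_Ioc hd0 le_rfl), setIntegral_const,
        Real.volume_real_Ioc_of_le (by linarith), smul_eq_mul, hddef]
      field_simp
      ring
    have hφ2eq : (fun t => (c - t) * φ t) = (Ioc d c).indicator (fun t => (t - c) * (-k)) := by
      funext t
      by_cases h : t ∈ Ioc d c
      · rw [hφdef]; simp only [indicator_of_mem h]; ring
      · rw [hφdef]; simp only [indicator_of_notMem h, mul_zero]
    have hφ2int : IntegrableOn (fun t => (c - t) * φ t) (Ioc (0:ℝ) c) := by
      rw [hφ2eq]
      exact (IntegrableOn.integrable_indicator (aux_intg d c c (-k)) measurableSet_Ioc).integrableOn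
    have hφ2val : (∫ t in Ioc (0:ℝ) c, (c - t) * φ t) = G^2/(2*k) := by
      rw [hφ2eq, setIntegral_indicator measurableSet_Ioc,
        inter_eq_right.mpr (Ioc_subset_Ioc hd0 le_rfl), aux_int d c c (-k) hdc, hddef]
      field_simp
      ring
    have hpt1 : ∀ t ∈ Ioc (0:ℝ) c, (c - d) * (f t - φ t) ≤ (c - t) * (f t - φ t) := by
      intro t ht
      by_cases hdt : d < t
      · have hm : t ∈ Ioc d c := ⟨hdt, ht.2⟩
        rw [hφdef, indicator_of_mem hm]
        have h1 : f t ≤ k := hfk t ht.1.le ht.2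
        nlinarith [ht.2]
      · rw [hφdef, indicator_of_notMem (fun hm => hdt hm.1)]
        have h1 : 0 ≤ f t := hpos t
        have h2 : t ≤ d := not_lt.mp hdt
        nlinarith
    have hint1L : IntegrableOn (fun t => (c - d) * (f t - φ t)) (Ioc (0:ℝ) c) := by
      have h1 : IntegrableOn (fun t => f t - φ t) (Ioc (0:ℝ) c) := Integrable.sub hfc hφint
      exact h1.const_mul (c - d)
    have hint1R : IntegrableOn (fun t => (c - t) * (f t - φ t)) (Ioc (0:ℝ) c) := by
      have h1 : IntegrableOn (fun t => (c - t) * f t - (c - t) * φ t) (Ioc (0:ℝ) c) :=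
        Integrable.sub hIcf hφ2int
      have he : (fun t => (c - t) * (f t - φ t)) =
          (fun t => (c - t) * f t - (c - t) * φ t) := by funext t; ring
      rw [he]; exact h1
    have hmono1 := setIntegral_mono_on hint1L hint1R measurableSet_Ioc hpt1
    have hL1 : (∫ t in Ioc (0:ℝ) c, (c - d) * (f t - φ t)) = 0 := by
      rw [integral_const_mul, integral_sub hfc hφint, ← hGdef, hφval]
      ring
    have hR1 : (∫ t in Ioc (0:ℝ) c, (c - t) * (f t - φ t)) = A - G^2/(2*k) := by
      have he : (fun t => (c - t) * (f t - φ t)) =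
          (fun t => (c - t) * f t - (c - t) * φ t) := by funext t; ring
      rw [he, integral_sub hIcf hφ2int, ← hAdef, hφ2val]
    rw [hL1, hR1] at hmono1
    -- upper bound on B
    set e := c + b / k with hedef
    have hce : c ≤ e := by
      have : 0 ≤ b / k := div_nonneg hb0 hk0.le
      rw [hedef]; linarith
    set ψ : ℝ → ℝ := (Ioc c e).indicator (fun _ => k) with hψdef
    have hψint : IntegrableOn ψ (Ioi c) := by
      have h1 : IntegrableOn (fun _ : ℝ => k) (Ioc c e) :=
        integrableOn_const measure_Ioc_lt_top.ne
      exact (IntegrableOn.integrable_indicator h1 measurableSet_Ioc).integrableOn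
    have hψval : (∫ t in Ioi c, ψ t) = b := by
      rw [hψdef, setIntegral_indicator measurableSet_Ioc,
        inter_eq_right.mpr Ioc_subset_Ioi_self, setIntegral_const,
        Real.volume_real_Ioc_of_le (by linarith), smul_eq_mul, hedef]
      field_simp
      ring
    have hψ2eq : (fun t => (t - c) * ψ t) = (Ioc c e).indicator (fun t => (t - c) * k) := by
      funext t
      by_cases h : t ∈ Ioc c e
      · rw [hψdef]; simp only [indicator_of_mem h]
      · rw [hψdef]; simp only [indicator_of_notMem h, mul_zero]
    have hψ2int : IntegrableOn (fun t => (t - c) * ψ t) (Ioi c) := by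
      rw [hψ2eq]
      exact (IntegrableOn.integrable_indicator (aux_intg c e c k) measurableSet_Ioc).integrableOn
    have hψ2val : (∫ t in Ioi c, (t - c) * ψ t) = b^2/(2*k) := by
      rw [hψ2eq, setIntegral_indicator measurableSet_Ioc,
        inter_eq_right.mpr Ioc_subset_Ioi_self, aux_int c e c k hce, hedef]
      field_simp
      ring
    have hpt2 : ∀ u ∈ Ioi c, (u - c) * (f u - ψ u) ≤ (T - c) * (f u - ψ u) := by
      intro u hu
      rcases lt_trichotomy u T with h | h | h
      · have hm : u ∈ Ioc c e := ⟨hu, le_trans h.le hTe⟩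
        rw [hψdef, indicator_of_mem hm]
        have h1 : k ≤ f u := hfk2 u hu h
        nlinarith
      · rw [h]
      · have h0 : f u = 0 := hfT u h
        by_cases hm : u ∈ Ioc c e
        · rw [hψdef, indicator_of_mem hm, h0]
          nlinarith
        · rw [hψdef, indicator_of_notMem hm, h0]
          norm_num
    have hint2L : IntegrableOn (fun t => (t - c) * (f t - ψ t)) (Ioi c) := by
      have h1 : IntegrableOn (fun t => (t - c) * f t - (t - c) * ψ t) (Ioi c) :=
        Integrable.sub hIif hψ2int
      have he2 : (fun t => (t - c) * (f t - ψ t)) =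
          (fun t => (t - c) * f t - (t - c) * ψ t) := by funext t; ring
      rw [he2]; exact h1
    have hint2R : IntegrableOn (fun t => (T - c) * (f t - ψ t)) (Ioi c) := by
      have h1 : IntegrableOn (fun t => f t - ψ t) (Ioi c) := Integrable.sub hfI hψint
      exact h1.const_mul (T - c)
    have hmono2 := setIntegral_mono_on hint2L hint2R measurableSet_Ioi hpt2
    have hL2 : (∫ t in Ioi c, (t - c) * (f t - ψ t)) = B - b^2/(2*k) := by
      have he2 : (fun t => (t - c) * (f t - ψ t)) =
          (fun t => (t - c) * f t - (t - c) * ψ t) := by funext t; ring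
      rw [he2, integral_sub hIif hψ2int, ← hBdef, hψ2val]
    have hR2 : (∫ t in Ioi c, (T - c) * (f t - ψ t)) = 0 := by
      rw [integral_const_mul, integral_sub hfI hψint, ← hbdef, hψval]
      ring
    rw [hL2, hR2] at hmono2
    -- conclude
    have hGb2 : G^2 ≤ b^2 := by
      have h1 : G^2/(2*k) ≤ b^2/(2*k) := by linarith
      have h2 : (0:ℝ) < 2*k := by linarith
      exact (div_le_div_iff_of_pos_right h2).mp h1
    have hGleb : G ≤ b := by nlinarith
    linarith
  · exfalso
    push_neg at hP
    have hBz : B = 0 := by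
      rw [hBdef]
      have he : EqOn (fun t => (t - c) * f t) (fun _ => (0:ℝ)) (Ioi c) := by
        intro t ht
        have h0 : f t = 0 := le_antisymm (hP t ht) (hpos t)
        simp [h0]
      rw [setIntegral_congr_fun measurableSet_Ioi he, integral_zero]
    have hAz : A = 0 := by rw [hID, hBz]
    have hptnn : ∀ t ∈ Ioc (0:ℝ) c, 0 ≤ (c - t) * f t := by
      intro t ht
      have h1 : t ≤ c := ht.2
      exact mul_nonneg (by linarith) (hpos t)
    have hnn : 0 ≤ᵐ[volume.restrict (Ioc (0:ℝ) c)] fun t => (c - t) * f t := by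
      have h := (ae_restrict_iff' (μ := volume) (p := fun t => 0 ≤ (c - t) * f t)
        measurableSet_Ioc).mpr (Filter.Eventually.of_forall hptnn)
      exact h
    have hae := (integral_eq_zero_iff_of_nonneg_ae hnn hIcf).mp hAz
    have hnec : ∀ᵐ t ∂(volume.restrict (Ioc (0:ℝ) c)), t ≠ c := by
      refine ae_iff.mpr ?_
      have h1 : {t : ℝ | ¬ t ≠ c} = {c} := by ext t; simp
      rw [h1, Measure.restrict_apply (measurableSet_singleton c)]
      exact measure_mono_null inter_subset_left Real.volume_singleton
    have hfz : f =ᵐ[volume.restrict (Ioc (0:ℝ) c)] 0 := by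
      filter_upwards [hae, hnec] with t h1 h2
      rcases mul_eq_zero.mp h1 with h | h
      · exact absurd (by linarith : t = c) h2
      · exact h
    have hGz : G = 0 := by rw [hGdef, integral_congr_ae hfz]; simp
    linarith
end
end
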